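/- arXiv:1504.04776 — 11 statements merged into one kernel-verified Lean document; each statement's English description precedes it below -/
import Mathlib

section
/- Let α and β be positive real constants with αβ = 1. Then there exist positive finite constants c ≤ C, depending only on α and β, such that for all A ∈ (0,1): c·log(1 + A^{-1/α}) ≤ ∫₀¹ (A + t^α)^{-β} dt ≤ C·log(1 + A^{-1/α}). -/
open MeasureTheory Set

private lemma max_inv_lintegral (s : ℝ) (h0 : 0 < s) (h1 : s ≤ 1) :
    ∫⁻ t in Set.Icc (0:ℝ) 1, ENNReal.ofReal ((max s t)⁻¹) = ENNReal.ofReal (1 - Real.log s) := by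
  have hmaxpos : ∀ t : ℝ, 0 < max s t := fun t => lt_of_lt_of_le h0 (le_max_left _ _)
  have hcont : Continuous fun t : ℝ => (max s t)⁻¹ :=
    (continuous_const.max continuous_id).inv₀ (fun t => (hmaxpos t).ne')
  have hint : IntegrableOn (fun t : ℝ => (max s t)⁻¹) (Set.Icc 0 1) :=
    hcont.integrableOn_Icc
  rw [← MeasureTheory.ofReal_integral_eq_lintegral_ofReal hint
      (Filter.Eventually.of_forall fun t => inv_nonneg.mpr (hmaxpos t).le)]
  congr 1
  rw [MeasureTheory.integral_Icc_eq_integral_Ioc,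
    ← intervalIntegral.integral_of_le (by norm_num : (0:ℝ) ≤ 1)]
  have i1 : IntervalIntegrable (fun t : ℝ => (max s t)⁻¹) volume 0 s :=
    hcont.intervalIntegrable 0 s
  have i2 : IntervalIntegrable (fun t : ℝ => (max s t)⁻¹) volume s 1 :=
    hcont.intervalIntegrable s 1
  rw [← intervalIntegral.integral_add_adjacent_intervals i1 i2]
  have e1 : ∫ t in (0:ℝ)..s, (max s t)⁻¹ = 1 := by
    rw [intervalIntegral.integral_congr (g := fun _ => s⁻¹)
      (fun t ht => by
        rw [Set.uIcc_of_le h0.le] at ht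
        simp [max_eq_left ht.2])]
    simp [smul_eq_mul, mul_inv_cancel₀ h0.ne']
  have e2 : ∫ t in s..(1:ℝ), (max s t)⁻¹ = -Real.log s := by
    rw [intervalIntegral.integral_congr (g := fun t => t⁻¹)
      (fun t ht => by
        rw [Set.uIcc_of_le h1] at ht
        simp [max_eq_right ht.1])]
    rw [integral_inv (by
      rw [Set.uIcc_of_le h1]
      exact fun h => absurd h.1 (not_le.mpr h0))]
    rw [Real.log_div (by norm_num) h0.ne']
    simp
  rw [e1, e2]; ring

private lemma ptwise_bounds (α β A t : ℝ) (hα : 0 < α) (hβ : 0 < β) (hαβ : α * β = 1)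
    (hA : 0 < A) (ht : 0 ≤ t) :
    max (A ^ (1/α)) t ≤ (A + t ^ α) ^ β ∧
    (A + t ^ α) ^ β ≤ 2 ^ β * max (A ^ (1/α)) t := by
  have hβα : β = 1/α := by field_simp; linarith [hαβ]
  have htα : (0:ℝ) ≤ t ^ α := Real.rpow_nonneg ht α
  have hAβ : A ^ (1/α) = A ^ β := by rw [hβα]
  have htab : (t ^ α) ^ β = t := by
    rw [← Real.rpow_mul ht, hαβ, Real.rpow_one]
  constructor
  · apply max_le
    · rw [hAβ]
      exact Real.rpow_le_rpow hA.le (by linarith) hβ.le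
    · calc t = (t ^ α) ^ β := htab.symm
        _ ≤ (A + t ^ α) ^ β := Real.rpow_le_rpow htα (by linarith) hβ.le
  · have hle : A + t ^ α ≤ 2 * max A (t ^ α) := by
      have := le_max_left A (t ^ α); have := le_max_right A (t ^ α); linarith
    calc (A + t ^ α) ^ β ≤ (2 * max A (t ^ α)) ^ β :=
          Real.rpow_le_rpow (by linarith) hle hβ.le
      _ = 2 ^ β * (max A (t ^ α)) ^ β := by
          rw [Real.mul_rpow (by norm_num) (le_max_of_le_left hA.le)]
      _ = 2 ^ β * max (A ^ (1/α)) t := by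
          rcases le_total A (t ^ α) with h | h
          · rw [max_eq_right h, htab, max_eq_right]
            rw [hAβ, ← htab]
            exact Real.rpow_le_rpow hA.le h hβ.le
          · rw [max_eq_left h, ← hAβ, max_eq_left]
            calc t = (t ^ α) ^ β := htab.symm
              _ ≤ A ^ β := Real.rpow_le_rpow htα h hβ.le
              _ = A ^ (1/α) := hAβ.symm

theorem stmt1 (α β : ℝ) (hα : 0 < α) (hβ : 0 < β) (hαβ : α * β = 1) :
    ∃ c C : ℝ, 0 < c ∧ c ≤ C ∧ ∀ A ∈ Set.Ioo (0:ℝ) 1,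
      ENNReal.ofReal (c * Real.log (1 + A ^ (-(1/α)))) ≤
        (∫⁻ t in Set.Icc (0:ℝ) 1, ENNReal.ofReal (1 / (A + t ^ α) ^ β)) ∧
      (∫⁻ t in Set.Icc (0:ℝ) 1, ENNReal.ofReal (1 / (A + t ^ α) ^ β)) ≤
        ENNReal.ofReal (C * Real.log (1 + A ^ (-(1/α)))) := by
  have hlog2 : 0 < Real.log 2 := Real.log_pos one_lt_two
  refine ⟨(2:ℝ) ^ (-β), 1 + 1 / Real.log 2, Real.rpow_pos_of_pos two_pos _, ?_, ?_⟩
  · have h1 : (2:ℝ) ^ (-β) ≤ 1 := by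
      calc (2:ℝ) ^ (-β) ≤ 2 ^ (0:ℝ) :=
        Real.rpow_le_rpow_of_exponent_le one_le_two (by linarith)
        _ = 1 := Real.rpow_zero 2
    have h2 : (0:ℝ) ≤ 1 / Real.log 2 := by positivity
    linarith
  intro A hA
  obtain ⟨hA0, hA1⟩ := hA
  set c : ℝ := (2:ℝ) ^ (-β) with hc_def
  have hc : 0 < c := Real.rpow_pos_of_pos two_pos _
  set s : ℝ := A ^ (1/α) with hs_def
  have hs0 : 0 < s := Real.rpow_pos_of_pos hA0 _
  have hs1 : s < 1 := Real.rpow_lt_one hA0.le hA1 (by positivity)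
  have hAinv : A ^ (-(1/α)) = s⁻¹ := by
    rw [Real.rpow_neg hA0.le]
  have hx1 : 1 < s⁻¹ := (one_lt_inv₀ hs0).mpr hs1
  set L : ℝ := Real.log (1 + s⁻¹) with hL_def
  have hL2 : Real.log 2 ≤ L := Real.log_le_log (by norm_num) (by linarith)
  have hlogx : Real.log s⁻¹ ≤ L := Real.log_le_log (by linarith) (by linarith)
  have hlogs : Real.log s⁻¹ = -Real.log s := Real.log_inv s
  -- upper real bound
  have hub : 1 - Real.log s ≤ (1 + 1 / Real.log 2) * L := by
    have hdiv : 1 ≤ L / Real.log 2 := (one_le_div hlog2).mpr hL2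
    have : (1 + 1 / Real.log 2) * L = L + L / Real.log 2 := by ring
    rw [this]
    have hL0 : 0 < L := lt_of_lt_of_le hlog2 hL2
    nlinarith [hlogs, hlogx]
  -- lower real bound
  have hlb : L ≤ 1 - Real.log s := by
    have h2 : L ≤ Real.log (2 * s⁻¹) := Real.log_le_log (by linarith) (by linarith)
    rw [Real.log_mul two_ne_zero (by positivity)] at h2
    have := Real.log_two_lt_d9
    nlinarith [hlogs]
  -- pointwise bounds on the integrand
  have hmaxpos : ∀ t : ℝ, 0 < max s t := fun t => lt_of_lt_of_le hs0 (le_max_left _ _)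
  have hpt : ∀ t ∈ Set.Icc (0:ℝ) 1,
      c * (max s t)⁻¹ ≤ 1 / (A + t ^ α) ^ β ∧
      1 / (A + t ^ α) ^ β ≤ (max s t)⁻¹ := by
    intro t ht
    obtain ⟨h1, h2⟩ := ptwise_bounds α β A t hα hβ hαβ hA0 ht.1
    have hpow : 0 < (A + t ^ α) ^ β :=
      Real.rpow_pos_of_pos (add_pos_of_pos_of_nonneg hA0 (Real.rpow_nonneg ht.1 α)) _
    constructor
    · have : 1 / (2 ^ β * max s t) ≤ 1 / (A + t ^ α) ^ β :=
        one_div_le_one_div_of_le hpow h2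
      calc c * (max s t)⁻¹ = 1 / (2 ^ β * max s t) := by
            rw [hc_def, Real.rpow_neg (by norm_num)]
            field_simp
        _ ≤ 1 / (A + t ^ α) ^ β := this
    · have := one_div_le_one_div_of_le (hmaxpos t) h1
      rwa [one_div (max s t)] at this
  -- measurability of the integrand
  have hmeas : Measurable fun t : ℝ => ENNReal.ofReal (1 / (A + t ^ α) ^ β) := by
    apply ENNReal.measurable_ofReal.comp
    fun_prop
  have hJ := max_inv_lintegral s hs0 hs1.le
  constructor
  · calc ENNReal.ofReal (c * Real.log (1 + A ^ (-(1/α))))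
        = ENNReal.ofReal (c * L) := by rw [hAinv]
      _ ≤ ENNReal.ofReal (c * (1 - Real.log s)) :=
          ENNReal.ofReal_le_ofReal (mul_le_mul_of_nonneg_left hlb hc.le)
      _ = ENNReal.ofReal c * ENNReal.ofReal (1 - Real.log s) := ENNReal.ofReal_mul hc.le
      _ = ENNReal.ofReal c * ∫⁻ t in Set.Icc (0:ℝ) 1, ENNReal.ofReal ((max s t)⁻¹) := by
          rw [hJ]
      _ = ∫⁻ t in Set.Icc (0:ℝ) 1, ENNReal.ofReal c * ENNReal.ofReal ((max s t)⁻¹) :=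
          (lintegral_const_mul' _ _ ENNReal.ofReal_ne_top).symm
      _ = ∫⁻ t in Set.Icc (0:ℝ) 1, ENNReal.ofReal (c * (max s t)⁻¹) := by
          simp_rw [← ENNReal.ofReal_mul hc.le]
      _ ≤ ∫⁻ t in Set.Icc (0:ℝ) 1, ENNReal.ofReal (1 / (A + t ^ α) ^ β) :=
          setLIntegral_mono hmeas (fun t ht => ENNReal.ofReal_le_ofReal (hpt t ht).1)
  · calc (∫⁻ t in Set.Icc (0:ℝ) 1, ENNReal.ofReal (1 / (A + t ^ α) ^ β))
        ≤ ∫⁻ t in Set.Icc (0:ℝ) 1, ENNReal.ofReal ((max s t)⁻¹) :=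
          setLIntegral_mono (by fun_prop) (fun t ht => ENNReal.ofReal_le_ofReal (hpt t ht).2)
      _ = ENNReal.ofReal (1 - Real.log s) := hJ
      _ ≤ ENNReal.ofReal ((1 + 1 / Real.log 2) * Real.log (1 + A ^ (-(1/α)))) := by
          rw [hAinv]; exact ENNReal.ofReal_le_ofReal hub
end

section
/- Let α, β > 0 be constants with αβ > 1. There exists a constant c > 0, depending only on α and β, such that for all A ∈ (0,1), all r > 0, all u* ∈ ℝ, every integer n ≥ 1 and all distinct points u₁, …, uₙ ∈ O(u*, r), one has ∫_{O(u*,r)} du / (A + min_{1≤j≤n} |u - u_j|^α)^β ≤ c · n · A^{-(β - 1/α)}. -/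
open MeasureTheory Set

private lemma measG (A c α β : ℝ) (hA : 0 < A) (hα : 0 < α) (hβ : 0 < β) :
    Measurable fun x : ℝ => ENNReal.ofReal (1 / (A + |x - c| ^ α) ^ β) := by
  have hbase : Continuous fun x : ℝ => A + |x - c| ^ α :=
    continuous_const.add ((Real.continuous_rpow_const hα.le).comp
      (continuous_id.sub continuous_const).abs)
  have hpow : Continuous fun x : ℝ => (A + |x - c| ^ α) ^ β :=
    hbase.rpow_const fun x => Or.inr hβ.le
  have hne : ∀ x : ℝ, (A + |x - c| ^ α) ^ β ≠ 0 := by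
    intro x
    have : 0 < A + |x - c| ^ α :=
      lt_of_lt_of_le hA (le_add_of_nonneg_right (Real.rpow_nonneg (abs_nonneg _) _))
    exact (Real.rpow_pos_of_pos this β).ne'
  have : Continuous fun x : ℝ => 1 / (A + |x - c| ^ α) ^ β := by
    exact (hpow.inv₀ hne).congr fun x => (one_div _).symm
  exact ENNReal.measurable_ofReal.comp this.measurable

private lemma keyInt (α β : ℝ) (hα : 0 < α) (hβ : 0 < β) (hαβ : 1 < α * β)
    {A : ℝ} (hA : 0 < A) :
    ∫⁻ x : ℝ, ENNReal.ofReal (1 / (A + |x| ^ α) ^ β) ≤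
      ENNReal.ofReal ((2 + 2 / (α * β - 1)) * A ^ (1 / α - β)) := by
  set R := A ^ (1 / α) with hRdef
  have hR0 : 0 < R := Real.rpow_pos_of_pos hA _
  have hq : (0:ℝ) ≤ A ^ (1 / α - β) := (Real.rpow_pos_of_pos hA _).le
  set f : ℝ → ENNReal := fun x => ENNReal.ofReal (1 / (A + |x| ^ α) ^ β) with hf
  have hsplit : (∫⁻ x : ℝ, f x) =
      (∫⁻ x in Icc (-R) R, f x) + ∫⁻ x in (Icc (-R) R)ᶜ, f x :=
    (lintegral_add_compl f measurableSet_Icc).symm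
  -- part 1
  have hpt1 : ∀ x : ℝ, f x ≤ ENNReal.ofReal (A ^ (-β)) := by
    intro x
    apply ENNReal.ofReal_le_ofReal
    have h1 : A ≤ A + |x| ^ α :=
      le_add_of_nonneg_right (Real.rpow_nonneg (abs_nonneg _) _)
    have h2 : A ^ β ≤ (A + |x| ^ α) ^ β := Real.rpow_le_rpow hA.le h1 hβ.le
    rw [Real.rpow_neg hA.le, ← one_div]
    exact one_div_le_one_div_of_le (Real.rpow_pos_of_pos hA β) h2
  have hpart1 : (∫⁻ x in Icc (-R) R, f x) ≤ ENNReal.ofReal (2 * A ^ (1 / α - β)) := by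
    calc (∫⁻ x in Icc (-R) R, f x)
        ≤ ∫⁻ _ in Icc (-R) R, ENNReal.ofReal (A ^ (-β)) := lintegral_mono hpt1
      _ = ENNReal.ofReal (A ^ (-β)) * volume (Icc (-R) R) := setLIntegral_const _ _
      _ = ENNReal.ofReal (A ^ (-β)) * ENNReal.ofReal (R - -R) := by rw [Real.volume_Icc]
      _ = ENNReal.ofReal (A ^ (-β) * (R - -R)) := by
          rw [ENNReal.ofReal_mul (Real.rpow_pos_of_pos hA _).le]
      _ = ENNReal.ofReal (2 * A ^ (1 / α - β)) := by
          congr 1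
          have hRR : R - -R = 2 * A ^ (1 / α) := by rw [hRdef]; ring
          rw [hRR, show A ^ (-β) * (2 * A ^ (1/α)) = 2 * (A ^ (-β) * A ^ (1/α)) by ring,
            ← Real.rpow_add hA, show -β + 1/α = 1/α - β by ring]
  -- part 2
  have hcompl : (Icc (-R) R)ᶜ = Iio (-R) ∪ Ioi R := by
    ext x
    simp only [mem_compl_iff, mem_Icc, not_and_or, not_le, mem_union, mem_Iio, mem_Ioi]
  set p : ℝ := -(α * β) with hp
  have hplt : p < -1 := by rw [hp]; linarith
  have hpt2 : ∀ x ∈ (Icc (-R) R)ᶜ, f x ≤ ENNReal.ofReal (|x| ^ p) := by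
    intro x hx
    have hxR : R < |x| := by
      rw [hcompl] at hx
      rcases hx with h | h
      · rw [mem_Iio] at h
        rw [abs_of_neg (by linarith : x < 0)]; linarith
      · exact lt_of_lt_of_le (mem_Ioi.mp h) (le_abs_self x)
    have hx0 : 0 < |x| := hR0.trans hxR
    apply ENNReal.ofReal_le_ofReal
    have h1 : |x| ^ α ≤ A + |x| ^ α := le_add_of_nonneg_left hA.le
    have h2 : (|x| ^ α) ^ β ≤ (A + |x| ^ α) ^ β :=
      Real.rpow_le_rpow (Real.rpow_nonneg (abs_nonneg _) _) h1 hβ.le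
    have h3 : (1:ℝ) / (A + |x| ^ α) ^ β ≤ 1 / (|x| ^ α) ^ β :=
      one_div_le_one_div_of_le (Real.rpow_pos_of_pos (Real.rpow_pos_of_pos hx0 α) β) h2
    calc (1:ℝ) / (A + |x| ^ α) ^ β ≤ 1 / (|x| ^ α) ^ β := h3
      _ = |x| ^ p := by
          rw [← Real.rpow_mul (abs_nonneg x), hp, Real.rpow_neg (abs_nonneg x), one_div]
  have hIoi : (∫⁻ x in Ioi R, ENNReal.ofReal (|x| ^ p)) =
      ENNReal.ofReal (A ^ (1 / α - β) / (α * β - 1)) := by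
    have hcong : (∫⁻ x in Ioi R, ENNReal.ofReal (|x| ^ p)) =
        ∫⁻ x in Ioi R, ENNReal.ofReal (x ^ p) := by
      apply setLIntegral_congr_fun measurableSet_Ioi
      intro x hx; dsimp only
      rw [abs_of_pos (hR0.trans hx)]
    have hnn : 0 ≤ᵐ[volume.restrict (Ioi R)] fun x : ℝ => x ^ p := by
      filter_upwards [ae_restrict_mem measurableSet_Ioi] with x hx
      exact Real.rpow_nonneg (hR0.trans hx).le p
    rw [hcong, ← ofReal_integral_eq_lintegral_ofReal
      (integrableOn_Ioi_rpow_of_lt hplt hR0) hnn, integral_Ioi_rpow_of_lt hplt hR0]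
    congr 1
    have hR1 : R ^ (p + 1) = A ^ (1 / α - β) := by
      rw [hRdef, ← Real.rpow_mul hA.le]
      congr 1
      rw [hp]; field_simp; ring
    have h2 : -(α*β)+1 = -(α*β-1) := by ring
    rw [hR1, hp, h2, div_neg, neg_div, neg_neg]
  have hIio : (∫⁻ x in Iio (-R), ENNReal.ofReal (|x| ^ p)) =
      ∫⁻ x in Ioi R, ENNReal.ofReal (|x| ^ p) := by
    have hmp := Measure.measurePreserving_neg (volume : Measure ℝ)
    have hemb : MeasurableEmbedding (Neg.neg : ℝ → ℝ) :=
      (MeasurableEquiv.neg ℝ).measurableEmbedding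
    have hpre : (Neg.neg : ℝ → ℝ) ⁻¹' (Ioi R) = Iio (-R) := by
      ext x; simp [lt_neg]
    have := hmp.setLIntegral_comp_preimage_emb hemb
      (fun x => ENNReal.ofReal (|x| ^ p)) (Ioi R)
    rw [hpre] at this
    simpa [abs_neg] using this
  have hpart2 : (∫⁻ x in (Icc (-R) R)ᶜ, f x) ≤
      ENNReal.ofReal (2 / (α * β - 1) * A ^ (1 / α - β)) := by
    calc (∫⁻ x in (Icc (-R) R)ᶜ, f x)
        ≤ ∫⁻ x in (Icc (-R) R)ᶜ, ENNReal.ofReal (|x| ^ p) :=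
          setLIntegral_mono' measurableSet_Icc.compl hpt2
      _ ≤ (∫⁻ x in Iio (-R), ENNReal.ofReal (|x| ^ p)) +
          ∫⁻ x in Ioi R, ENNReal.ofReal (|x| ^ p) := by
          rw [hcompl]; exact lintegral_union_le _ _ _
      _ = ENNReal.ofReal (A ^ (1 / α - β) / (α * β - 1)) +
          ENNReal.ofReal (A ^ (1 / α - β) / (α * β - 1)) := by rw [hIio, hIoi]
      _ = ENNReal.ofReal (2 / (α * β - 1) * A ^ (1 / α - β)) := by
          have h1 : (0:ℝ) < α * β - 1 := by linarith
          rw [← ENNReal.ofReal_add (div_nonneg hq h1.le) (div_nonneg hq h1.le)]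
          congr 1; field_simp; ring
  calc (∫⁻ x : ℝ, f x) = (∫⁻ x in Icc (-R) R, f x) + ∫⁻ x in (Icc (-R) R)ᶜ, f x := hsplit
    _ ≤ ENNReal.ofReal (2 * A ^ (1 / α - β)) +
        ENNReal.ofReal (2 / (α * β - 1) * A ^ (1 / α - β)) := add_le_add hpart1 hpart2
    _ = ENNReal.ofReal ((2 + 2 / (α * β - 1)) * A ^ (1 / α - β)) := by
        have h1 : (0:ℝ) < α * β - 1 := by linarith
        rw [← ENNReal.ofReal_add (by positivity) (mul_nonneg (div_nonneg two_pos.le h1.le) hq)]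
        congr 1; ring

theorem stmt3 (α β : ℝ) (hα : 0 < α) (hβ : 0 < β) (hαβ : 1 < α * β) :
    ∃ c : ℝ, 0 < c ∧ ∀ A ∈ Set.Ioo (0:ℝ) 1, ∀ r : ℝ, 0 < r → ∀ ustar : ℝ,
      ∀ n : ℕ, 1 ≤ n → ∀ u : Fin n → ℝ, Function.Injective u →
      (∀ j, u j ∈ Metric.ball ustar r) →
      (∫⁻ x in Metric.ball ustar r,
          ENNReal.ofReal (1 / (A + (⨅ j, |x - u j|) ^ α) ^ β)) ≤
        ENNReal.ofReal (c * n * A ^ (-(β - 1/α))) := by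
  have hd : (0:ℝ) < α * β - 1 := by linarith
  refine ⟨2 + 2 / (α * β - 1), add_pos two_pos (div_pos two_pos hd), ?_⟩
  intro A hAmem r hr ustar n hn u hu hmem
  obtain ⟨hA, hA1⟩ := hAmem
  haveI : Nonempty (Fin n) := ⟨⟨0, hn⟩⟩
  set c0 : ℝ := 2 + 2 / (α * β - 1) with hc0
  have hc0pos : (0:ℝ) < c0 := add_pos two_pos (div_pos two_pos hd)
  have hexp : -(β - 1/α) = 1/α - β := by ring
  rw [hexp]
  set g : Fin n → ℝ → ENNReal :=
    fun j x => ENNReal.ofReal (1 / (A + |x - u j| ^ α) ^ β) with hg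
  have hgm : ∀ j, Measurable (g j) := fun j => measG A (u j) α β hA hα hβ
  -- pointwise bound by the sum
  have hpt : ∀ x : ℝ, ENNReal.ofReal (1 / (A + (⨅ j, |x - u j|) ^ α) ^ β) ≤
      ∑ j : Fin n, g j x := by
    intro x
    obtain ⟨j₀, hj₀⟩ := Finite.exists_min fun j => |x - u j|
    have hinf : (⨅ j, |x - u j|) = |x - u j₀| :=
      le_antisymm (ciInf_le (Finite.bddBelow_range _) j₀) (le_ciInf hj₀)
    rw [hinf]
    exact Finset.single_le_sum (f := fun j => g j x) (fun j _ => zero_le)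
      (Finset.mem_univ j₀)
  have hsumint : (∫⁻ x in Metric.ball ustar r, ∑ j : Fin n, g j x) =
      ∑ j : Fin n, ∫⁻ x in Metric.ball ustar r, g j x :=
    lintegral_finset_sum _ fun j _ => hgm j
  have htrans : ∀ j : Fin n, (∫⁻ x : ℝ, g j x) =
      ∫⁻ x : ℝ, ENNReal.ofReal (1 / (A + |x| ^ α) ^ β) := by
    intro j
    have hm0 : Measurable fun x : ℝ => ENNReal.ofReal (1 / (A + |x| ^ α) ^ β) := by
      simpa using measG A 0 α β hA hα hβ
    exact (measurePreserving_sub_right (volume : Measure ℝ) (u j)).lintegral_comp hm0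
  have hone : ∀ j : Fin n, (∫⁻ x in Metric.ball ustar r, g j x) ≤
      ENNReal.ofReal (c0 * A ^ (1/α - β)) := by
    intro j
    calc (∫⁻ x in Metric.ball ustar r, g j x) ≤ ∫⁻ x : ℝ, g j x :=
          setLIntegral_le_lintegral _ _
      _ = ∫⁻ x : ℝ, ENNReal.ofReal (1 / (A + |x| ^ α) ^ β) := htrans j
      _ ≤ ENNReal.ofReal (c0 * A ^ (1/α - β)) := keyInt α β hα hβ hαβ hA
  calc (∫⁻ x in Metric.ball ustar r,
        ENNReal.ofReal (1 / (A + (⨅ j, |x - u j|) ^ α) ^ β))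
      ≤ ∫⁻ x in Metric.ball ustar r, ∑ j : Fin n, g j x := lintegral_mono hpt
    _ = ∑ j : Fin n, ∫⁻ x in Metric.ball ustar r, g j x := hsumint
    _ ≤ ∑ _j : Fin n, ENNReal.ofReal (c0 * A ^ (1/α - β)) :=
        Finset.sum_le_sum fun j _ => hone j
    _ = (n : ENNReal) * ENNReal.ofReal (c0 * A ^ (1/α - β)) := by
        rw [Finset.sum_const, Finset.card_univ, Fintype.card_fin, nsmul_eq_mul]
    _ = ENNReal.ofReal (c0 * n * A ^ (1/α - β)) := by
        rw [← ENNReal.ofReal_natCast n, ← ENNReal.ofReal_mul (Nat.cast_nonneg n)]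
        congr 1; ring
end

section
/- Let α, β > 0 be constants with αβ = 1, and let κ ∈ (0,1). There exists a constant c > 0, depending only on α, β and κ, such that for all A ∈ (0,1), all r > 0, all u* ∈ ℝ, every integer n ≥ 1 and all distinct points u₁, …, uₙ ∈ O(u*, r), one has ∫_{O(u*,r)} du / (A + min_{1≤j≤n} |u - u_j|^α)^β ≤ c · n · log( e + ( (r/n) · A^{-1/α} )^κ ). -/
open MeasureTheory Set

theorem stmt4 (α β κ : ℝ) (hα : 0 < α) (hβ : 0 < β) (hαβ : α * β = 1)
    (hκ : κ ∈ Set.Ioo (0:ℝ) 1) :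
    ∃ c : ℝ, 0 < c ∧ ∀ A ∈ Set.Ioo (0:ℝ) 1, ∀ r : ℝ, 0 < r → ∀ ustar : ℝ,
      ∀ n : ℕ, 1 ≤ n → ∀ u : Fin n → ℝ, Function.Injective u →
      (∀ j, u j ∈ Metric.ball ustar r) →
      (∫⁻ x in Metric.ball ustar r,
          ENNReal.ofReal (1 / (A + (⨅ j, |x - u j|) ^ α) ^ β)) ≤
        ENNReal.ofReal (c * n *
          Real.log (Real.exp 1 + ((r / n) * A ^ (-(1/α))) ^ κ)) := by
  obtain ⟨hκ0, hκ1⟩ := hκ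
  refine ⟨10/κ, by positivity, ?_⟩
  intro A hA r hr ustar n hn u _ hball
  obtain ⟨hA0, hA1⟩ := hA
  have hne : Nonempty (Fin n) := ⟨⟨0, hn⟩⟩
  have hβ' : β = 1/α := by field_simp; linear_combination hαβ
  have hn0 : (0:ℝ) < n := by exact_mod_cast hn
  set B : ℝ := A ^ (-(1/α)) with hBdef
  have hB0 : 0 < B := Real.rpow_pos_of_pos hA0 _
  set z : ℝ := (r / n) * B with hzdef
  have hz0 : 0 < z := by positivity
  set L : ℝ := Real.log (Real.exp 1 + z ^ κ) with hLdef
  have hzκ : 0 < z ^ κ := Real.rpow_pos_of_pos hz0 κ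
  have hL1 : 1 ≤ L := by
    have h := Real.log_le_log (Real.exp_pos 1) (show Real.exp 1 ≤ Real.exp 1 + z ^ κ by linarith)
    rwa [Real.log_exp] at h
  set D : ℝ → ℝ := fun x => ⨅ j, |x - u j| with hDdef
  have hDcont : Continuous D := by
    have : D = fun x => Finset.univ.inf' Finset.univ_nonempty (fun j => |x - u j|) := by
      funext x; rw [Finset.inf'_univ_eq_ciInf]
    rw [this]
    exact Continuous.finset_inf'_apply _ fun i _ => (continuous_id.sub continuous_const).abs
  have hD0 : ∀ x, 0 ≤ D x := fun x => le_ciInf fun j => abs_nonneg _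
  set G : ℝ → ℝ := fun x => 1 / (A + D x ^ α) ^ β with hGdef
  have hden : ∀ x, 0 < A + D x ^ α :=
    fun x => add_pos_of_pos_of_nonneg hA0 (Real.rpow_nonneg (hD0 x) α)
  have hdenc : Continuous fun x => A + D x ^ α :=
    continuous_const.add (hDcont.rpow_const fun x => Or.inr hα.le)
  have hGcont : Continuous G :=
    continuous_const.div (hdenc.rpow_const fun x => Or.inl (hden x).ne') fun x =>
      (Real.rpow_pos_of_pos (hden x) β).ne'
  have hG0 : ∀ x, 0 ≤ G x := fun x => by
    have := Real.rpow_pos_of_pos (hden x) β; positivity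
  have hGB : ∀ x, G x ≤ B := by
    intro x
    have h1 : A ^ β ≤ (A + D x ^ α) ^ β :=
      Real.rpow_le_rpow hA0.le (le_add_of_nonneg_right (Real.rpow_nonneg (hD0 x) α)) hβ.le
    have h2 : G x ≤ 1 / A ^ β :=
      one_div_le_one_div_of_le (Real.rpow_pos_of_pos hA0 β) h1
    have h3 : B = 1 / A ^ β := by
      rw [hBdef, ← hβ', Real.rpow_neg hA0.le, one_div]
    linarith
  show (∫⁻ x in Metric.ball ustar r, ENNReal.ofReal (G x)) ≤
    ENNReal.ofReal (10/κ * n * L)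
  rw [lintegral_eq_lintegral_meas_lt _ (ae_of_all _ hG0) hGcont.aemeasurable]
  set T : ℝ := n / r with hTdef
  have hT0 : 0 < T := by positivity
  have hmeas_bound : ∀ t ∈ Ioi (0:ℝ),
      (volume.restrict (Metric.ball ustar r)) {a | t < G a} ≤
        (Ioo (0:ℝ) B).indicator
          (fun t => min (ENNReal.ofReal (2*r)) (n * ENNReal.ofReal (2/t))) t := by
    intro t ht
    simp only [mem_Ioi] at ht
    rw [Measure.restrict_apply (measurableSet_lt measurable_const hGcont.measurable)]
    by_cases htB : t < B
    · rw [indicator_of_mem (show t ∈ Ioo (0:ℝ) B from ⟨ht, htB⟩)]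
      refine le_min ?_ ?_
      · calc volume ({a | t < G a} ∩ Metric.ball ustar r)
            ≤ volume (Metric.ball ustar r) := measure_mono inter_subset_right
          _ = ENNReal.ofReal (2*r) := Real.volume_ball ustar r
      · have hsub : {a | t < G a} ∩ Metric.ball ustar r ⊆ ⋃ j, Metric.ball (u j) (1/t) := by
          rintro x ⟨hx, -⟩
          simp only [mem_setOf_eq] at hx
          have hP : 0 < (A + D x ^ α) ^ β := Real.rpow_pos_of_pos (hden x) β
          have h1 : (A + D x ^ α) ^ β < 1/t := by
            rw [lt_div_iff₀ ht]
            have h2 := (lt_div_iff₀ hP).mp hx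
            nlinarith
          have h2 : D x < 1/t := by
            calc D x = (D x ^ α) ^ β := by
                  rw [← Real.rpow_mul (hD0 x), hαβ, Real.rpow_one]
              _ ≤ (A + D x ^ α) ^ β :=
                  Real.rpow_le_rpow (Real.rpow_nonneg (hD0 x) α)
                    (le_add_of_nonneg_left hA0.le) hβ.le
              _ < 1/t := h1
          obtain ⟨j, hj⟩ := exists_lt_of_ciInf_lt h2
          exact mem_iUnion.mpr ⟨j, by rw [Metric.mem_ball, Real.dist_eq]; exact hj⟩
        calc volume ({a | t < G a} ∩ Metric.ball ustar r)
            ≤ volume (⋃ j, Metric.ball (u j) (1/t)) := measure_mono hsub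
          _ ≤ ∑ j : Fin n, volume (Metric.ball (u j) (1/t)) :=
              measure_iUnion_fintype_le _ _
          _ = n * ENNReal.ofReal (2/t) := by
              simp only [Real.volume_ball, Finset.sum_const, Finset.card_univ,
                Fintype.card_fin, nsmul_eq_mul, mul_one_div]
    · have hS : {a | t < G a} = (∅ : Set ℝ) := by
        ext x
        simp only [mem_setOf_eq, mem_empty_iff_false, iff_false, not_lt]
        exact le_trans (hGB x) (not_lt.mp htB)
      simp [hS]
  have hminmeas : Measurable fun t : ℝ =>
      min (ENNReal.ofReal (2*r)) ((n : ENNReal) * ENNReal.ofReal (2/t)) := by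
    exact measurable_const.min
      (measurable_const.mul ((measurable_const.div measurable_id).ennreal_ofReal))
  calc (∫⁻ t in Ioi (0:ℝ), (volume.restrict (Metric.ball ustar r)) {a | t < G a})
      ≤ ∫⁻ t in Ioi (0:ℝ), (Ioo (0:ℝ) B).indicator
          (fun t => min (ENNReal.ofReal (2*r)) (n * ENNReal.ofReal (2/t))) t :=
        setLIntegral_mono' measurableSet_Ioi hmeas_bound
    _ = ∫⁻ t in Ioo (0:ℝ) B,
          min (ENNReal.ofReal (2*r)) (n * ENNReal.ofReal (2/t)) := by
        rw [lintegral_indicator measurableSet_Ioo _,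
          Measure.restrict_restrict measurableSet_Ioo,
          inter_eq_self_of_subset_left Ioo_subset_Ioi_self]
    _ ≤ ENNReal.ofReal (10/κ * n * L) := by
        rcases le_or_gt B T with hc | hc
        · calc (∫⁻ t in Ioo (0:ℝ) B,
                min (ENNReal.ofReal (2*r)) (n * ENNReal.ofReal (2/t)))
              ≤ ∫⁻ _ in Ioo (0:ℝ) B, ENNReal.ofReal (2*r) :=
                lintegral_mono fun t => min_le_left _ _
            _ = ENNReal.ofReal (2*r) * volume (Ioo (0:ℝ) B) := setLIntegral_const _ _
            _ = ENNReal.ofReal ((2*r) * (B - 0)) := by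
                rw [Real.volume_Ioo, ← ENNReal.ofReal_mul (by positivity)]
            _ ≤ ENNReal.ofReal (10/κ * n * L) := by
                apply ENNReal.ofReal_le_ofReal
                have hrB : r * B ≤ n := by
                  rw [hTdef] at hc
                  calc r * B ≤ r * (n / r) := by nlinarith
                    _ = n := by field_simp
                rw [div_mul_eq_mul_div, div_mul_eq_mul_div, le_div_iff₀ hκ0]
                nlinarith
        · have hsplit : Ioo (0:ℝ) B ⊆ Ioo (0:ℝ) T ∪ Ico T B := by
            intro x hx
            rcases lt_or_ge x T with h | h
            · exact Or.inl ⟨hx.1, h⟩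
            · exact Or.inr ⟨h, hx.2⟩
          have hIoo : (∫⁻ t in Ioo (0:ℝ) T,
                min (ENNReal.ofReal (2*r)) (n * ENNReal.ofReal (2/t)))
              ≤ ENNReal.ofReal (2 * (n:ℝ)) := by
            calc (∫⁻ t in Ioo (0:ℝ) T,
                  min (ENNReal.ofReal (2*r)) (n * ENNReal.ofReal (2/t)))
                ≤ ∫⁻ _ in Ioo (0:ℝ) T, ENNReal.ofReal (2*r) :=
                  lintegral_mono fun t => min_le_left _ _
              _ = ENNReal.ofReal (2*r) * volume (Ioo (0:ℝ) T) := setLIntegral_const _ _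
              _ = ENNReal.ofReal ((2*r) * (T - 0)) := by
                  rw [Real.volume_Ioo, ← ENNReal.ofReal_mul (by positivity)]
              _ = ENNReal.ofReal (2 * (n:ℝ)) := by
                  rw [hTdef]; congr 1; field_simp; ring
          have hint : IntegrableOn (fun t : ℝ => 2/t) (Ico T B) := by
            apply IntegrableOn.mono_set _ Ico_subset_Icc_self
            apply ContinuousOn.integrableOn_Icc
            exact continuousOn_const.div continuousOn_id
              fun x hx => (lt_of_lt_of_le hT0 hx.1).ne'
          have hcalc : (∫ t in Ico T B, 2/t) = 2 * Real.log (B / T) := by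
            rw [MeasureTheory.integral_Ico_eq_integral_Ioo,
              ← MeasureTheory.integral_Ioc_eq_integral_Ioo,
              ← intervalIntegral.integral_of_le hc.le]
            have h0 : (0:ℝ) ∉ Set.uIcc T B := by
              rw [Set.uIcc_of_le hc.le]
              intro h
              exact absurd h.1 (by linarith)
            rw [show (fun t : ℝ => 2/t) = fun t : ℝ => 2 * (1/t) from
              funext fun t => by ring]
            rw [intervalIntegral.integral_const_mul, integral_one_div h0]
          have hl2 : (∫⁻ t in Ico T B, ENNReal.ofReal (2/t))
              = ENNReal.ofReal (2 * Real.log (B/T)) := by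
            rw [← ofReal_integral_eq_lintegral_ofReal hint ?_, hcalc]
            filter_upwards [ae_restrict_mem measurableSet_Ico] with x hx
            have : 0 < x := lt_of_lt_of_le hT0 hx.1
            positivity
          have hIco : (∫⁻ t in Ico T B,
                min (ENNReal.ofReal (2*r)) (n * ENNReal.ofReal (2/t)))
              ≤ ENNReal.ofReal ((n:ℝ) * (2 * Real.log (B/T))) := by
            calc (∫⁻ t in Ico T B,
                  min (ENNReal.ofReal (2*r)) (n * ENNReal.ofReal (2/t)))
                ≤ ∫⁻ t in Ico T B, (n : ENNReal) * ENNReal.ofReal (2/t) :=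
                  lintegral_mono fun t => min_le_right _ _
              _ = (n : ENNReal) * ∫⁻ t in Ico T B, ENNReal.ofReal (2/t) :=
                  lintegral_const_mul _ ((measurable_const.div measurable_id).ennreal_ofReal)
              _ = ENNReal.ofReal ((n:ℝ) * (2 * Real.log (B/T))) := by
                  rw [hl2, ← ENNReal.ofReal_natCast n,
                    ← ENNReal.ofReal_mul (by positivity)]
          have hBT1 : (1:ℝ) ≤ B / T := (one_le_div hT0).mpr hc.le
          have hlog0 : 0 ≤ Real.log (B/T) := Real.log_nonneg hBT1
          calc (∫⁻ t in Ioo (0:ℝ) B,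
                min (ENNReal.ofReal (2*r)) (n * ENNReal.ofReal (2/t)))
              ≤ ∫⁻ t in Ioo (0:ℝ) T ∪ Ico T B,
                min (ENNReal.ofReal (2*r)) (n * ENNReal.ofReal (2/t)) :=
                lintegral_mono_set hsplit
            _ ≤ (∫⁻ t in Ioo (0:ℝ) T,
                  min (ENNReal.ofReal (2*r)) (n * ENNReal.ofReal (2/t)))
                + ∫⁻ t in Ico T B,
                  min (ENNReal.ofReal (2*r)) (n * ENNReal.ofReal (2/t)) :=
                lintegral_union_le _ _ _
            _ ≤ ENNReal.ofReal (2 * (n:ℝ)) + ENNReal.ofReal ((n:ℝ) * (2 * Real.log (B/T))) :=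
                add_le_add hIoo hIco
            _ = ENNReal.ofReal (2 * (n:ℝ) + (n:ℝ) * (2 * Real.log (B/T))) := by
                rw [← ENNReal.ofReal_add (by positivity) (by positivity)]
            _ ≤ ENNReal.ofReal (10/κ * n * L) := by
                apply ENNReal.ofReal_le_ofReal
                have hBTz : B / T = z := by
                  rw [hzdef, hTdef]
                  field_simp
                have hlogz : κ * Real.log z ≤ L := by
                  have h1 : Real.log (z ^ κ) ≤ L :=
                    Real.log_le_log hzκ (le_add_of_nonneg_left (Real.exp_pos 1).le)
                  rwa [Real.log_rpow hz0] at h1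
                rw [hBTz, div_mul_eq_mul_div, div_mul_eq_mul_div, le_div_iff₀ hκ0]
                nlinarith [hlogz, hL1, hn0, hκ1, hκ0]
end

section
/- Let 0 < β < 1 be a constant. There exists a constant c > 0, depending only on β, such that for all r > 0, all u* ∈ ℝ, every integer n ≥ 1 and all distinct points u₁, …, uₙ ∈ O(u*, r), one has ∫_{O(u*,r)} du / (min_{1≤j≤n} |u - u_j|)^β ≤ c · n^β · r^{1-β}. -/
open MeasureTheory Set

theorem stmt5 (β : ℝ) (hβ : 0 < β) (hβ1 : β < 1) :
    ∃ c : ℝ, 0 < c ∧ ∀ r : ℝ, 0 < r → ∀ ustar : ℝ,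
      ∀ n : ℕ, 1 ≤ n → ∀ u : Fin n → ℝ, Function.Injective u →
      (∀ j, u j ∈ Metric.ball ustar r) →
      (∫⁻ x in Metric.ball ustar r,
          (ENNReal.ofReal ((⨅ j, |x - u j|) ^ β))⁻¹) ≤
        ENNReal.ofReal (c * (n : ℝ) ^ β * r ^ (1 - β)) := by
  have h1β : 0 < 1 - β := by linarith
  refine ⟨2 / (1 - β), by positivity, ?_⟩
  intro r hr ustar n hn u hu hmem
  haveI : Nonempty (Fin n) := Fin.pos_iff_nonempty.mp hn
  have npos : (0:ℝ) < (n:ℝ) := by exact_mod_cast hn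
  set B := Metric.ball ustar r with hB
  set g : ℝ → ℝ := fun x => ⨅ j, |x - u j| with hgdef
  have hg_nonneg : ∀ x, 0 ≤ g x := fun x => le_ciInf fun j => abs_nonneg _
  have hg_meas : Measurable g :=
    Measurable.iInf fun j => (measurable_id.sub measurable_const).abs
  set f : ℝ → ℝ := fun x => ((g x) ^ β)⁻¹ with hfdef
  have hf_nonneg : ∀ x, 0 ≤ f x := fun x =>
    inv_nonneg.mpr (Real.rpow_nonneg (hg_nonneg x) β)
  have hf_meas : Measurable f := by
    have : Measurable (fun x => (g x) ^ β) := by measurability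
    exact this.inv
  -- a.e. equality
  have hnull : volume {x : ℝ | g x = 0} = 0 := by
    have hsub : {x : ℝ | g x = 0} ⊆ Set.range u := by
      intro x hx
      obtain ⟨j, hj⟩ := exists_eq_ciInf_of_finite (f := fun j => |x - u j|)
      have : |x - u j| = 0 := by rw [hj]; exact hx
      exact ⟨j, by linarith [abs_eq_zero.mp this, sub_eq_zero.mp (abs_eq_zero.mp this)]⟩
    exact measure_mono_null hsub ((Set.finite_range u).measure_zero _)
  have hae : ∀ᵐ x ∂(volume.restrict B),
      (ENNReal.ofReal ((g x) ^ β))⁻¹ = ENNReal.ofReal (f x) := by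
    refine ae_restrict_of_ae ?_
    filter_upwards [measure_eq_zero_iff_ae_notMem.mp hnull] with x hx
    have hgx : 0 < g x := lt_of_le_of_ne (hg_nonneg x) (fun h => hx (h.symm))
    rw [hfdef]
    exact (ENNReal.ofReal_inv_of_pos (Real.rpow_pos_of_pos hgx β)).symm
  calc (∫⁻ x in B, (ENNReal.ofReal ((⨅ j, |x - u j|) ^ β))⁻¹)
      = ∫⁻ x in B, ENNReal.ofReal (f x) := lintegral_congr_ae hae
    _ = ∫⁻ t in Ioi (0:ℝ), (volume.restrict B) {a | t < f a} :=
        lintegral_eq_lintegral_meas_lt _ (ae_of_all _ hf_nonneg) hf_meas.aemeasurable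
    _ ≤ ENNReal.ofReal (2 / (1 - β) * (n : ℝ) ^ β * r ^ (1 - β)) := ?_
  -- now the measure bounds
  set p : ℝ := -β⁻¹ with hpdef
  have hβinv : 1 < β⁻¹ := (one_lt_inv₀ hβ).mpr hβ1
  have hp : p < -1 := by rw [hpdef]; linarith
  set s₀ : ℝ := (n : ℝ) ^ β * r ^ (-β) with hs₀def
  have hs₀ : 0 < s₀ := mul_pos (Real.rpow_pos_of_pos npos β) (Real.rpow_pos_of_pos hr _)
  -- pointwise measure bound 1: trivial
  have hμ1 : ∀ t : ℝ, (volume.restrict B) {a | t < f a} ≤ ENNReal.ofReal (2 * r) := by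
    intro t
    calc (volume.restrict B) {a | t < f a} ≤ (volume.restrict B) univ :=
          measure_mono (subset_univ _)
      _ = volume B := by rw [Measure.restrict_apply_univ]
      _ = ENNReal.ofReal (2 * r) := Real.volume_ball _ _
  -- pointwise measure bound 2
  have hμ2 : ∀ t : ℝ, 0 < t →
      (volume.restrict B) {a | t < f a} ≤ ENNReal.ofReal (2 * n * t ^ p) := by
    intro t ht
    have hsub : {a : ℝ | t < f a} ⊆ ⋃ j, Metric.ball (u j) (t ^ p) := by
      intro x hx
      simp only [mem_setOf_eq] at hx
      have hgx : 0 < g x := by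
        rcases lt_or_eq_of_le (hg_nonneg x) with h | h
        · exact h
        · exfalso
          have : f x = 0 := by
            rw [hfdef]; simp only; rw [← h, Real.zero_rpow hβ.ne', inv_zero]
          rw [this] at hx; linarith
      have h1 : (g x) ^ β < t⁻¹ := by
        have := inv_strictAnti₀ ht hx
        rwa [inv_inv] at this
      have h2 : g x < t ^ p := by
        have h3 := Real.rpow_lt_rpow (Real.rpow_nonneg (hg_nonneg x) β) h1 (inv_pos.mpr hβ)
        rwa [← Real.rpow_mul (hg_nonneg x), mul_inv_cancel₀ hβ.ne', Real.rpow_one,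
          Real.inv_rpow ht.le, ← Real.rpow_neg ht.le] at h3
      obtain ⟨j, hj⟩ := exists_eq_ciInf_of_finite (f := fun j => |x - u j|)
      refine mem_iUnion.mpr ⟨j, ?_⟩
      rw [Metric.mem_ball, Real.dist_eq]
      calc |x - u j| = g x := hj
        _ < t ^ p := h2
    calc (volume.restrict B) {a | t < f a} ≤ volume {a : ℝ | t < f a} :=
          Measure.restrict_le_self _
      _ ≤ volume (⋃ j, Metric.ball (u j) (t ^ p)) := measure_mono hsub
      _ ≤ ∑' j : Fin n, volume (Metric.ball (u j) (t ^ p)) := measure_iUnion_le _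
      _ = ∑ j : Fin n, ENNReal.ofReal (2 * t ^ p) := by
          rw [tsum_fintype]; congr 1; ext j; exact Real.volume_ball _ _
      _ = n * ENNReal.ofReal (2 * t ^ p) := by
          rw [Finset.sum_const, Finset.card_univ, Fintype.card_fin, nsmul_eq_mul]
      _ = ENNReal.ofReal (2 * n * t ^ p) := by
          rw [← ENNReal.ofReal_natCast n, ← ENNReal.ofReal_mul (by positivity)]
          ring_nf
  -- split the integral
  rw [← Ioc_union_Ioi_eq_Ioi hs₀.le,
    lintegral_union measurableSet_Ioi (Ioc_disjoint_Ioi le_rfl)]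
  have hI1 : (∫⁻ t in Ioc (0:ℝ) s₀, (volume.restrict B) {a | t < f a})
      ≤ ENNReal.ofReal (2 * r * s₀) := by
    calc (∫⁻ t in Ioc (0:ℝ) s₀, (volume.restrict B) {a | t < f a})
        ≤ ∫⁻ _ in Ioc (0:ℝ) s₀, ENNReal.ofReal (2 * r) :=
          setLIntegral_mono measurable_const (fun t _ => hμ1 t)
      _ = ENNReal.ofReal (2 * r) * volume (Ioc (0:ℝ) s₀) := setLIntegral_const _ _
      _ = ENNReal.ofReal (2 * r * s₀) := by
          rw [Real.volume_Ioc, sub_zero, ← ENNReal.ofReal_mul (by positivity)]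
  have hI2 : (∫⁻ t in Ioi s₀, (volume.restrict B) {a | t < f a})
      ≤ ENNReal.ofReal (2 * n * (-s₀ ^ (p + 1) / (p + 1))) := by
    calc (∫⁻ t in Ioi s₀, (volume.restrict B) {a | t < f a})
        ≤ ∫⁻ t in Ioi s₀, ENNReal.ofReal (2 * n * t ^ p) := by
          refine setLIntegral_mono (by measurability) (fun t ht => ?_)
          exact hμ2 t (lt_trans hs₀ ht)
      _ = ENNReal.ofReal (∫ t in Ioi s₀, 2 * n * t ^ p) := by
          refine (ofReal_integral_eq_lintegral_ofReal ?_ ?_).symm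
          · exact ((integrableOn_Ioi_rpow_of_lt hp hs₀).const_mul (2 * n))
          · refine (ae_restrict_iff' measurableSet_Ioi).mpr (ae_of_all _ fun t ht => ?_)
            have ht0 : 0 < t := lt_trans hs₀ ht
            have : 0 ≤ t ^ p := (Real.rpow_pos_of_pos ht0 p).le
            positivity
      _ = ENNReal.ofReal (2 * n * (-s₀ ^ (p + 1) / (p + 1))) := by
          rw [MeasureTheory.integral_const_mul, integral_Ioi_rpow_of_lt hp hs₀]
  calc _ ≤ ENNReal.ofReal (2 * r * s₀) + ENNReal.ofReal (2 * n * (-s₀ ^ (p + 1) / (p + 1))) :=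
        add_le_add hI1 hI2
    _ = ENNReal.ofReal (2 * r * s₀ + 2 * n * (-s₀ ^ (p + 1) / (p + 1))) := by
        rw [← ENNReal.ofReal_add (by positivity) ?h]
        case h =>
          have h1 : 0 < -s₀ ^ (p+1) / (p+1) := by
            apply div_pos_of_neg_of_neg
            · simp [Real.rpow_pos_of_pos hs₀ (p+1)]
            · linarith
          positivity
    _ ≤ ENNReal.ofReal (2 / (1 - β) * (n : ℝ) ^ β * r ^ (1 - β)) := by
        apply ENNReal.ofReal_le_ofReal
        have hrs : r ^ (1 - β) = r * r ^ (-β) := by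
          rw [sub_eq_add_neg, Real.rpow_add hr, Real.rpow_one]
        have hb1 : β * (p + 1) = β - 1 := by
          rw [hpdef]; field_simp; ring
        have hb2 : (-β) * (p + 1) = 1 - β := by
          rw [hpdef]; field_simp; ring
        have hs2 : s₀ ^ (p + 1) = (n:ℝ) ^ (β - 1) * r ^ (1 - β) := by
          rw [hs₀def, Real.mul_rpow (Real.rpow_nonneg npos.le β)
            (Real.rpow_nonneg hr.le (-β)), ← Real.rpow_mul npos.le,
            ← Real.rpow_mul hr.le, hb1, hb2]
        have hs3 : (n:ℝ) * (n:ℝ) ^ (β - 1) = (n:ℝ) ^ β := by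
          nth_rewrite 1 [← Real.rpow_one (n:ℝ)]
          rw [← Real.rpow_add npos]
          congr 1; ring
        have hpeq : p + 1 = (β - 1) / β := by
          rw [hpdef]; field_simp; ring
        have hs1 : 2 * r * s₀ = 2 * ((n:ℝ) ^ β * r ^ (1 - β)) := by
          rw [hs₀def, hrs]; ring
        have key : 2 * (n:ℝ) * (-s₀ ^ (p + 1) / (p + 1))
            = 2 * ((n:ℝ) ^ β * r ^ (1 - β)) * β / (1 - β) := by
          rw [hs2, hpeq, ← hs3]
          field_simp [show β - 1 ≠ 0 by linarith, show (1:ℝ) - β ≠ 0 by linarith]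
          ring
        rw [hs1, key]
        apply le_of_eq
        field_simp
        ring
end

section
/- Let 0 < β < 1 be a constant. There exists a constant c > 0, depending only on β, such that for all constants r > 0 and M > 0, all u* ∈ ℝ, every integer n ≥ 1 and all distinct points u₁, …, uₙ ∈ O(u*, r), one has ∫_{O(u*,r)} log( e + M · (min_{1≤j≤n} |u - u_j|)^{-β} ) du ≤ c · r · log( e + M · (r/n)^{-β} ). -/
open MeasureTheory Set
open scoped ENNReal

theorem stmt6 (β : ℝ) (hβ : 0 < β) (hβ1 : β < 1) :
    ∃ c : ℝ, 0 < c ∧ ∀ r : ℝ, 0 < r → ∀ M : ℝ, 0 < M → ∀ ustar : ℝ,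
      ∀ n : ℕ, 1 ≤ n → ∀ u : Fin n → ℝ, Function.Injective u →
      (∀ j, u j ∈ Metric.ball ustar r) →
      (∫⁻ x in Metric.ball ustar r,
          ENNReal.ofReal (Real.log (Real.exp 1 + M * (⨅ j, |x - u j|) ^ (-β)))) ≤
        ENNReal.ofReal (c * r * Real.log (Real.exp 1 + M * (r / n) ^ (-β))) := by
  classical
  refine ⟨8, by norm_num, fun r hr M hM ustar n hn u hu hball => ?_⟩
  haveI : Nonempty (Fin n) := ⟨⟨0, by omega⟩⟩
  have hn0 : (0:ℝ) < n := by exact_mod_cast Nat.lt_of_lt_of_le Nat.zero_lt_one hn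
  set ρ : ℝ := r / (n:ℝ) with hρdef
  have hρ : 0 < ρ := div_pos hr hn0
  set L : ℝ := Real.log (Real.exp 1 + M * ρ ^ (-β)) with hLdef
  have hL1 : 1 ≤ L := by
    have h1 : Real.exp 1 ≤ Real.exp 1 + M * ρ ^ (-β) :=
      le_add_of_nonneg_right (by positivity)
    calc (1:ℝ) = Real.log (Real.exp 1) := (Real.log_exp 1).symm
      _ ≤ L := Real.log_le_log (Real.exp_pos 1) h1
  set s : ℝ → ℝ := fun x => ⨅ j, |x - u j| with hsdef
  set t : ℕ → ℝ := fun k => ρ * Real.exp (-(k:ℝ)) with htdef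
  have ht_pos : ∀ k, 0 < t k := fun k => mul_pos hρ (Real.exp_pos _)
  have htdec : ∀ ⦃a b : ℕ⦄, a ≤ b → t b ≤ t a := fun a b hab =>
    mul_le_mul_of_nonneg_left
      (Real.exp_le_exp.2 (neg_le_neg (by exact_mod_cast hab))) hρ.le
  set E : ℕ → Set ℝ := fun k => ⋃ j, Metric.ball (u j) (t k) with hEdef
  have hEmeas : ∀ k, MeasurableSet (E k) :=
    fun k => (isOpen_iUnion fun j => Metric.isOpen_ball).measurableSet
  have hmem : ∀ x k, x ∈ E k ↔ s x < t k := by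
    intro x k
    constructor
    · intro hx
      simp only [hEdef, mem_iUnion, Metric.mem_ball, Real.dist_eq] at hx
      obtain ⟨j, hj⟩ := hx
      have hbdd : BddBelow (range fun j => |x - u j|) :=
        ⟨0, by rintro y ⟨j, rfl⟩; exact abs_nonneg _⟩
      exact lt_of_le_of_lt (ciInf_le hbdd j) hj
    · intro h
      obtain ⟨j, hj⟩ := exists_lt_of_ciInf_lt h
      exact mem_iUnion.2 ⟨j, by simpa [Metric.mem_ball, Real.dist_eq] using hj⟩
  -- pointwise bound
  have key : ∀ x : ℝ,
      ENNReal.ofReal (Real.log (Real.exp 1 + M * (s x) ^ (-β))) ≤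
        ENNReal.ofReal (L + 1) +
          ∑' k : ℕ, (E k).indicator (fun _ => ENNReal.ofReal β) x := by
    intro x
    have hs0 : 0 ≤ s x := le_ciInf fun j => abs_nonneg _
    rcases eq_or_lt_of_le hs0 with hz | hpos
    · rw [← hz, Real.zero_rpow (by intro h; simp at h; linarith), mul_zero, add_zero,
        Real.log_exp]
      refine le_trans ?_ le_self_add
      exact ENNReal.ofReal_le_ofReal (by linarith)
    · have hP : ∃ k : ℕ, t k ≤ s x := by
        obtain ⟨k, hk⟩ := exists_nat_ge (ρ / s x)
        refine ⟨k, ?_⟩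
        have hek : ρ / s x ≤ Real.exp (k:ℝ) := by
          have := Real.add_one_le_exp (k:ℝ)
          linarith
        have : ρ ≤ Real.exp (k:ℝ) * s x := by
          rw [div_le_iff₀ hpos] at hek; linarith
        rw [htdef]
        simp only [Real.exp_neg]
        rw [mul_inv_le_iff₀ (Real.exp_pos _)]
        linarith [this]
      set m : ℕ := Nat.find hP with hmdef
      have hm : t m ≤ s x := Nat.find_spec hP
      have hltm : ∀ k < m, s x < t k := fun k hk => lt_of_not_ge (Nat.find_min hP hk)
      have hsum : (∑' k : ℕ, (E k).indicator (fun _ => ENNReal.ofReal β) x)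
          = (m : ℝ≥0∞) * ENNReal.ofReal β := by
        rw [tsum_eq_sum (s := Finset.range m)
          (fun k hk => Set.indicator_of_notMem
            (fun hx => absurd ((hmem x k).1 hx)
              (not_lt.2 (le_trans (htdec (by simpa using hk)) hm))) _)]
        rw [Finset.sum_congr rfl (fun k hk => Set.indicator_of_mem
          ((hmem x k).2 (hltm k (Finset.mem_range.1 hk))) _)]
        simp [Finset.sum_const, mul_comm]
      -- bound on the log
      have h2 : (s x) ^ (-β) ≤ (t m) ^ (-β) :=
        Real.rpow_le_rpow_of_nonpos (ht_pos m) hm (by linarith)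
      have h3 : (t m) ^ (-β) = ρ ^ (-β) * Real.exp (β * m) := by
        rw [htdef]
        rw [Real.mul_rpow hρ.le (Real.exp_pos _).le]
        congr 1
        rw [Real.rpow_def_of_pos (Real.exp_pos _), Real.log_exp]
        ring_nf
      have hexp1 : 1 ≤ Real.exp (β * m) := Real.one_le_exp (by positivity)
      have harg : Real.exp 1 + M * (s x) ^ (-β) ≤
          Real.exp (β * m) * (Real.exp 1 + M * ρ ^ (-β)) := by
        have hρβ : 0 ≤ ρ ^ (-β) := Real.rpow_nonneg hρ.le _
        nlinarith [Real.exp_pos 1, h2, h3]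
      have hlog : Real.log (Real.exp 1 + M * (s x) ^ (-β)) ≤ β * m + L := by
        have harg_pos : 0 < Real.exp 1 + M * (s x) ^ (-β) := by positivity
        calc Real.log (Real.exp 1 + M * (s x) ^ (-β))
            ≤ Real.log (Real.exp (β * m) * (Real.exp 1 + M * ρ ^ (-β))) :=
              Real.log_le_log harg_pos harg
          _ = β * m + L := by
              rw [Real.log_mul (Real.exp_ne_zero _) (by positivity), Real.log_exp]
      calc ENNReal.ofReal (Real.log (Real.exp 1 + M * (s x) ^ (-β)))
          ≤ ENNReal.ofReal (β * m + L) := ENNReal.ofReal_le_ofReal hlog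
        _ ≤ ENNReal.ofReal (L + 1) +
              ∑' k : ℕ, (E k).indicator (fun _ => ENNReal.ofReal β) x := by
            rw [hsum, ENNReal.ofReal_add (by positivity) (by linarith)]
            have e1 : ENNReal.ofReal (β * (m:ℝ)) = (m : ℝ≥0∞) * ENNReal.ofReal β := by
              rw [ENNReal.ofReal_mul hβ.le, ENNReal.ofReal_natCast, mul_comm]
            rw [e1, add_comm (ENNReal.ofReal (L + 1))]
            exact add_le_add le_rfl (ENNReal.ofReal_le_ofReal (by linarith))
  -- Integration
  set B : Set ℝ := Metric.ball ustar r with hBdef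
  have hstep1 : (∫⁻ x in B,
      ENNReal.ofReal (Real.log (Real.exp 1 + M * (s x) ^ (-β)))) ≤
      ENNReal.ofReal (L + 1) * volume B +
        ∑' k : ℕ, ENNReal.ofReal β * volume (E k) := by
    calc (∫⁻ x in B, ENNReal.ofReal (Real.log (Real.exp 1 + M * (s x) ^ (-β))))
        ≤ ∫⁻ x in B, (ENNReal.ofReal (L + 1) +
            ∑' k : ℕ, (E k).indicator (fun _ => ENNReal.ofReal β) x) :=
          lintegral_mono fun x => key x
      _ = ENNReal.ofReal (L + 1) * volume B +
            ∫⁻ x in B, ∑' k : ℕ, (E k).indicator (fun _ => ENNReal.ofReal β) x := by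
          rw [lintegral_add_left measurable_const, setLIntegral_const]
      _ ≤ ENNReal.ofReal (L + 1) * volume B +
            ∫⁻ x, ∑' k : ℕ, (E k).indicator (fun _ => ENNReal.ofReal β) x := by
          gcongr
          exact Measure.restrict_le_self
      _ = ENNReal.ofReal (L + 1) * volume B +
            ∑' k : ℕ, ∫⁻ x, (E k).indicator (fun _ => ENNReal.ofReal β) x := by
          rw [lintegral_tsum fun k =>
            (measurable_const.indicator (hEmeas k)).aemeasurable]
      _ = ENNReal.ofReal (L + 1) * volume B +
            ∑' k : ℕ, ENNReal.ofReal β * volume (E k) := by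
          congr 1
          exact tsum_congr fun k => lintegral_indicator_const (hEmeas k) _
  -- bound the tail sum
  have hterm : ∀ k : ℕ, ENNReal.ofReal β * volume (E k) ≤
      ENNReal.ofReal (2 * β * r) * (ENNReal.ofReal (Real.exp (-1))) ^ k := by
    intro k
    have hv : volume (E k) ≤ (n : ℝ≥0∞) * ENNReal.ofReal (2 * t k) := by
      calc volume (E k) ≤ ∑' j : Fin n, volume (Metric.ball (u j) (t k)) :=
            measure_iUnion_le _
        _ = (n : ℝ≥0∞) * ENNReal.ofReal (2 * t k) := by
            simp [Real.volume_ball, tsum_fintype, Finset.sum_const, mul_comm]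
    calc ENNReal.ofReal β * volume (E k)
        ≤ ENNReal.ofReal β * ((n : ℝ≥0∞) * ENNReal.ofReal (2 * t k)) := by gcongr
      _ = ENNReal.ofReal (β * (n * (2 * t k))) := by
          rw [← ENNReal.ofReal_natCast n, ← ENNReal.ofReal_mul (by positivity),
            ← ENNReal.ofReal_mul hβ.le]
      _ = ENNReal.ofReal (2 * β * r * Real.exp (-1) ^ k) := by
          congr 1
          have hek : Real.exp (-(k:ℝ)) = Real.exp (-1) ^ k := by
            rw [← Real.exp_nat_mul]; ring_nf
          simp only [htdef, hρdef]
          rw [hek]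
          field_simp
      _ = ENNReal.ofReal (2 * β * r) * (ENNReal.ofReal (Real.exp (-1))) ^ k := by
          rw [ENNReal.ofReal_mul (by positivity), ENNReal.ofReal_pow (Real.exp_pos _).le]
  have hgeom : (∑' k : ℕ, (ENNReal.ofReal (Real.exp (-1))) ^ k) ≤ 2 := by
    have hq : ENNReal.ofReal (Real.exp (-1)) ≤ 2⁻¹ := by
      have h2e : (2:ℝ) ≤ Real.exp 1 := by
        have := Real.add_one_le_exp (1:ℝ); linarith
      have : Real.exp (-1) ≤ 2⁻¹ := by
        rw [Real.exp_neg]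
        exact inv_anti₀ (by norm_num) h2e
      calc ENNReal.ofReal (Real.exp (-1)) ≤ ENNReal.ofReal 2⁻¹ :=
            ENNReal.ofReal_le_ofReal this
        _ = 2⁻¹ := by
            rw [ENNReal.ofReal_inv_of_pos (by norm_num)]
            norm_num
    calc (∑' k : ℕ, (ENNReal.ofReal (Real.exp (-1))) ^ k)
        ≤ ∑' k : ℕ, (2⁻¹ : ℝ≥0∞) ^ k :=
          Summable.tsum_le_tsum (fun k => pow_le_pow_left' hq k) ENNReal.summable ENNReal.summable
      _ = 2 := by
          rw [ENNReal.tsum_geometric, ENNReal.one_sub_inv_two]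
          simp
  have htail : (∑' k : ℕ, ENNReal.ofReal β * volume (E k)) ≤ ENNReal.ofReal (4 * β * r) := by
    calc (∑' k : ℕ, ENNReal.ofReal β * volume (E k))
        ≤ ∑' k : ℕ, ENNReal.ofReal (2 * β * r) * (ENNReal.ofReal (Real.exp (-1))) ^ k :=
          Summable.tsum_le_tsum hterm
            (ENNReal.summable) (ENNReal.summable)
      _ = ENNReal.ofReal (2 * β * r) * ∑' k : ℕ, (ENNReal.ofReal (Real.exp (-1))) ^ k :=
          ENNReal.tsum_mul_left
      _ ≤ ENNReal.ofReal (2 * β * r) * 2 := by gcongr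
      _ = ENNReal.ofReal (4 * β * r) := by
          rw [show (2:ℝ≥0∞) = ENNReal.ofReal 2 by simp,
            ← ENNReal.ofReal_mul (by positivity)]
          ring_nf
  calc (∫⁻ x in B, ENNReal.ofReal (Real.log (Real.exp 1 + M * (s x) ^ (-β))))
      ≤ ENNReal.ofReal (L + 1) * volume B +
          ∑' k : ℕ, ENNReal.ofReal β * volume (E k) := hstep1
    _ ≤ ENNReal.ofReal (L + 1) * ENNReal.ofReal (2 * r) + ENNReal.ofReal (4 * β * r) := by
        rw [hBdef, Real.volume_ball]
        gcongr
    _ ≤ ENNReal.ofReal (8 * r * L) := by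
        rw [← ENNReal.ofReal_mul (by positivity), ← ENNReal.ofReal_add (by positivity)
          (by positivity)]
        apply ENNReal.ofReal_le_ofReal
        nlinarith [hL1, hr, hβ1, hβ]
end

section
/- Let N ≥ 1 be an integer, H = (H₁, …, H_N) ∈ (0,1)^N and γ > 0 a real number. Then the Lebesgue integral ∫_{[0,1]^N} ds / (∑_{j=1}^N s_j^{H_j})^γ is finite if and only if ∑_{j=1}^N 1/H_j > γ. -/
open MeasureTheory Set
open scoped ENNReal

theorem stmt7 (N : ℕ) (hN : 1 ≤ N) (H : Fin N → ℝ)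
    (hH : ∀ j, H j ∈ Set.Ioo (0:ℝ) 1) (γ : ℝ) (hγ : 0 < γ) :
    (∫⁻ s in Set.univ.pi (fun _ : Fin N => Set.Icc (0:ℝ) 1),
        (ENNReal.ofReal ((∑ j, s j ^ H j) ^ γ))⁻¹) ≠ ⊤ ↔
      γ < ∑ j, 1 / H j := by
  have hNR : (1:ℝ) ≤ (N:ℝ) := by exact_mod_cast hN
  have hHpos : ∀ j, 0 < H j := fun j => (hH j).1
  have hH1 : ∀ j, H j < 1 := fun j => (hH j).2
  set A : ℝ := ∑ j, 1 / H j with hAdef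
  have hjA : ∀ j, 1 / H j ≤ A := by
    intro j
    refine Finset.single_le_sum (f := fun i => 1 / H i) (fun i _ => ?_) (Finset.mem_univ j)
    have := hHpos i; positivity
  have hA1 : 1 < A :=
    lt_of_lt_of_le (one_lt_one_div (hHpos ⟨0, hN⟩) (hH1 ⟨0, hN⟩)) (hjA ⟨0, hN⟩)
  have hApos : 0 < A := by linarith
  set f : (Fin N → ℝ) → ℝ≥0∞ := fun s => (ENNReal.ofReal ((∑ j, s j ^ H j) ^ γ))⁻¹ with hfdef
  have hfm : Measurable f := by fun_prop
  set box : Set (Fin N → ℝ) := Set.univ.pi (fun _ : Fin N => Set.Icc (0:ℝ) 1) with hboxdef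
  constructor
  · -- finite → γ < A
    intro hfin
    by_contra hge
    push_neg at hge  -- A ≤ γ
    apply hfin
    set r : ℕ → ℝ := fun k => (1/2:ℝ)^k with hrdef
    have hrpos : ∀ k, 0 < r k := fun k => by positivity
    have hrle1 : ∀ k, r k ≤ 1 := fun k => pow_le_one₀ (by norm_num) (by norm_num)
    set B : ℕ → Set (Fin N → ℝ) := fun k => Set.univ.pi fun j => Icc (0:ℝ) (r k ^ (1 / H j))
      with hBdef
    have hBmeas : ∀ k, MeasurableSet (B k) := fun k =>
      MeasurableSet.univ_pi fun j => measurableSet_Icc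
    have hrmono : ∀ k, r (k+1) ≤ r k := fun k =>
      pow_le_pow_of_le_one (by norm_num) (by norm_num) (Nat.le_succ k)
    have hBanti : Antitone B := antitone_nat_of_succ_le fun k => by
      refine Set.pi_mono fun j _ => Icc_subset_Icc le_rfl ?_
      exact Real.rpow_le_rpow (hrpos _).le (hrmono k) (by have := hHpos j; positivity)
    have hBsub : ∀ k, B k ⊆ box := fun k => Set.pi_mono fun j _ =>
      Icc_subset_Icc le_rfl (Real.rpow_le_one (hrpos k).le (hrle1 k)
        (by have := hHpos j; positivity))
    have hvol : ∀ k, volume (B k) = ENNReal.ofReal (r k ^ A) := by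
      intro k
      rw [hBdef]
      rw [volume_pi_pi]
      simp only [Real.volume_Icc, sub_zero]
      rw [← ENNReal.ofReal_prod_of_nonneg (fun i _ => Real.rpow_nonneg (hrpos k).le _),
        hAdef, Real.rpow_sum_of_pos (hrpos k)]
    set S : ℕ → Set (Fin N → ℝ) := fun k => B k \ B (k+1) with hSdef
    have hSmeas : ∀ k, MeasurableSet (S k) := fun k => (hBmeas k).diff (hBmeas (k+1))
    have hSdisj : Pairwise (Function.onFun Disjoint S) := by
      intro k l hkl
      rcases hkl.lt_or_gt with h | h
      · exact Set.disjoint_left.2 fun x hxk hxl => hxk.2 (hBanti (Nat.succ_le_of_lt h) hxl.1)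
      · exact Set.disjoint_right.2 fun x hxl hxk => hxl.2 (hBanti (Nat.succ_le_of_lt h) hxk.1)
    have hvolS : ∀ k, volume (S k) = ENNReal.ofReal (r k ^ A - r (k+1) ^ A) := by
      intro k
      rw [hSdef]
      rw [measure_diff (hBanti (Nat.le_succ k)) ((hBmeas (k+1)).nullMeasurableSet)
        (by rw [hvol]; exact ENNReal.ofReal_ne_top)]
      rw [hvol, hvol, ENNReal.ofReal_sub _ (Real.rpow_nonneg (hrpos _).le _)]
    have hfl : ∀ k, ∀ s ∈ B k, (ENNReal.ofReal (((N:ℝ) * r k) ^ γ))⁻¹ ≤ f s := by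
      intro k s hs
      have hs' : ∀ j, s j ∈ Icc (0:ℝ) (r k ^ (1 / H j)) := fun j => hs j (Set.mem_univ j)
      have hterm : ∀ j : Fin N, s j ^ H j ≤ r k := by
        intro j
        calc s j ^ H j ≤ (r k ^ (1 / H j)) ^ H j :=
              Real.rpow_le_rpow (hs' j).1 (hs' j).2 (hHpos j).le
          _ = r k ^ ((1 / H j) * H j) := (Real.rpow_mul (hrpos k).le _ _).symm
          _ = r k := by rw [one_div, inv_mul_cancel₀ (hHpos j).ne', Real.rpow_one]
      have hsum : ∑ j, s j ^ H j ≤ (N:ℝ) * r k := by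
        calc ∑ j, s j ^ H j ≤ ∑ _j : Fin N, r k := Finset.sum_le_sum fun j _ => hterm j
          _ = (N:ℝ) * r k := by simp [Finset.sum_const, nsmul_eq_mul]
      have hpow : (∑ j, s j ^ H j) ^ γ ≤ ((N:ℝ) * r k) ^ γ :=
        Real.rpow_le_rpow (Finset.sum_nonneg fun j _ => Real.rpow_nonneg (hs' j).1 _) hsum hγ.le
      exact ENNReal.inv_le_inv' (ENNReal.ofReal_le_ofReal hpow)
    set ε : ℝ := ((N:ℝ) ^ γ)⁻¹ * (1 - (1/2:ℝ) ^ A) with hεdef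
    have hhalfA : (1/2:ℝ) ^ A < 1 := Real.rpow_lt_one (by norm_num) (by norm_num) hApos
    have hNg : (0:ℝ) < (N:ℝ)^γ := Real.rpow_pos_of_pos (by linarith) _
    have hεpos : 0 < ε := mul_pos (inv_pos.2 hNg) (by linarith)
    have hshell : ∀ k, ENNReal.ofReal ε ≤
        (ENNReal.ofReal (((N:ℝ) * r k) ^ γ))⁻¹ * volume (S k) := by
      intro k
      rw [hvolS k]
      have hr := hrpos k
      have hNr : 0 < (N:ℝ) * r k := by positivity
      rw [← ENNReal.ofReal_inv_of_pos (Real.rpow_pos_of_pos hNr _),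
        ← ENNReal.ofReal_mul (by positivity)]
      apply ENNReal.ofReal_le_ofReal
      have hrg : (0:ℝ) < r k ^ γ := Real.rpow_pos_of_pos hr _
      have h4 : 1 ≤ r k ^ (A - γ) :=
        Real.one_le_rpow_of_pos_of_le_one_of_nonpos hr (hrle1 k) (by linarith)
      have hrhs : (((N:ℝ) * r k) ^ γ)⁻¹ * (r k ^ A - r (k+1) ^ A)
          = ((N:ℝ)^γ)⁻¹ * (r k ^ (A - γ) * (1 - (1/2:ℝ) ^ A)) := by
        have h1 : r (k+1) = r k * (1/2) := by rw [hrdef]; ring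
        rw [h1, Real.mul_rpow hr.le (by norm_num), Real.mul_rpow (by linarith) hr.le,
          Real.rpow_sub hr]
        field_simp
      rw [hrhs, hεdef]
      have h5 : 1 - (1/2:ℝ)^A ≤ r k ^ (A - γ) * (1 - (1/2:ℝ)^A) := by nlinarith
      exact mul_le_mul_of_nonneg_left h5 (by positivity)
    refine top_le_iff.mp ?_
    calc (⊤:ℝ≥0∞) = ∑' _ : ℕ, ENNReal.ofReal ε := by
          rw [ENNReal.tsum_const_eq_top_of_ne_zero]
          simp only [ne_eq, ENNReal.ofReal_eq_zero, not_le]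
          exact hεpos
      _ ≤ ∑' k, ∫⁻ s in S k, f s := by
          refine ENNReal.tsum_le_tsum fun k => ?_
          refine (hshell k).trans ?_
          rw [← setLIntegral_const (S k) _]
          exact setLIntegral_mono hfm (fun x hx => hfl k x hx.1)
      _ = ∫⁻ s in ⋃ k, S k, f s := (lintegral_iUnion hSmeas hSdisj f).symm
      _ ≤ ∫⁻ s in box, f s :=
          lintegral_mono_set (Set.iUnion_subset fun k => Set.diff_subset.trans (hBsub k))
  · -- γ < A → finite
    intro hlt
    have hγA : γ / A < 1 := (div_lt_one hApos).2 hlt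
    set g : ℝ → ℝ := (Icc (0:ℝ) 1).indicator (fun x => x ^ (-(γ/A))) with hgdef
    have hgi : Integrable g := by
      rw [hgdef, integrable_indicator_iff measurableSet_Icc]
      have := (intervalIntegral.integrableOn_Ioo_rpow_iff one_pos).2
        (by linarith : (-1:ℝ) < -(γ/A))
      exact this.congr_set_ae Ioo_ae_eq_Icc.symm
    have hhi : Integrable (fun s : Fin N → ℝ => ∏ j, g (s j)) :=
      Integrable.fintype_prod (fun _ => hgi)
    have hbound : ∀ᵐ s ∂(volume.restrict box), f s ≤ ENNReal.ofReal (∏ j, g (s j)) := by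
      have h0 : ∀ᵐ s : Fin N → ℝ ∂(volume.restrict box), ∀ j, s j ≠ 0 := by
        apply ae_restrict_of_ae
        rw [ae_all_iff]; intro j
        rw [MeasureTheory.volume_pi]
        exact MeasureTheory.Measure.ae_eval_ne _ j 0
      filter_upwards [h0, ae_restrict_mem (MeasurableSet.univ_pi fun _ => measurableSet_Icc)]
        with s hs0 hsbox
      have hsj : ∀ j, s j ∈ Icc (0:ℝ) 1 := fun j => hsbox j (Set.mem_univ j)
      have hspos : ∀ j, 0 < s j := fun j => lt_of_le_of_ne (hsj j).1 (Ne.symm (hs0 j))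
      set w : Fin N → ℝ := fun j => (1 / H j) / A with hwdef
      have hw1 : ∑ j, w j = 1 := by
        rw [hwdef, ← Finset.sum_div, ← hAdef, div_self hApos.ne']
      have hgm := Real.geom_mean_le_arith_mean_weighted Finset.univ w (fun j => s j ^ H j)
        (fun i _ => by have h1 := hHpos i; positivity) hw1
        (fun i _ => Real.rpow_nonneg (hspos i).le _)
      have hzw : ∀ j : Fin N, (s j ^ H j) ^ w j = s j ^ (A⁻¹) := by
        intro j
        rw [← Real.rpow_mul (hspos j).le]
        congr 1
        rw [hwdef]
        field_simp
        exact div_self (by have := hHpos j; positivity)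
      have hP : ∏ j, s j ^ (A⁻¹) ≤ ∑ j, s j ^ H j := by
        calc ∏ j, s j ^ (A⁻¹) = ∏ j, (s j ^ H j) ^ w j :=
              Finset.prod_congr rfl fun j _ => (hzw j).symm
          _ ≤ ∑ j, w j * s j ^ H j := hgm
          _ ≤ ∑ j, s j ^ H j := Finset.sum_le_sum fun j _ =>
              mul_le_of_le_one_left (Real.rpow_nonneg (hspos j).le _)
                ((div_le_one hApos).2 (hjA j))
      have hPpos : 0 < ∏ j, s j ^ (A⁻¹) :=
        Finset.prod_pos fun j _ => Real.rpow_pos_of_pos (hspos j) _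
      have h2 : f s ≤ (ENNReal.ofReal ((∏ j, s j ^ (A⁻¹)) ^ γ))⁻¹ :=
        ENNReal.inv_le_inv' (ENNReal.ofReal_le_ofReal
          (Real.rpow_le_rpow hPpos.le hP hγ.le))
      have h3 : (ENNReal.ofReal ((∏ j, s j ^ (A⁻¹)) ^ γ))⁻¹
          = ENNReal.ofReal (∏ j, g (s j)) := by
        rw [← ENNReal.ofReal_inv_of_pos (Real.rpow_pos_of_pos hPpos _)]
        congr 1
        rw [← Real.rpow_neg hPpos.le,
          ← Real.finset_prod_rpow _ _ (fun j _ => Real.rpow_nonneg (hspos j).le _) _]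
        refine Finset.prod_congr rfl fun j _ => ?_
        rw [hgdef, Set.indicator_of_mem (hsj j), ← Real.rpow_mul (hspos j).le]
        congr 1
        rw [div_eq_mul_inv]
        ring
      exact h2.trans_eq h3
    have hle : (∫⁻ s in box, f s) ≤ ∫⁻ s : Fin N → ℝ, ENNReal.ofReal (∏ j, g (s j)) :=
      (lintegral_mono_ae hbound).trans (setLIntegral_le_lintegral _ _)
    exact ne_top_of_le_ne_top
      (ne_of_lt ((lintegral_ofReal_le_lintegral_enorm (fun s : Fin N → ℝ => ∏ j, g (s j))).trans_lt hhi.2)) hle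
end

section
/- Let N ≥ 1 be an integer, H = (H₁, …, H_N) ∈ (0,1)^N and γ > 0 a real number with ∑_{j=1}^N 1/H_j > γ. Then the Lebesgue integral ∫_{[0,1]^N × [0,1]^N} ds dt / ( [∑_{j=1}^N s_j^{2H_j}]^{γ/2} · [∑_{j=1}^N min{|s_j - t_j|^{2H_j}, t_j^{2H_j}}]^{γ/2} ) is finite. -/
open MeasureTheory Set
open scoped ENNReal

/-- Lintegral of a product of coordinate functions over a pi volume. -/
lemma my_lintegral_pi_prod : ∀ (n : ℕ) (f : Fin n → ℝ → ℝ≥0∞), (∀ j, Measurable (f j)) →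
    ∫⁻ x : Fin n → ℝ, ∏ j, f j (x j) = ∏ j, ∫⁻ y, f j y := by
  intro n
  induction n with
  | zero =>
    intro f hf
    simp [MeasureTheory.volume_pi, lintegral_const,
      MeasureTheory.Measure.pi_of_empty (fun _ : Fin 0 => (volume : Measure ℝ))]
  | succ n ih =>
    intro f hf
    have hmp := MeasureTheory.measurePreserving_piFinSuccAbove
      (fun _ : Fin (n+1) => (volume : Measure ℝ)) 0
    set e := MeasurableEquiv.piFinSuccAbove (fun _ : Fin (n+1) => ℝ) 0 with he
    have hF : Measurable fun x : Fin (n+1) → ℝ => ∏ j, f j (x j) :=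
      Finset.measurable_prod _ fun j _ => (hf j).comp (measurable_pi_apply j)
    have hcomp := (hmp.symm).lintegral_comp hF
    -- ∫⁻ z, F (e.symm z) ∂prod = ∫⁻ x, F x ∂pi
    rw [MeasureTheory.volume_pi, ← hcomp]
    have : ∀ z : ℝ × (Fin n → ℝ),
        (∏ j, f j (e.symm z j)) = f 0 z.1 * ∏ j : Fin n, f j.succ (z.2 j) := by
      intro z
      have hz : (e.symm z : Fin (n+1) → ℝ) = Fin.cons z.1 z.2 := by
        ext j
        simp [he, MeasurableEquiv.piFinSuccAbove_symm_apply, Fin.insertNth_zero]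
      rw [hz, Fin.prod_univ_succ]
      simp
    simp_rw [this]
    rw [lintegral_prod_mul (f := f 0) (g := fun w : Fin n → ℝ => ∏ j, f j.succ (w j))
      ((hf 0).aemeasurable)
      ((Finset.measurable_prod _ fun j _ => (hf j.succ).comp (measurable_pi_apply j)).aemeasurable)]
    rw [Fin.prod_univ_succ]
    congr 1
    rw [← ih (fun j => f j.succ) (fun j => hf j.succ), MeasureTheory.volume_pi]

lemma my_E_lt_top {e : ℝ} (he0 : 0 < e) (he1 : e < 1) :
    ∫⁻ u in Icc (0:ℝ) 1, (ENNReal.ofReal u) ^ (-e) < ⊤ := by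
  rw [← MeasureTheory.Measure.restrict_congr_set MeasureTheory.Ioc_ae_eq_Icc]
  rw [setLIntegral_congr_fun (f := fun u : ℝ => (ENNReal.ofReal u) ^ (-e))
    (g := fun u : ℝ => ENNReal.ofReal (u ^ (-e))) measurableSet_Ioc
    (fun u (hu : u ∈ Ioc (0:ℝ) 1) => ENNReal.ofReal_rpow_of_pos hu.1)]
  have hInt : IntegrableOn (fun u : ℝ => u ^ (-e)) (Ioc (0:ℝ) 1) := by
    rw [← intervalIntegrable_iff_integrableOn_Ioc_of_le (by norm_num)]
    exact intervalIntegral.intervalIntegrable_rpow' (by linarith)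
  have hfin := hInt.2
  refine lt_of_le_of_lt ?_ hfin
  exact lintegral_mono fun u => Real.ofReal_le_enorm _

lemma my_meas_orpow {e : ℝ} : Measurable (fun u : ℝ => ENNReal.ofReal u ^ (-e)) :=
  ENNReal.measurable_ofReal.pow measurable_const

lemma my_psi_bound {e : ℝ} (he0 : 0 < e) {x : ℝ} (hx : x ∈ Icc (0:ℝ) 1) :
    ∫⁻ y in Icc (0:ℝ) 1, ENNReal.ofReal (min |x - y| y) ^ (-e)
      ≤ 3 * ∫⁻ u in Icc (0:ℝ) 1, (ENNReal.ofReal u) ^ (-e) := by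
  set E := ∫⁻ u in Icc (0:ℝ) 1, (ENNReal.ofReal u) ^ (-e) with hE
  have habs : ∫⁻ u in Icc (0:ℝ) 1, (ENNReal.ofReal |u|) ^ (-e) = E := by
    refine setLIntegral_congr_fun measurableSet_Icc (fun u hu => ?_)
    rw [abs_of_nonneg hu.1]
  have hneg : ∫⁻ u in Icc (-1:ℝ) 0, (ENNReal.ofReal |u|) ^ (-e) = E := by
    have hemb : MeasurableEmbedding (fun y : ℝ => -y) :=
      (MeasurableEquiv.neg ℝ).measurableEmbedding
    have hpre : (fun y : ℝ => -y) ⁻¹' Icc (-1:ℝ) 0 = Icc (0:ℝ) 1 := by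
      ext y; simp only [mem_preimage, mem_Icc]; constructor <;> intro h <;>
        constructor <;> linarith [h.1, h.2]
    have := (Measure.measurePreserving_neg (volume : Measure ℝ)).setLIntegral_comp_preimage_emb
      hemb (fun u => (ENNReal.ofReal |u|) ^ (-e)) (Icc (-1:ℝ) 0)
    rw [hpre] at this
    rw [← this, ← habs]
    refine setLIntegral_congr_fun measurableSet_Icc (fun u hu => ?_)
    rw [abs_neg]
  have htrans : ∫⁻ y in Icc (0:ℝ) 1, (ENNReal.ofReal |x - y|) ^ (-e)
      = ∫⁻ u in Icc (x-1) x, (ENNReal.ofReal |u|) ^ (-e) := by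
    have hemb : MeasurableEmbedding (fun y : ℝ => x - y) :=
      (MeasurableEquiv.subLeft x).measurableEmbedding
    have hpre : (fun y : ℝ => x - y) ⁻¹' Icc (x-1) x = Icc (0:ℝ) 1 := by
      ext y; simp only [mem_preimage, mem_Icc]; constructor <;> intro h <;>
        constructor <;> linarith [h.1, h.2]
    have := (Measure.measurePreserving_sub_left (volume : Measure ℝ) x).setLIntegral_comp_preimage_emb
      hemb (fun u => (ENNReal.ofReal |u|) ^ (-e)) (Icc (x-1) x)
    rw [hpre] at this
    exact this
  have hsplit : ∫⁻ u in Icc (x-1) x, (ENNReal.ofReal |u|) ^ (-e) ≤ E + E := by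
    calc ∫⁻ u in Icc (x-1) x, (ENNReal.ofReal |u|) ^ (-e)
        ≤ ∫⁻ u in Icc (-1:ℝ) 1, (ENNReal.ofReal |u|) ^ (-e) :=
          lintegral_mono_set (Icc_subset_Icc (by linarith [hx.1]) hx.2)
      _ = ∫⁻ u in Icc (-1:ℝ) 0 ∪ Icc (0:ℝ) 1, (ENNReal.ofReal |u|) ^ (-e) := by
          rw [Set.Icc_union_Icc_eq_Icc (by norm_num) (by norm_num)]
      _ ≤ (∫⁻ u in Icc (-1:ℝ) 0, (ENNReal.ofReal |u|) ^ (-e))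
            + ∫⁻ u in Icc (0:ℝ) 1, (ENNReal.ofReal |u|) ^ (-e) := lintegral_union_le _ _ _
      _ = E + E := by rw [hneg, habs]
  have hpt : ∀ y : ℝ, ENNReal.ofReal (min |x - y| y) ^ (-e)
      ≤ (ENNReal.ofReal |x - y|) ^ (-e) + (ENNReal.ofReal y) ^ (-e) := by
    intro y
    rcases min_cases |x - y| y with ⟨h1, _⟩ | ⟨h1, _⟩ <;> rw [h1]
    · exact le_self_add
    · exact le_add_self
  calc ∫⁻ y in Icc (0:ℝ) 1, ENNReal.ofReal (min |x - y| y) ^ (-e)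
      ≤ ∫⁻ y in Icc (0:ℝ) 1,
          ((ENNReal.ofReal |x - y|) ^ (-e) + (ENNReal.ofReal y) ^ (-e)) :=
        lintegral_mono fun y => hpt y
    _ = (∫⁻ y in Icc (0:ℝ) 1, (ENNReal.ofReal |x - y|) ^ (-e)) + E := by
        rw [lintegral_add_left]
        exact my_meas_orpow.comp ((measurable_const.sub measurable_id).abs)
    _ ≤ (E + E) + E := by
        rw [htrans]; exact add_le_add hsplit le_rfl
    _ = 3 * E := by ring

lemma my_sum_rpow_bound {N : ℕ} (hN : 1 ≤ N) (a : Fin N → ℝ) (ha : ∀ j, 0 < a j)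
    {β : ℝ} (hβ0 : 0 < β) (hβ : β < ∑ j, 1 / a j) (x : Fin N → ℝ) (hx : ∀ j, 0 < x j) :
    (∑ j, x j ^ a j) ^ (-β) ≤ ∏ j, x j ^ (-(β / (∑ j, 1 / a j))) := by
  haveI : Nonempty (Fin N) := ⟨⟨0, hN⟩⟩
  set S := ∑ j, 1 / a j with hS
  have hSpos : 0 < S := Finset.sum_pos (fun j _ => div_pos one_pos (ha j)) Finset.univ_nonempty
  have hwle : ∀ j : Fin N, 1 / (a j * S) ≤ 1 := by
    intro j
    rw [div_le_one (mul_pos (ha j) hSpos)]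
    have h1 : 1 / a j ≤ S := Finset.single_le_sum (f := fun j => 1 / a j)
      (fun j _ => (div_pos one_pos (ha j)).le) (Finset.mem_univ j)
    calc (1:ℝ) = a j * (1 / a j) := (mul_one_div_cancel (ha j).ne').symm
      _ ≤ a j * S := by nlinarith [ha j]
  have key := Real.geom_mean_le_arith_mean_weighted Finset.univ
    (fun j => 1 / (a j * S)) (fun j => x j ^ a j)
    (fun j _ => le_of_lt (div_pos one_pos (mul_pos (ha j) hSpos)))
    (by
      have h2 : ∀ j : Fin N, 1 / (a j * S) = (1 / a j) * (1 / S) := fun j => by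
        rw [one_div, mul_inv, one_div, one_div]
      simp_rw [h2, ← Finset.sum_mul, ← hS]
      exact mul_one_div_cancel hSpos.ne')
    (fun j _ => (Real.rpow_pos_of_pos (hx j) _).le)
  have hprod : (∏ j, (x j ^ a j) ^ (1 / (a j * S))) = ∏ j, x j ^ (1 / S) := by
    refine Finset.prod_congr rfl fun j _ => ?_
    rw [← Real.rpow_mul (hx j).le]
    congr 1
    rw [mul_one_div, div_mul_eq_div_div, div_self (ha j).ne']
  have hle : (∏ j, x j ^ (1 / S)) ≤ ∑ j, x j ^ a j := by
    rw [← hprod]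
    refine key.trans (Finset.sum_le_sum fun j _ => ?_)
    exact mul_le_of_le_one_left (Real.rpow_pos_of_pos (hx j) _).le (hwle j)
  have hprodpos : 0 < ∏ j, x j ^ (1 / S) :=
    Finset.prod_pos fun j _ => Real.rpow_pos_of_pos (hx j) _
  calc (∑ j, x j ^ a j) ^ (-β) ≤ (∏ j, x j ^ (1 / S)) ^ (-β) :=
        Real.rpow_le_rpow_of_nonpos hprodpos hle (by linarith)
    _ = ∏ j, x j ^ (-(β / S)) := by
        rw [← Real.finset_prod_rpow _ _ (fun j _ => (Real.rpow_pos_of_pos (hx j) _).le)]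
        refine Finset.prod_congr rfl fun j _ => ?_
        rw [← Real.rpow_mul (hx j).le]
        congr 1
        rw [one_div, inv_mul_eq_div, neg_div]

noncomputable def myphi (e : ℝ) : ℝ → ℝ≥0∞ :=
  fun x => (Icc (0:ℝ) 1).indicator (fun x => ENNReal.ofReal x ^ (-e)) x

noncomputable def mypsi (e x : ℝ) : ℝ → ℝ≥0∞ :=
  fun y => (Icc (0:ℝ) 1).indicator (fun y => ENNReal.ofReal (min |x - y| y) ^ (-e)) y

lemma myphi_meas {e : ℝ} : Measurable (myphi e) :=
  my_meas_orpow.indicator measurableSet_Icc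

lemma mypsi_meas {e x : ℝ} : Measurable (mypsi e x) :=
  (((measurable_const.sub measurable_id).abs.min measurable_id).ennreal_ofReal.pow
    measurable_const).indicator measurableSet_Icc

lemma mypsi_meas_pair {e : ℝ} : Measurable (fun q : ℝ × ℝ => mypsi e q.1 q.2) := by
  have : (fun q : ℝ × ℝ => mypsi e q.1 q.2) =
      (((univ : Set ℝ) ×ˢ Icc (0:ℝ) 1).indicator
        (fun q : ℝ × ℝ => ENNReal.ofReal (min |q.1 - q.2| q.2) ^ (-e))) := by
    ext q
    by_cases h : q.2 ∈ Icc (0:ℝ) 1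
    · rw [indicator_of_mem (by simp [h]), mypsi, indicator_of_mem h]
    · rw [indicator_of_notMem (by simp [h]), mypsi, indicator_of_notMem h]
  rw [this]
  exact (((measurable_fst.sub measurable_snd).abs.min measurable_snd).ennreal_ofReal.pow
    measurable_const).indicator (MeasurableSet.univ.prod measurableSet_Icc)

lemma my_orpow_ne_zero {e : ℝ} (he0 : 0 < e) (x : ℝ) : ENNReal.ofReal x ^ (-e) ≠ 0 := by
  rw [Ne, ENNReal.rpow_eq_zero_iff]
  push_neg
  constructor
  · intro _; linarith
  · intro h; exact absurd h ENNReal.ofReal_ne_top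

lemma my_prod_eq_top {N : ℕ} (f : Fin N → ℝ≥0∞) (h0 : ∀ j, f j ≠ 0) {j : Fin N}
    (hj : f j = ⊤) : ∏ i, f i = ⊤ := by
  rw [← Finset.prod_erase_mul Finset.univ f (Finset.mem_univ j), hj]
  exact ENNReal.mul_top (Finset.prod_ne_zero_iff.2 fun i _ => h0 i)

set_option maxHeartbeats 1000000 in
theorem stmt8 (N : ℕ) (hN : 1 ≤ N) (H : Fin N → ℝ)
    (hH : ∀ j, H j ∈ Set.Ioo (0:ℝ) 1) (γ : ℝ) (hγ : 0 < γ)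
    (hcond : γ < ∑ j, 1 / H j) :
    (∫⁻ p in ((Set.univ.pi fun _ : Fin N => Set.Icc (0:ℝ) 1) ×ˢ
        (Set.univ.pi fun _ : Fin N => Set.Icc (0:ℝ) 1)),
        (ENNReal.ofReal
          ((∑ j, p.1 j ^ (2 * H j)) ^ (γ / 2) *
            (∑ j, min (|p.1 j - p.2 j| ^ (2 * H j)) (p.2 j ^ (2 * H j))) ^
              (γ / 2)))⁻¹) ≠ ⊤ := by
  haveI : Nonempty (Fin N) := ⟨⟨0, hN⟩⟩
  have ha : ∀ j, 0 < 2 * H j := fun j => by linarith [(hH j).1]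
  set S : ℝ := ∑ j, 1 / (2 * H j) with hS
  have hSeq : S = (∑ j, 1 / H j) / 2 := by
    rw [hS, Finset.sum_div]
    refine Finset.sum_congr rfl fun j _ => ?_
    rw [div_div]
    ring_nf
  have hβS : γ / 2 < S := by rw [hSeq]; linarith
  have hβ0 : 0 < γ / 2 := by linarith
  have hSpos : 0 < S := lt_trans hβ0 hβS
  set e : ℝ := γ / 2 / S with he
  have he0 : 0 < e := div_pos hβ0 hSpos
  have he1 : e < 1 := (div_lt_one hSpos).2 hβS
  set E : ℝ≥0∞ := ∫⁻ u in Icc (0:ℝ) 1, (ENNReal.ofReal u) ^ (-e) with hEdef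
  have hE : E < ⊤ := my_E_lt_top he0 he1
  set box : Set (Fin N → ℝ) := Set.univ.pi fun _ : Fin N => Set.Icc (0:ℝ) 1 with hbox
  have hboxm : MeasurableSet box := MeasurableSet.univ_pi fun _ => measurableSet_Icc
  set G : (Fin N → ℝ) × (Fin N → ℝ) → ℝ≥0∞ :=
    fun p => (∏ j, myphi e (p.1 j)) * ∏ j, mypsi e (p.1 j) (p.2 j) with hG
  have hGm : Measurable G := by
    refine Measurable.mul ?_ ?_
    · exact Finset.measurable_prod _ fun j _ =>
        myphi_meas.comp ((measurable_pi_apply j).comp measurable_fst)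
    · exact Finset.measurable_prod _ fun j _ => (mypsi_meas_pair (e := e)).comp'
        (f := fun p : (Fin N → ℝ) × (Fin N → ℝ) => (p.1 j, p.2 j))
        (((measurable_pi_apply j).comp measurable_fst).prodMk
          ((measurable_pi_apply j).comp measurable_snd))
  -- pointwise bound
  have key : ∀ p : (Fin N → ℝ) × (Fin N → ℝ),
      (box ×ˢ box).indicator (fun p =>
        (ENNReal.ofReal
          ((∑ j, p.1 j ^ (2 * H j)) ^ (γ / 2) *
            (∑ j, min (|p.1 j - p.2 j| ^ (2 * H j)) (p.2 j ^ (2 * H j))) ^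
              (γ / 2)))⁻¹) p ≤ G p := by
    intro p
    by_cases hp : p ∈ box ×ˢ box
    · rw [indicator_of_mem hp]
      obtain ⟨hp1, hp2⟩ := hp
      have hs : ∀ j, p.1 j ∈ Icc (0:ℝ) 1 := fun j => hp1 j (mem_univ j)
      have ht : ∀ j, p.2 j ∈ Icc (0:ℝ) 1 := fun j => hp2 j (mem_univ j)
      have hmge : ∀ j, 0 ≤ min |p.1 j - p.2 j| (p.2 j) :=
        fun j => le_min (abs_nonneg _) (ht j).1
      have hmle : ∀ j, min |p.1 j - p.2 j| (p.2 j) ≤ 1 :=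
        fun j => (min_le_right _ _).trans (ht j).2
      have hmin : ∀ j, min (|p.1 j - p.2 j| ^ (2 * H j)) (p.2 j ^ (2 * H j))
          = (min |p.1 j - p.2 j| (p.2 j)) ^ (2 * H j) := by
        intro j
        rcases le_total |p.1 j - p.2 j| (p.2 j) with h | h
        · rw [min_eq_left (Real.rpow_le_rpow (abs_nonneg _) h (ha j).le), min_eq_left h]
        · rw [min_eq_right (Real.rpow_le_rpow (ht j).1 h (ha j).le), min_eq_right h]
      rw [show (∑ j, min (|p.1 j - p.2 j| ^ (2 * H j)) (p.2 j ^ (2 * H j)))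
          = ∑ j, (min |p.1 j - p.2 j| (p.2 j)) ^ (2 * H j) from
        Finset.sum_congr rfl fun j _ => hmin j]
      by_cases hpos : (∀ j, 0 < p.1 j) ∧ (∀ j, 0 < min |p.1 j - p.2 j| (p.2 j))
      · obtain ⟨hs0, hm0⟩ := hpos
        have hA : 0 < ∑ j, p.1 j ^ (2 * H j) :=
          Finset.sum_pos (fun j _ => Real.rpow_pos_of_pos (hs0 j) _) Finset.univ_nonempty
        have hB : 0 < ∑ j, (min |p.1 j - p.2 j| (p.2 j)) ^ (2 * H j) :=
          Finset.sum_pos (fun j _ => Real.rpow_pos_of_pos (hm0 j) _) Finset.univ_nonempty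
        have hbnd1 : (∑ j, p.1 j ^ (2 * H j)) ^ (-(γ / 2))
            ≤ ∏ j, p.1 j ^ (-(γ / 2 / S)) :=
          my_sum_rpow_bound hN _ ha hβ0 hβS _ hs0
        have hbnd2 : (∑ j, (min |p.1 j - p.2 j| (p.2 j)) ^ (2 * H j)) ^ (-(γ / 2))
            ≤ ∏ j, (min |p.1 j - p.2 j| (p.2 j)) ^ (-(γ / 2 / S)) :=
          my_sum_rpow_bound hN _ ha hβ0 hβS _ hm0
        have hofreal : ∀ (x : Fin N → ℝ), (∀ j, 0 < x j) →
            ENNReal.ofReal (∏ j, x j ^ (-(γ / 2 / S))) = ∏ j, ENNReal.ofReal (x j) ^ (-e) := by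
          intro x hx
          rw [ENNReal.ofReal_prod_of_nonneg (fun j _ => (Real.rpow_pos_of_pos (hx j) _).le)]
          exact Finset.prod_congr rfl fun j _ => (ENNReal.ofReal_rpow_of_pos (hx j)).symm ▸ rfl
        calc (ENNReal.ofReal
              ((∑ j, p.1 j ^ (2 * H j)) ^ (γ / 2) *
                (∑ j, (min |p.1 j - p.2 j| (p.2 j)) ^ (2 * H j)) ^ (γ / 2)))⁻¹
            = ENNReal.ofReal
              ((∑ j, p.1 j ^ (2 * H j)) ^ (-(γ / 2)) *
                (∑ j, (min |p.1 j - p.2 j| (p.2 j)) ^ (2 * H j)) ^ (-(γ / 2))) := by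
              rw [Real.rpow_neg hA.le, Real.rpow_neg hB.le,
                ← mul_inv, ENNReal.ofReal_inv_of_pos
                  (mul_pos (Real.rpow_pos_of_pos hA _) (Real.rpow_pos_of_pos hB _))]
          _ ≤ ENNReal.ofReal
              ((∏ j, p.1 j ^ (-(γ / 2 / S))) *
                ∏ j, (min |p.1 j - p.2 j| (p.2 j)) ^ (-(γ / 2 / S))) := by
              refine ENNReal.ofReal_le_ofReal ?_
              refine mul_le_mul hbnd1 hbnd2 (Real.rpow_nonneg hB.le _) ?_
              exact Finset.prod_nonneg fun j _ => (Real.rpow_pos_of_pos (hs0 j) _).le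
          _ = G p := by
              rw [ENNReal.ofReal_mul
                  (Finset.prod_nonneg fun j _ => (Real.rpow_pos_of_pos (hs0 j) _).le),
                hofreal _ hs0, hofreal _ hm0, hG]
              congr 1
              · exact Finset.prod_congr rfl fun j _ => by
                  rw [myphi, indicator_of_mem (hs j)]
              · exact Finset.prod_congr rfl fun j _ => by
                  rw [mypsi, indicator_of_mem (ht j)]
      · -- some coordinate vanishes: G p = ⊤
        refine le_top.trans_eq ?_
        symm
        rw [hG]
        have hphival : ∀ j, myphi e (p.1 j) = ENNReal.ofReal (p.1 j) ^ (-e) :=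
          fun j => indicator_of_mem (hs j) _
        have hpsival : ∀ j, mypsi e (p.1 j) (p.2 j)
            = ENNReal.ofReal (min |p.1 j - p.2 j| (p.2 j)) ^ (-e) :=
          fun j => indicator_of_mem (ht j) _
        have hphine : ∀ j, myphi e (p.1 j) ≠ 0 :=
          fun j => (hphival j).symm ▸ my_orpow_ne_zero he0 _
        have hpsine : ∀ j, mypsi e (p.1 j) (p.2 j) ≠ 0 :=
          fun j => (hpsival j).symm ▸ my_orpow_ne_zero he0 _
        push_neg at hpos
        rcases (Classical.em (∀ j, 0 < p.1 j)) with hall | hnot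
        · obtain ⟨j, hj⟩ := hpos hall
          have hj0 : min |p.1 j - p.2 j| (p.2 j) = 0 := le_antisymm hj (hmge j)
          have : mypsi e (p.1 j) (p.2 j) = ⊤ := by
            rw [hpsival j, hj0, ENNReal.ofReal_zero, ENNReal.zero_rpow_of_neg (by linarith)]
          rw [ENNReal.mul_eq_top]
          left
          exact ⟨Finset.prod_ne_zero_iff.2 fun i _ => hphine i,
            my_prod_eq_top _ hpsine this⟩
        · obtain ⟨j, hj⟩ := not_forall.1 hnot
          have hj0 : p.1 j = 0 := le_antisymm (not_lt.1 hj) (hs j).1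
          have : myphi e (p.1 j) = ⊤ := by
            rw [hphival j, hj0, ENNReal.ofReal_zero, ENNReal.zero_rpow_of_neg (by linarith)]
          rw [ENNReal.mul_eq_top]
          right
          exact ⟨my_prod_eq_top _ hphine this,
            Finset.prod_ne_zero_iff.2 fun i _ => hpsine i⟩
    · rw [indicator_of_notMem hp]
      exact zero_le
  -- main estimate
  have main : (∫⁻ p in box ×ˢ box,
      (ENNReal.ofReal
        ((∑ j, p.1 j ^ (2 * H j)) ^ (γ / 2) *
          (∑ j, min (|p.1 j - p.2 j| ^ (2 * H j)) (p.2 j ^ (2 * H j))) ^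
            (γ / 2)))⁻¹) ≤ E ^ N * (3 * E) ^ N := by
    calc (∫⁻ p in box ×ˢ box, (ENNReal.ofReal
          ((∑ j, p.1 j ^ (2 * H j)) ^ (γ / 2) *
            (∑ j, min (|p.1 j - p.2 j| ^ (2 * H j)) (p.2 j ^ (2 * H j))) ^
              (γ / 2)))⁻¹)
        ≤ ∫⁻ p, G p := by
          rw [← lintegral_indicator (hboxm.prod hboxm)]
          exact lintegral_mono key
      _ = ∫⁻ x : Fin N → ℝ, ∫⁻ y : Fin N → ℝ, G (x, y) := by
          rw [Measure.volume_eq_prod, lintegral_prod _ hGm.aemeasurable]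
      _ = ∫⁻ x : Fin N → ℝ, (∏ j, myphi e (x j)) * ∏ j, ∫⁻ v, mypsi e (x j) v := by
          refine lintegral_congr fun x => ?_
          rw [hG]
          calc ∫⁻ y : Fin N → ℝ, (∏ j, myphi e (x j)) * ∏ j, mypsi e (x j) (y j)
              = (∏ j, myphi e (x j)) * ∫⁻ y : Fin N → ℝ, ∏ j, mypsi e (x j) (y j) :=
                lintegral_const_mul _ (Finset.measurable_prod _ fun j _ =>
                  mypsi_meas.comp (measurable_pi_apply j))
            _ = (∏ j, myphi e (x j)) * ∏ j, ∫⁻ v, mypsi e (x j) v := by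
                rw [my_lintegral_pi_prod N (fun j => mypsi e (x j)) (fun j => mypsi_meas)]
      _ ≤ ∫⁻ x : Fin N → ℝ, (∏ j, myphi e (x j)) * (3 * E) ^ N := by
          refine lintegral_mono fun x => ?_
          by_cases hx : ∀ j, x j ∈ Icc (0:ℝ) 1
          · refine mul_le_mul_right ?_ _
            calc ∏ j, ∫⁻ v, mypsi e (x j) v
                ≤ ∏ _j : Fin N, 3 * E := by
                  refine Finset.prod_le_prod' fun j _ => ?_
                  rw [show (∫⁻ v, mypsi e (x j) v)
                      = ∫⁻ v in Icc (0:ℝ) 1, ENNReal.ofReal (min |x j - v| v) ^ (-e) from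
                    lintegral_indicator measurableSet_Icc _]
                  exact my_psi_bound he0 (hx j)
              _ = (3 * E) ^ N := by
                  rw [Finset.prod_const, Finset.card_univ, Fintype.card_fin]
          · push_neg at hx
            obtain ⟨j, hj⟩ := hx
            have : (∏ j, myphi e (x j)) = 0 :=
              Finset.prod_eq_zero (Finset.mem_univ j) (by rw [myphi, indicator_of_notMem hj])
            rw [this, zero_mul]
            exact zero_le
      _ = (∫⁻ x : Fin N → ℝ, ∏ j, myphi e (x j)) * (3 * E) ^ N :=
          lintegral_mul_const _ (Finset.measurable_prod _ fun j _ =>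
            myphi_meas.comp (measurable_pi_apply j))
      _ = E ^ N * (3 * E) ^ N := by
          rw [my_lintegral_pi_prod N (fun _ => myphi e) (fun _ => myphi_meas),
            Finset.prod_const, Finset.card_univ, Fintype.card_fin]
          congr 2
          exact lintegral_indicator measurableSet_Icc _
  have hfin : E ^ N * (3 * E) ^ N < ⊤ :=
    ENNReal.mul_lt_top (ENNReal.pow_lt_top hE)
      (ENNReal.pow_lt_top (ENNReal.mul_lt_top (by norm_num) hE))
  exact (lt_of_le_of_lt main hfin).ne
end

section
/- Let N ≥ 1 be an integer, H = (H₁, …, H_N) ∈ (0,1)^N and γ > 0 a real number with ∑_{j=1}^N 1/H_j ≤ γ. Then for any reals 0 ≤ a < b ≤ 1, the Lebesgue integral ∫_{[a,b]^N × [a,b]^N} ds dt / (∑_{j=1}^N |s_j - t_j|^{H_j})^γ is infinite. -/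
open MeasureTheory Set

private lemma cube_meas {N : ℕ} (a b : ℝ) :
    MeasurableSet ((Set.univ.pi fun _ : Fin N => Set.Icc a b) : Set (Fin N → ℝ)) :=
  MeasurableSet.univ_pi fun _ => measurableSet_Icc

private lemma Emeas {N : ℕ} (d : Fin N → ℝ) :
    MeasurableSet {p : (Fin N → ℝ) × (Fin N → ℝ) | ∀ j, |p.1 j - p.2 j| ≤ d j} := by
  have h : {p : (Fin N → ℝ) × (Fin N → ℝ) | ∀ j, |p.1 j - p.2 j| ≤ d j}
      = ⋂ j, (fun p : (Fin N → ℝ) × (Fin N → ℝ) => |p.1 j - p.2 j|) ⁻¹' Set.Iic (d j) := by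
    ext p; simp [Set.mem_iInter]
  rw [h]
  exact MeasurableSet.iInter fun j =>
    ((((measurable_pi_apply j).comp measurable_fst).sub
      ((measurable_pi_apply j).comp measurable_snd)).abs) measurableSet_Iic

private lemma section_eq {N : ℕ} (a b : ℝ) (d : Fin N → ℝ) (s : Fin N → ℝ)
    (hs : s ∈ Set.univ.pi fun _ : Fin N => Set.Icc a b) :
    Prod.mk s ⁻¹' (((Set.univ.pi fun _ : Fin N => Set.Icc a b) ×ˢ
        (Set.univ.pi fun _ : Fin N => Set.Icc a b)) ∩
      {p : (Fin N → ℝ) × (Fin N → ℝ) | ∀ j, |p.1 j - p.2 j| ≤ d j})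
    = Set.univ.pi fun j => Set.Icc (max a (s j - d j)) (min b (s j + d j)) := by
  simp only [Set.mem_pi, Set.mem_univ, true_implies, Set.mem_Icc] at hs
  ext t
  simp only [Set.mem_preimage, Set.mem_inter_iff, Set.mem_prod, Set.mem_pi, Set.mem_univ,
    true_implies, Set.mem_Icc, Set.mem_setOf_eq, abs_sub_le_iff, max_le_iff, le_min_iff]
  constructor
  · rintro ⟨⟨-, h2⟩, h3⟩ j
    exact ⟨⟨(h2 j).1, by linarith [(h3 j).1]⟩, (h2 j).2, by linarith [(h3 j).2]⟩
  · intro h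
    exact ⟨⟨fun j => ⟨(hs j).1, (hs j).2⟩,
      fun j => ⟨(h j).1.1, (h j).2.1⟩⟩,
      fun j => ⟨by linarith [(h j).1.2], by linarith [(h j).2.2]⟩⟩

private lemma cube_vol {N : ℕ} (a b : ℝ) (hab : a ≤ b) :
    volume ((Set.univ.pi fun _ : Fin N => Set.Icc a b) : Set (Fin N → ℝ))
      = ENNReal.ofReal ((b - a) ^ N) := by
  rw [volume_pi_pi]
  simp [Real.volume_Icc, Finset.prod_const, ← ENNReal.ofReal_pow (by linarith : (0:ℝ) ≤ b - a)]

private lemma measure_lower {N : ℕ} (a b : ℝ) (hab : a ≤ b) (d : Fin N → ℝ)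
    (hd : ∀ j, 0 ≤ d j) (hd2 : ∀ j, d j ≤ b - a) :
    ENNReal.ofReal ((b - a) ^ N * ∏ j, d j)
      ≤ volume (((Set.univ.pi fun _ : Fin N => Set.Icc a b) ×ˢ
        (Set.univ.pi fun _ : Fin N => Set.Icc a b)) ∩
      {p : (Fin N → ℝ) × (Fin N → ℝ) | ∀ j, |p.1 j - p.2 j| ≤ d j}) := by
  set S := (Set.univ.pi fun _ : Fin N => Set.Icc a b : Set (Fin N → ℝ)) with hSdef
  set B := (S ×ˢ S) ∩ {p : (Fin N → ℝ) × (Fin N → ℝ) | ∀ j, |p.1 j - p.2 j| ≤ d j} with hBdef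
  have hB : MeasurableSet B := (((cube_meas a b).prod (cube_meas a b)).inter (Emeas d))
  have key : (volume : Measure ((Fin N → ℝ) × (Fin N → ℝ))) B
      = ∫⁻ s, volume (Prod.mk s ⁻¹' B) := by
    rw [Measure.volume_eq_prod, Measure.prod_apply hB]
  rw [key]
  calc ENNReal.ofReal ((b - a) ^ N * ∏ j, d j)
      = ENNReal.ofReal (∏ j, d j) * volume S := by
        rw [mul_comm ((b-a)^N), cube_vol a b hab,
          ENNReal.ofReal_mul (Finset.prod_nonneg fun j _ => hd j)]
    _ = ∫⁻ s in S, ENNReal.ofReal (∏ j, d j) := (setLIntegral_const _ _).symm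
    _ = ∫⁻ s, S.indicator (fun _ => ENNReal.ofReal (∏ j, d j)) s :=
        (lintegral_indicator (cube_meas a b) _).symm
    _ ≤ ∫⁻ s, volume (Prod.mk s ⁻¹' B) := by
        apply lintegral_mono
        intro s
        dsimp only
        by_cases hs : s ∈ S
        · rw [Set.indicator_of_mem hs]
          rw [hBdef, section_eq a b d s hs, volume_pi_pi]
          simp only [Real.volume_Icc]
          rw [ENNReal.ofReal_prod_of_nonneg (fun j _ => hd j)]
          apply Finset.prod_le_prod'
          intro j _
          apply ENNReal.ofReal_le_ofReal
          have hs' : ∀ i, a ≤ s i ∧ s i ≤ b := fun i => hs i trivial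
          have h1 : max a (s j - d j) ≤ s j := max_le (hs' j).1 (by linarith [hd j])
          have h2 : max a (s j - d j) ≤ b - d j :=
            max_le (by linarith [hd2 j]) (by linarith [(hs' j).2])
          have h3 : max a (s j - d j) + d j ≤ min b (s j + d j) :=
            le_min (by linarith) (by linarith)
          linarith
        · rw [Set.indicator_of_notMem hs]
          exact zero_le

private lemma measure_upper {N : ℕ} (a b : ℝ) (hab : a ≤ b) (d : Fin N → ℝ)
    (hd : ∀ j, 0 ≤ d j) :
    volume (((Set.univ.pi fun _ : Fin N => Set.Icc a b) ×ˢ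
        (Set.univ.pi fun _ : Fin N => Set.Icc a b)) ∩
      {p : (Fin N → ℝ) × (Fin N → ℝ) | ∀ j, |p.1 j - p.2 j| ≤ d j})
      ≤ ENNReal.ofReal ((b - a) ^ N * ∏ j, (2 * d j)) := by
  set S := (Set.univ.pi fun _ : Fin N => Set.Icc a b : Set (Fin N → ℝ)) with hSdef
  set B := (S ×ˢ S) ∩ {p : (Fin N → ℝ) × (Fin N → ℝ) | ∀ j, |p.1 j - p.2 j| ≤ d j} with hBdef
  have hB : MeasurableSet B := (((cube_meas a b).prod (cube_meas a b)).inter (Emeas d))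
  have key : (volume : Measure ((Fin N → ℝ) × (Fin N → ℝ))) B
      = ∫⁻ s, volume (Prod.mk s ⁻¹' B) := by
    rw [Measure.volume_eq_prod, Measure.prod_apply hB]
  rw [key]
  calc ∫⁻ s, volume (Prod.mk s ⁻¹' B)
      ≤ ∫⁻ s, S.indicator (fun _ => ENNReal.ofReal (∏ j, (2 * d j))) s := by
        apply lintegral_mono
        intro s
        dsimp only
        by_cases hs : s ∈ S
        · rw [Set.indicator_of_mem hs]
          rw [hBdef, section_eq a b d s hs, volume_pi_pi]
          simp only [Real.volume_Icc]
          rw [ENNReal.ofReal_prod_of_nonneg (fun (j : Fin N) _ => by linarith [hd j])]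
          apply Finset.prod_le_prod'
          intro j _
          apply ENNReal.ofReal_le_ofReal
          have h1 : min b (s j + d j) ≤ s j + d j := min_le_right _ _
          have h2 : s j - d j ≤ max a (s j - d j) := le_max_right _ _
          linarith
        · rw [Set.indicator_of_notMem hs]
          have : Prod.mk s ⁻¹' B = ∅ := by
            ext t
            simp only [Set.mem_preimage, hBdef, Set.mem_inter_iff, Set.mem_prod,
              Set.mem_empty_iff_false, iff_false]
            rintro ⟨⟨h1, -⟩, -⟩
            exact hs h1
          rw [this]
          simp
    _ = ENNReal.ofReal (∏ j, (2 * d j)) * volume S := by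
        rw [lintegral_indicator (cube_meas a b) _, setLIntegral_const]
    _ = ENNReal.ofReal ((b - a) ^ N * ∏ j, (2 * d j)) := by
        rw [cube_vol a b hab, ← ENNReal.ofReal_mul
          (Finset.prod_nonneg fun (j : Fin N) _ => by linarith [hd j]),
          mul_comm ((b-a)^N) (∏ j, (2 * d j))]

theorem stmt9 (N : ℕ) (hN : 1 ≤ N) (H : Fin N → ℝ)
    (hH : ∀ j, H j ∈ Set.Ioo (0:ℝ) 1) (γ : ℝ) (hγ : 0 < γ)
    (hcond : ∑ j, 1 / H j ≤ γ) (a b : ℝ) (ha : 0 ≤ a) (hab : a < b) (hb : b ≤ 1) :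
    (∫⁻ p in ((Set.univ.pi fun _ : Fin N => Set.Icc a b) ×ˢ
        (Set.univ.pi fun _ : Fin N => Set.Icc a b)),
        (ENNReal.ofReal ((∑ j, |p.1 j - p.2 j| ^ H j) ^ γ))⁻¹) = ⊤ := by
  have hba : (0:ℝ) < b - a := by linarith
  have hNpos : (0:ℝ) < N := by exact_mod_cast hN
  -- σ and its properties
  set σ : ℝ := ∑ j, 1 / H j with hσdef
  have hNσ : (N : ℝ) < σ := by
    have hne : (Finset.univ : Finset (Fin N)).Nonempty := by
      have : Nonempty (Fin N) := ⟨⟨0, hN⟩⟩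
      exact Finset.univ_nonempty
    calc (N:ℝ) = ∑ _j : Fin N, (1:ℝ) := by simp
      _ < σ := Finset.sum_lt_sum_of_nonempty hne
        (fun j _ => one_lt_one_div (hH j).1 (hH j).2)
  have hσγ : σ ≤ γ := hcond
  have hσpos : 0 < σ := lt_of_lt_of_le hNpos hNσ.le
  -- the dyadic radii
  obtain ⟨K, hK⟩ := exists_pow_lt_of_lt_one hba (by norm_num : (2:ℝ)⁻¹ < 1)
  set r : ℕ → ℝ := fun k => (2:ℝ)⁻¹ ^ (K + k) with hrdef
  have hrpos : ∀ k, 0 < r k := fun k => pow_pos (by norm_num) _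
  have hrone : ∀ k, r k ≤ 1 := fun k => pow_le_one₀ (by norm_num) (by norm_num)
  have hrba : ∀ k, r k ≤ b - a := fun k =>
    le_trans (pow_le_pow_of_le_one (by norm_num) (by norm_num) (Nat.le_add_right K k)) hK.le
  have hrsucc : ∀ k, r (k+1) = r k * 2⁻¹ := fun k => by
    simp only [hrdef]
    rw [← add_assoc, pow_succ]
  set d : ℕ → Fin N → ℝ := fun k j => r k ^ (1 / H j) with hddef
  have hHj : ∀ j, (0:ℝ) < H j := fun j => (hH j).1
  have hinv1 : ∀ j, (1:ℝ) ≤ 1 / H j := fun j => by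
    rw [le_div_iff₀ (hHj j)]
    nlinarith [(hH j).2]
  have hd0 : ∀ k j, 0 ≤ d k j := fun k j => Real.rpow_nonneg (hrpos k).le _
  have hdr : ∀ k j, d k j ≤ r k := fun k j => by
    have h := Real.rpow_le_rpow_of_exponent_ge (hrpos k) (hrone k) (hinv1 j)
    rw [Real.rpow_one] at h
    exact h
  have hdba : ∀ k j, d k j ≤ b - a := fun k j => (hdr k j).trans (hrba k)
  have hdprod : ∀ k, (∏ j, d k j) = r k ^ σ := fun k =>
    (Real.rpow_sum_of_pos (hrpos k) _ _).symm
  have hdmono : ∀ k j, d (k+1) j ≤ d k j := fun k j =>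
    Real.rpow_le_rpow (hrpos (k+1)).le
      (by rw [hrsucc]; nlinarith [hrpos k]) (one_div_nonneg.mpr (hHj j).le)
  -- the sets
  set S : Set (Fin N → ℝ) := Set.univ.pi fun _ : Fin N => Set.Icc a b with hSdef
  set E : ℕ → Set ((Fin N → ℝ) × (Fin N → ℝ)) :=
    fun k => (S ×ˢ S) ∩ {p | ∀ j, |p.1 j - p.2 j| ≤ d k j} with hEdef
  have hEmeas : ∀ k, MeasurableSet (E k) := fun k =>
    ((cube_meas a b).prod (cube_meas a b)).inter (Emeas _)
  have hEanti : Antitone E := antitone_nat_of_succ_le fun k => by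
    intro p hp
    exact ⟨hp.1, fun j => (hp.2 j).trans (hdmono k j)⟩
  set A : ℕ → Set ((Fin N → ℝ) × (Fin N → ℝ)) := fun k => E k \ E (k+1) with hAdef
  have hAmeas : ∀ k, MeasurableSet (A k) := fun k => (hEmeas k).diff (hEmeas (k+1))
  have hAdisj : Pairwise (Function.onFun Disjoint A) := by
    have key : ∀ k k', k < k' → Disjoint (A k) (A k') := by
      intro k k' hkk'
      refine Set.disjoint_left.mpr fun p hp hp' => ?_
      exact hp.2 (hEanti hkk' hp'.1)
    intro k k' hne
    rcases hne.lt_or_gt with h | h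
    · exact key k k' h
    · exact (key k' k h).symm
  -- volume of E k from below and above
  have hElow : ∀ k, ENNReal.ofReal ((b - a) ^ N * r k ^ σ) ≤ volume (E k) := fun k => by
    rw [← hdprod k]
    exact measure_lower a b hab.le (d k) (hd0 k) (hdba k)
  have hEup : ∀ k, volume (E (k+1))
      ≤ ENNReal.ofReal ((b - a) ^ N * (2 ^ N * ((2:ℝ)⁻¹ ^ σ * r k ^ σ))) := fun k => by
    have h1 := measure_upper a b hab.le (d (k+1)) (hd0 (k+1))
    have h2 : (∏ j, (2 * d (k+1) j)) = 2 ^ N * ((2:ℝ)⁻¹ ^ σ * r k ^ σ) := by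
      rw [Finset.prod_mul_distrib, Finset.prod_const, hdprod (k+1), hrsucc k, mul_comm (r k),
        Real.mul_rpow (by norm_num) (hrpos k).le]
      simp [Finset.card_univ]
    rw [← h2]
    exact h1
  -- the constant c₀
  set c₀ : ℝ := 1 - 2 ^ N * (2:ℝ)⁻¹ ^ σ with hc₀def
  have hc₀ : 0 < c₀ := by
    have h1 : (2:ℝ)⁻¹ ^ σ < (2:ℝ)⁻¹ ^ (N:ℝ) :=
      Real.rpow_lt_rpow_of_exponent_gt (by norm_num) (by norm_num) hNσ
    have h2 : (2:ℝ)⁻¹ ^ (N:ℝ) = ((2:ℝ) ^ N)⁻¹ := by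
      rw [Real.rpow_natCast, inv_pow]
    have h3 : (0:ℝ) < 2 ^ N := by positivity
    rw [hc₀def]
    rw [h2] at h1
    have := mul_lt_mul_of_pos_left h1 h3
    rw [mul_inv_cancel₀ h3.ne'] at this
    linarith
  -- volume of the annulus from below
  have hAlow : ∀ k, ENNReal.ofReal ((b - a) ^ N * c₀ * r k ^ σ) ≤ volume (A k) := by
    intro k
    refine le_trans ?_ (le_measure_diff (μ := volume) (s₁ := E k) (s₂ := E (k+1)))
    refine le_trans ?_ (tsub_le_tsub (hElow k) (hEup k))
    rw [← ENNReal.ofReal_sub _ (by positivity)]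
    apply ENNReal.ofReal_le_ofReal
    apply le_of_eq
    rw [hc₀def]
    ring
  -- the uniform lower bound ε on each annulus integral
  set ε : ENNReal := ENNReal.ofReal ((b - a) ^ N * c₀ * ((N:ℝ) ^ γ)⁻¹) with hεdef
  have hεne : ε ≠ 0 := by
    simp only [hεdef, Ne, ENNReal.ofReal_eq_zero, not_le]
    positivity
  have hkey : ∀ k, ε ≤ ∫⁻ p in A k,
      (ENNReal.ofReal ((∑ j, |p.1 j - p.2 j| ^ H j) ^ γ))⁻¹ := by
    intro k
    have hpoint : ∀ p ∈ A k,
        (ENNReal.ofReal (((N:ℝ) * r k) ^ γ))⁻¹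
          ≤ (ENNReal.ofReal ((∑ j, |p.1 j - p.2 j| ^ H j) ^ γ))⁻¹ := by
      intro p hp
      apply ENNReal.inv_le_inv'
      apply ENNReal.ofReal_le_ofReal
      apply Real.rpow_le_rpow (Finset.sum_nonneg fun j _ =>
        Real.rpow_nonneg (abs_nonneg _) _) _ hγ.le
      calc (∑ j, |p.1 j - p.2 j| ^ H j) ≤ ∑ _j : Fin N, r k := by
            apply Finset.sum_le_sum
            intro j _
            have h1 : |p.1 j - p.2 j| ≤ d k j := hp.1.2 j
            have h2 : |p.1 j - p.2 j| ^ H j ≤ (d k j) ^ H j :=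
              Real.rpow_le_rpow (abs_nonneg _) h1 (hHj j).le
            have h3 : (d k j) ^ H j = r k := by
              rw [hddef]
              rw [← Real.rpow_mul (hrpos k).le, one_div_mul_cancel (hHj j).ne',
                Real.rpow_one]
            rw [h3] at h2
            exact h2
        _ = (N:ℝ) * r k := by
            rw [Finset.sum_const, Finset.card_univ, Fintype.card_fin, nsmul_eq_mul]
    have step1 : (ENNReal.ofReal (((N:ℝ) * r k) ^ γ))⁻¹ * volume (A k)
        ≤ ∫⁻ p in A k, (ENNReal.ofReal ((∑ j, |p.1 j - p.2 j| ^ H j) ^ γ))⁻¹ := by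
      rw [← setLIntegral_const (A k)]
      exact setLIntegral_mono' (hAmeas k) hpoint
    refine le_trans ?_ (le_trans (mul_le_mul_right (hAlow k) _) step1)
    -- ε ≤ (ofReal ((N r)^γ))⁻¹ * ofReal ((b-a)^N c₀ r^σ)
    have hx0 : (0:ℝ) < ((N:ℝ) * r k) ^ γ := Real.rpow_pos_of_pos (by positivity) _
    rw [← ENNReal.div_eq_inv_mul]
    rw [ENNReal.le_div_iff_mul_le (Or.inl (by simp [ENNReal.ofReal_eq_zero]; linarith))
      (Or.inl ENNReal.ofReal_ne_top)]
    rw [hεdef, ← ENNReal.ofReal_mul (by positivity)]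
    apply ENNReal.ofReal_le_ofReal
    have hmul : ((N:ℝ) * r k) ^ γ = (N:ℝ) ^ γ * r k ^ γ :=
      Real.mul_rpow (by positivity) (hrpos k).le
    have hNγ : (0:ℝ) < (N:ℝ) ^ γ := Real.rpow_pos_of_pos hNpos _
    have hrγσ : r k ^ γ ≤ r k ^ σ :=
      Real.rpow_le_rpow_of_exponent_ge (hrpos k) (hrone k) hσγ
    rw [hmul]
    have heq : (b - a) ^ N * c₀ * ((N:ℝ) ^ γ)⁻¹ * ((N:ℝ) ^ γ * r k ^ γ)
        = (b - a) ^ N * c₀ * r k ^ γ := by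
      field_simp
    rw [heq]
    have : (0:ℝ) ≤ (b - a) ^ N * c₀ := by positivity
    nlinarith [this, hrγσ]
  -- conclusion
  rw [eq_top_iff]
  calc (⊤:ENNReal) = ∑' _k : ℕ, ε := (ENNReal.tsum_const_eq_top_of_ne_zero hεne).symm
    _ ≤ ∑' k, ∫⁻ p in A k,
        (ENNReal.ofReal ((∑ j, |p.1 j - p.2 j| ^ H j) ^ γ))⁻¹ :=
      ENNReal.tsum_le_tsum hkey
    _ = ∫⁻ p in ⋃ k, A k,
        (ENNReal.ofReal ((∑ j, |p.1 j - p.2 j| ^ H j) ^ γ))⁻¹ :=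
      (lintegral_iUnion hAmeas hAdisj _).symm
    _ ≤ _ := lintegral_mono_set
        (Set.iUnion_subset fun k => Set.diff_subset.trans Set.inter_subset_left)
end

section
/- Let N ≥ 1 be an integer, H = (H₁, …, H_N) ∈ (0,1)^N, K = (K₁, …, K_N) ∈ (0,1)^N, and I = [0,1]^N. Let R₁, R₂ : I × I → ℝ be symmetric positive semidefinite kernels such that there exist constants c, c' > 0 with inf_{a ∈ ℝ} ( R₁(t,t) − 2a·R₁(s,t) + a²·R₁(s,s) ) ≥ c ∑_{j=1}^N min{|s_j − t_j|^{2H_j}, t_j^{2H_j}} and inf_{a ∈ ℝ} ( R₂(t,t) − 2a·R₂(s,t) + a²·R₂(s,s) ) ≥ c' ∑_{j=1}^N min{|s_j − t_j|^{2K_j}, t_j^{2K_j}} for all s, t ∈ I. Then there exists a constant c'' > 0 such that the kernel R = R₁ + R₂ satisfies inf_{a ∈ ℝ} ( R(t,t) − 2a·R(s,t) + a²·R(s,s) ) ≥ c'' ∑_{j=1}^N min{|s_j − t_j|^{2(H_j ∧ K_j)}, t_j^{2(H_j ∧ K_j)}} for all s, t ∈ I, where H_j ∧ K_j = min{H_j,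 K_j}. -/
open MeasureTheory Set

theorem stmt14 (N : ℕ) (hN : 1 ≤ N) (H K : Fin N → ℝ)
    (hH : ∀ j, H j ∈ Set.Ioo (0:ℝ) 1) (hK : ∀ j, K j ∈ Set.Ioo (0:ℝ) 1)
    (I : Set (Fin N → ℝ)) (hIdef : I = Set.univ.pi fun _ => Set.Icc (0:ℝ) 1)
    (R₁ R₂ : (Fin N → ℝ) → (Fin N → ℝ) → ℝ)
    (hsymm₁ : ∀ s ∈ I, ∀ t ∈ I, R₁ s t = R₁ t s)
    (hsymm₂ : ∀ s ∈ I, ∀ t ∈ I, R₂ s t = R₂ t s)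
    (hpsd₁ : ∀ (n : ℕ) (t : Fin n → (Fin N → ℝ)), (∀ i, t i ∈ I) →
      ∀ a : Fin n → ℝ, 0 ≤ ∑ i, ∑ k, a i * a k * R₁ (t i) (t k))
    (hpsd₂ : ∀ (n : ℕ) (t : Fin n → (Fin N → ℝ)), (∀ i, t i ∈ I) →
      ∀ a : Fin n → ℝ, 0 ≤ ∑ i, ∑ k, a i * a k * R₂ (t i) (t k))
    (c c' : ℝ) (hc : 0 < c) (hc' : 0 < c')
    (hC2₁ : ∀ s ∈ I, ∀ t ∈ I,
      c * ∑ j, min (|s j - t j| ^ (2 * H j)) (t j ^ (2 * H j)) ≤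
        ⨅ a : ℝ, (R₁ t t - 2 * a * R₁ s t + a ^ 2 * R₁ s s))
    (hC2₂ : ∀ s ∈ I, ∀ t ∈ I,
      c' * ∑ j, min (|s j - t j| ^ (2 * K j)) (t j ^ (2 * K j)) ≤
        ⨅ a : ℝ, (R₂ t t - 2 * a * R₂ s t + a ^ 2 * R₂ s s)) :
    ∃ c'' : ℝ, 0 < c'' ∧ ∀ s ∈ I, ∀ t ∈ I,
      c'' * ∑ j, min (|s j - t j| ^ (2 * min (H j) (K j)))
          (t j ^ (2 * min (H j) (K j))) ≤
        ⨅ a : ℝ, ((R₁ t t + R₂ t t) - 2 * a * (R₁ s t + R₂ s t) +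
          a ^ 2 * (R₁ s s + R₂ s s)) := by
  refine ⟨min c c', lt_min hc hc', ?_⟩
  intro s hs t ht
  have hsI := hs; have htI := ht
  rw [hIdef, Set.mem_pi] at hsI htI
  -- nonnegativity of each quadratic form
  have hq₁ : ∀ a : ℝ, 0 ≤ R₁ t t - 2 * a * R₁ s t + a ^ 2 * R₁ s s := by
    intro a
    have h := hpsd₁ 2 ![t, s] (by intro i; fin_cases i <;> assumption) ![1, -a]
    have hst := hsymm₁ s hs t ht
    simp [Fin.sum_univ_two] at h
    rw [hst] at h ⊢
    nlinarith [h]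
  have hq₂ : ∀ a : ℝ, 0 ≤ R₂ t t - 2 * a * R₂ s t + a ^ 2 * R₂ s s := by
    intro a
    have h := hpsd₂ 2 ![t, s] (by intro i; fin_cases i <;> assumption) ![1, -a]
    have hst := hsymm₂ s hs t ht
    simp [Fin.sum_univ_two] at h
    rw [hst] at h ⊢
    nlinarith [h]
  have hb₁ : BddBelow (Set.range fun a : ℝ => R₁ t t - 2 * a * R₁ s t + a ^ 2 * R₁ s s) :=
    ⟨0, by rintro x ⟨a, rfl⟩; exact hq₁ a⟩
  have hb₂ : BddBelow (Set.range fun a : ℝ => R₂ t t - 2 * a * R₂ s t + a ^ 2 * R₂ s s) :=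
    ⟨0, by rintro x ⟨a, rfl⟩; exact hq₂ a⟩
  have hsplit : (⨅ a : ℝ, (R₁ t t - 2 * a * R₁ s t + a ^ 2 * R₁ s s)) +
      (⨅ a : ℝ, (R₂ t t - 2 * a * R₂ s t + a ^ 2 * R₂ s s)) ≤
      ⨅ a : ℝ, ((R₁ t t + R₂ t t) - 2 * a * (R₁ s t + R₂ s t) +
          a ^ 2 * (R₁ s s + R₂ s s)) := by
    refine le_ciInf fun a => ?_
    have h1 := ciInf_le hb₁ a
    have h2 := ciInf_le hb₂ a
    linarith
  -- sum comparison
  have hterm : ∀ j, min (|s j - t j| ^ (2 * min (H j) (K j))) (t j ^ (2 * min (H j) (K j))) ≤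
      min (|s j - t j| ^ (2 * H j)) (t j ^ (2 * H j)) +
      min (|s j - t j| ^ (2 * K j)) (t j ^ (2 * K j)) := by
    intro j
    have hKn : (0:ℝ) ≤ min (|s j - t j| ^ (2 * K j)) (t j ^ (2 * K j)) :=
      le_min (Real.rpow_nonneg (abs_nonneg _) _) (Real.rpow_nonneg (htI j trivial).1 _)
    have hHn : (0:ℝ) ≤ min (|s j - t j| ^ (2 * H j)) (t j ^ (2 * H j)) :=
      le_min (Real.rpow_nonneg (abs_nonneg _) _) (Real.rpow_nonneg (htI j trivial).1 _)
    rcases min_choice (H j) (K j) with hm | hm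
    · rw [hm]; exact le_add_of_nonneg_right hKn
    · rw [hm]; exact le_add_of_nonneg_left hHn
  have hSH : (0:ℝ) ≤ ∑ j, min (|s j - t j| ^ (2 * H j)) (t j ^ (2 * H j)) :=
    Finset.sum_nonneg fun j _ =>
      le_min (Real.rpow_nonneg (abs_nonneg _) _) (Real.rpow_nonneg (htI j trivial).1 _)
  have hSK : (0:ℝ) ≤ ∑ j, min (|s j - t j| ^ (2 * K j)) (t j ^ (2 * K j)) :=
    Finset.sum_nonneg fun j _ =>
      le_min (Real.rpow_nonneg (abs_nonneg _) _) (Real.rpow_nonneg (htI j trivial).1 _)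
  have hsum : ∑ j, min (|s j - t j| ^ (2 * min (H j) (K j))) (t j ^ (2 * min (H j) (K j))) ≤
      (∑ j, min (|s j - t j| ^ (2 * H j)) (t j ^ (2 * H j))) +
      (∑ j, min (|s j - t j| ^ (2 * K j)) (t j ^ (2 * K j))) := by
    rw [← Finset.sum_add_distrib]
    exact Finset.sum_le_sum fun j _ => hterm j
  calc min c c' * ∑ j, min (|s j - t j| ^ (2 * min (H j) (K j))) (t j ^ (2 * min (H j) (K j)))
      ≤ min c c' * ((∑ j, min (|s j - t j| ^ (2 * H j)) (t j ^ (2 * H j))) +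
        (∑ j, min (|s j - t j| ^ (2 * K j)) (t j ^ (2 * K j)))) :=
        mul_le_mul_of_nonneg_left hsum (le_of_lt (lt_min hc hc'))
    _ ≤ c * (∑ j, min (|s j - t j| ^ (2 * H j)) (t j ^ (2 * H j))) +
        c' * (∑ j, min (|s j - t j| ^ (2 * K j)) (t j ^ (2 * K j))) := by
        rw [mul_add]
        exact add_le_add (mul_le_mul_of_nonneg_right (min_le_left _ _) hSH)
          (mul_le_mul_of_nonneg_right (min_le_right _ _) hSK)
    _ ≤ (⨅ a : ℝ, (R₁ t t - 2 * a * R₁ s t + a ^ 2 * R₁ s s)) +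
        (⨅ a : ℝ, (R₂ t t - 2 * a * R₂ s t + a ^ 2 * R₂ s s)) :=
        add_le_add (hC2₁ s hs t ht) (hC2₂ s hs t ht)
    _ ≤ _ := hsplit
end

section
/- Let N ≥ 1 be an integer, H = (H₁, …, H_N) ∈ (0,1)^N. Let R : [0,1]^N × [0,1]^N → ℝ be a symmetric positive semidefinite kernel satisfying (C3): there is a constant c₀ > 0 such that for all u, t¹, t², t³ ∈ [0,1]^N, inf_{(a₁,a₂,a₃) ∈ ℝ³} ( R(u,u) − 2∑_{i=1}^3 a_i R(u, tⁱ) + ∑_{i,k=1}^3 a_i a_k R(tⁱ, tᵏ) ) ≥ c₀ ∑_{j=1}^N min{ u_j^{2H_j}, |u_j − t¹_j|^{2H_j}, |u_j − t²_j|^{2H_j}, |u_j − t³_j|^{2H_j} }. Let I, J ⊆ [0,1]^N be compact rectangles and ε₀ > 0 such that |s_j − t_j| ≥ ε₀ for every j = 1, …, N, every s ∈ I and every t ∈ J (I and J are well separated). Define Q((s,t),(s',t')) = R(s,s') − R(s,t') − R(t,s') + R(t,t'). Then there exists a constant c > 0 such that for all (s,t), (s',t') ∈ I × J: inf_{a ∈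 ℝ} ( Q((s,t),(s,t)) − 2a·Q((s,t),(s',t')) + a²·Q((s',t'),(s',t')) ) ≥ c · ( ∑_{j=1}^N min{|s_j − s'_j|^{2H_j}, s_j^{2H_j}} + ∑_{j=1}^N min{|t_j − t'_j|^{2H_j}, t_j^{2H_j}} ). -/
open MeasureTheory Set

theorem stmt15 (N : ℕ) (hN : 1 ≤ N) (H : Fin N → ℝ)
    (hH : ∀ j, H j ∈ Set.Ioo (0:ℝ) 1)
    (R : (Fin N → ℝ) → (Fin N → ℝ) → ℝ)
    (hsymm : ∀ s t, R s t = R t s)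
    (hpsd : ∀ (n : ℕ) (t : Fin n → (Fin N → ℝ)),
      ∀ a : Fin n → ℝ, 0 ≤ ∑ i, ∑ k, a i * a k * R (t i) (t k))
    (c₀ : ℝ) (hc₀ : 0 < c₀)
    (hC3 : ∀ u t1 t2 t3 : Fin N → ℝ,
      u ∈ (Set.univ.pi fun _ : Fin N => Set.Icc (0:ℝ) 1) →
      t1 ∈ (Set.univ.pi fun _ : Fin N => Set.Icc (0:ℝ) 1) →
      t2 ∈ (Set.univ.pi fun _ : Fin N => Set.Icc (0:ℝ) 1) →
      t3 ∈ (Set.univ.pi fun _ : Fin N => Set.Icc (0:ℝ) 1) →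
      c₀ * ∑ j, min (u j ^ (2 * H j))
          (min (|u j - t1 j| ^ (2 * H j))
            (min (|u j - t2 j| ^ (2 * H j)) (|u j - t3 j| ^ (2 * H j)))) ≤
        ⨅ a : Fin 3 → ℝ,
          (R u u - 2 * (a 0 * R u t1 + a 1 * R u t2 + a 2 * R u t3) +
            (a 0 * a 0 * R t1 t1 + a 0 * a 1 * R t1 t2 + a 0 * a 2 * R t1 t3 +
             a 1 * a 0 * R t2 t1 + a 1 * a 1 * R t2 t2 + a 1 * a 2 * R t2 t3 +
             a 2 * a 0 * R t3 t1 + a 2 * a 1 * R t3 t2 + a 2 * a 2 * R t3 t3)))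
    (aI bI aJ bJ : Fin N → ℝ)
    (I J : Set (Fin N → ℝ))
    (hIdef : I = Set.univ.pi fun j => Set.Icc (aI j) (bI j))
    (hJdef : J = Set.univ.pi fun j => Set.Icc (aJ j) (bJ j))
    (hIsub : I ⊆ Set.univ.pi fun _ : Fin N => Set.Icc (0:ℝ) 1)
    (hJsub : J ⊆ Set.univ.pi fun _ : Fin N => Set.Icc (0:ℝ) 1)
    (ε₀ : ℝ) (hε₀ : 0 < ε₀)
    (hsep : ∀ j : Fin N, ∀ s ∈ I, ∀ t ∈ J, ε₀ ≤ |s j - t j|) :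
    ∃ c : ℝ, 0 < c ∧ ∀ s ∈ I, ∀ t ∈ J, ∀ s' ∈ I, ∀ t' ∈ J,
      c * ((∑ j, min (|s j - s' j| ^ (2 * H j)) (s j ^ (2 * H j))) +
          (∑ j, min (|t j - t' j| ^ (2 * H j)) (t j ^ (2 * H j)))) ≤
        ⨅ a : ℝ,
          ((R s s - R s t - R t s + R t t) -
            2 * a * (R s s' - R s t' - R t s' + R t t') +
            a ^ 2 * (R s' s' - R s' t' - R t' s' + R t' t')) := by
  classical
  set e : ℝ := min ε₀ 1 with he
  have he0 : 0 < e := lt_min hε₀ one_pos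
  have he1 : e ≤ 1 := min_le_right _ _
  set E : ℝ := e ^ (2:ℝ) with hE
  have hE0 : 0 < E := Real.rpow_pos_of_pos he0 2
  have hE1 : E ≤ 1 := Real.rpow_le_one he0.le he1 (by norm_num)
  -- nonnegativity of the quadratic form family
  have hF0 : ∀ u t1 t2 t3 : Fin N → ℝ, ∀ b : Fin 3 → ℝ,
      0 ≤ (R u u - 2 * (b 0 * R u t1 + b 1 * R u t2 + b 2 * R u t3) +
            (b 0 * b 0 * R t1 t1 + b 0 * b 1 * R t1 t2 + b 0 * b 2 * R t1 t3 +
             b 1 * b 0 * R t2 t1 + b 1 * b 1 * R t2 t2 + b 1 * b 2 * R t2 t3 +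
             b 2 * b 0 * R t3 t1 + b 2 * b 1 * R t3 t2 + b 2 * b 2 * R t3 t3)) := by
    intro u t1 t2 t3 b
    have h := hpsd 4 ![u, t1, t2, t3] ![1, -b 0, -b 1, -b 2]
    refine le_trans h (le_of_eq ?_)
    simp only [Fin.sum_univ_four, Matrix.cons_val_zero, Matrix.cons_val_one, Matrix.head_cons,
      Matrix.cons_val_two, Matrix.cons_val_three, Matrix.tail_cons, Matrix.head_fin_const]
    rw [hsymm t1 u, hsymm t2 u, hsymm t3 u, hsymm t2 t1, hsymm t3 t1, hsymm t3 t2]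
    ring
  have hBdd : ∀ u t1 t2 t3 : Fin N → ℝ, BddBelow (Set.range fun b : Fin 3 → ℝ =>
      (R u u - 2 * (b 0 * R u t1 + b 1 * R u t2 + b 2 * R u t3) +
            (b 0 * b 0 * R t1 t1 + b 0 * b 1 * R t1 t2 + b 0 * b 2 * R t1 t3 +
             b 1 * b 0 * R t2 t1 + b 1 * b 1 * R t2 t2 + b 1 * b 2 * R t2 t3 +
             b 2 * b 0 * R t3 t1 + b 2 * b 1 * R t3 t2 + b 2 * b 2 * R t3 t3))) := by
    intro u t1 t2 t3
    exact ⟨0, by rintro x ⟨b, rfl⟩; exact hF0 u t1 t2 t3 b⟩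
  -- the constant
  refine ⟨c₀ * E / 2, by positivity, ?_⟩
  intro s hs t ht s' hs' t' ht'
  have hsC := hIsub hs
  have htC := hJsub ht
  have hs'C := hIsub hs'
  have ht'C := hJsub ht'
  have hsj : ∀ j, s j ∈ Set.Icc (0:ℝ) 1 := fun j => hsC j (Set.mem_univ j)
  have htj : ∀ j, t j ∈ Set.Icc (0:ℝ) 1 := fun j => htC j (Set.mem_univ j)
  have hs'j : ∀ j, s' j ∈ Set.Icc (0:ℝ) 1 := fun j => hs'C j (Set.mem_univ j)
  have ht'j : ∀ j, t' j ∈ Set.Icc (0:ℝ) 1 := fun j => ht'C j (Set.mem_univ j)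
  -- basic per-coordinate helper
  have haux : ∀ A B C D : ℝ, 0 ≤ A → 0 ≤ C → A ≤ 1 → C ≤ 1 → E ≤ B → E ≤ D →
      E * min C A ≤ min A (min B (min C D)) := by
    intro A B C D hA0 hC0 hA1 hC1 hEB hED
    have hm0 : 0 ≤ min C A := le_min hC0 hA0
    have hm1 : min C A ≤ 1 := (min_le_right _ _).trans hA1
    have hmA : min C A ≤ A := min_le_right _ _
    have hmC : min C A ≤ C := min_le_left _ _
    refine le_min ?_ (le_min ?_ (le_min ?_ ?_))
    · exact (mul_le_of_le_one_left hm0 hE1).trans hmA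
    · exact (mul_le_of_le_one_right hE0.le hm1).trans hEB
    · exact (mul_le_of_le_one_left hm0 hE1).trans hmC
    · exact (mul_le_of_le_one_right hE0.le hm1).trans hED
  -- facts: E ≤ |x - y|^(2H j) when ε₀ ≤ |x - y|
  have hEle : ∀ (j : Fin N) (x : ℝ), ε₀ ≤ x → E ≤ x ^ (2 * H j) := by
    intro j x hx
    have hHj := hH j
    have h2 : e ^ (2:ℝ) ≤ e ^ (2 * H j) :=
      Real.rpow_le_rpow_of_exponent_ge he0 he1 (by nlinarith [hHj.2])
    have h3 : e ^ (2 * H j) ≤ x ^ (2 * H j) := by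
      refine Real.rpow_le_rpow he0.le ((min_le_left _ _).trans hx) (by nlinarith [hHj.1])
    exact h2.trans h3
  have hone : ∀ (j : Fin N) (x : ℝ), 0 ≤ x → x ≤ 1 → x ^ (2 * H j) ≤ 1 := by
    intro j x hx0 hx1
    exact Real.rpow_le_one hx0 hx1 (by nlinarith [(hH j).1])
  have hnn : ∀ (j : Fin N) (x : ℝ), 0 ≤ x → (0:ℝ) ≤ x ^ (2 * H j) := by
    intro j x hx
    exact Real.rpow_nonneg hx _
  -- abs difference within [0,1] is ≤ 1
  have habs1 : ∀ x y : ℝ, x ∈ Set.Icc (0:ℝ) 1 → y ∈ Set.Icc (0:ℝ) 1 → |x - y| ≤ 1 := by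
    intro x y hx hy
    rw [abs_sub_le_iff]
    constructor <;> [linarith [hx.1, hx.2, hy.1, hy.2]; linarith [hx.1, hx.2, hy.1, hy.2]]
  -- per-coordinate bounds (s-side)
  have hSside : ∀ j : Fin N,
      E * min (|s j - s' j| ^ (2 * H j)) (s j ^ (2 * H j)) ≤
        min (s j ^ (2 * H j)) (min (|s j - t j| ^ (2 * H j))
          (min (|s j - s' j| ^ (2 * H j)) (|s j - t' j| ^ (2 * H j)))) := by
    intro j
    refine haux _ _ _ _ (hnn j _ (hsj j).1) (hnn j _ (abs_nonneg _))
      (hone j _ (hsj j).1 (hsj j).2) (hone j _ (abs_nonneg _) (habs1 _ _ (hsj j) (hs'j j)))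
      (hEle j _ (hsep j s hs t ht)) (hEle j _ (hsep j s hs t' ht'))
  -- per-coordinate bounds (t-side)
  have hTside : ∀ j : Fin N,
      E * min (|t j - t' j| ^ (2 * H j)) (t j ^ (2 * H j)) ≤
        min (t j ^ (2 * H j)) (min (|t j - s j| ^ (2 * H j))
          (min (|t j - s' j| ^ (2 * H j)) (|t j - t' j| ^ (2 * H j)))) := by
    intro j
    have h1 : ε₀ ≤ |t j - s j| := by rw [abs_sub_comm]; exact hsep j s hs t ht
    have h2 : ε₀ ≤ |t j - s' j| := by rw [abs_sub_comm]; exact hsep j s' hs' t ht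
    have key := haux (t j ^ (2 * H j)) (|t j - s j| ^ (2 * H j))
      (|t j - t' j| ^ (2 * H j)) (|t j - s' j| ^ (2 * H j))
      (hnn j _ (htj j).1) (hnn j _ (abs_nonneg _))
      (hone j _ (htj j).1 (htj j).2) (hone j _ (abs_nonneg _) (habs1 _ _ (htj j) (ht'j j)))
      (hEle j _ h1) (hEle j _ h2)
    -- key : E * min C A ≤ min A (min B (min C D)); want min A (min B' (min C' D'))
    refine key.trans (le_of_eq ?_)
    rw [min_comm (|t j - t' j| ^ (2 * H j)) (|t j - s' j| ^ (2 * H j))]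
  -- sums
  have hSsum : E * (∑ j, min (|s j - s' j| ^ (2 * H j)) (s j ^ (2 * H j))) ≤
      ∑ j, min (s j ^ (2 * H j)) (min (|s j - t j| ^ (2 * H j))
          (min (|s j - s' j| ^ (2 * H j)) (|s j - t' j| ^ (2 * H j)))) := by
    rw [Finset.mul_sum]
    exact Finset.sum_le_sum fun j _ => hSside j
  have hTsum : E * (∑ j, min (|t j - t' j| ^ (2 * H j)) (t j ^ (2 * H j))) ≤
      ∑ j, min (t j ^ (2 * H j)) (min (|t j - s j| ^ (2 * H j))
          (min (|t j - s' j| ^ (2 * H j)) (|t j - t' j| ^ (2 * H j)))) := by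
    rw [Finset.mul_sum]
    exact Finset.sum_le_sum fun j _ => hTside j
  refine le_ciInf fun a => ?_
  -- bound via hC3 applied with u = s
  have hqs : c₀ * ∑ j, min (s j ^ (2 * H j)) (min (|s j - t j| ^ (2 * H j))
        (min (|s j - s' j| ^ (2 * H j)) (|s j - t' j| ^ (2 * H j)))) ≤
      ((R s s - R s t - R t s + R t t) -
        2 * a * (R s s' - R s t' - R t s' + R t t') +
        a ^ 2 * (R s' s' - R s' t' - R t' s' + R t' t')) := by
    refine (hC3 s t s' t' hsC htC hs'C ht'C).trans ?_
    refine le_trans (ciInf_le (hBdd s t s' t') ![1, a, -a]) (le_of_eq ?_)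
    simp only [Matrix.cons_val_zero, Matrix.cons_val_one, Matrix.head_cons,
      Matrix.cons_val_two, Matrix.tail_cons]
    simp only [hsymm t s, hsymm s' s, hsymm t' s, hsymm s' t, hsymm t' t, hsymm t' s']
    ring
  have hqt : c₀ * ∑ j, min (t j ^ (2 * H j)) (min (|t j - s j| ^ (2 * H j))
        (min (|t j - s' j| ^ (2 * H j)) (|t j - t' j| ^ (2 * H j)))) ≤
      ((R s s - R s t - R t s + R t t) -
        2 * a * (R s s' - R s t' - R t s' + R t t') +
        a ^ 2 * (R s' s' - R s' t' - R t' s' + R t' t')) := by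
    refine (hC3 t s s' t' htC hsC hs'C ht'C).trans ?_
    refine le_trans (ciInf_le (hBdd t s s' t') ![1, -a, a]) (le_of_eq ?_)
    simp only [Matrix.cons_val_zero, Matrix.cons_val_one, Matrix.head_cons,
      Matrix.cons_val_two, Matrix.tail_cons]
    simp only [hsymm t s, hsymm s' s, hsymm t' s, hsymm s' t, hsymm t' t, hsymm t' s']
    ring
  have h1 := mul_le_mul_of_nonneg_left hSsum hc₀.le
  have h2 := mul_le_mul_of_nonneg_left hTsum hc₀.le
  nlinarith [h1, h2, hqs, hqt]
end

section
/- Let N ≥ 1 be an integer, H = (H₁, …, H_N) ∈ (0,1)^N, S ⊆ {1, …, N} a subset with complement S^c, and γ > 0 a real number such that 2∑_{j∈S} 1/H_j + ∑_{j∈S^c} 1/H_j > γ. Then the Lebesgue integral over (s, t, s', t') ∈ ([0,1]^N)⁴ of [ ∑_{j∈S} ( min{|t_j − t'_j|^{H_j}, t_j^{H_j}} + min{|s_j − s'_j|^{H_j}, s_j^{H_j}} ) + ∑_{j∈S^c} min{ |s_j − t_j|^{H_j}, |s_j − s'_j|^{H_j}, |s_j − t'_j|^{H_j}, s_j^{H_j}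 } ]^{−γ} ds dt ds' dt' is finite. -/
open MeasureTheory MeasureTheory.Measure Set
open scoped ENNReal

/- ### Auxiliary lemmas -/

theorem lintegral_pi_prod' {n : ℕ} {α : Type*} [MeasurableSpace α]
    (μ : Measure α) [SigmaFinite μ] (f : Fin n → α → ℝ≥0∞)
    (hf : ∀ i, Measurable (f i)) :
    ∫⁻ x : Fin n → α, ∏ i, f i (x i) ∂Measure.pi (fun _ => μ) = ∏ i, ∫⁻ x, f i x ∂μ := by
  induction n with
  | zero => simp [lintegral_const, Measure.pi_univ]
  | succ n ih =>
      calc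
        _ = ∫⁻ x : α × (Fin n → α),
            f 0 x.1 * ∏ i : Fin n, f (Fin.succ i) (x.2 i)
            ∂μ.prod (Measure.pi fun _ : Fin n => μ) := by
          rw [← ((measurePreserving_piFinSuccAbove (fun _ : Fin (n+1) => μ) 0).symm).lintegral_comp_emb
            (MeasurableEquiv.measurableEmbedding _)]
          congr 1
          ext x
          rw [Fin.prod_univ_succ]
          simp [MeasurableEquiv.piFinSuccAbove_symm_apply, Fin.insertNthEquiv,
            Fin.insertNth_zero, Fin.zero_succAbove]
        _ = (∫⁻ x, f 0 x ∂μ) * ∏ i : Fin n, ∫⁻ x, f (Fin.succ i) x ∂μ := by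
          rw [lintegral_prod_mul (f := f 0) (g := fun y : Fin n → α => ∏ i, f (Fin.succ i) (y i))
            (hf 0).aemeasurable
            (Finset.measurable_prod Finset.univ
              (fun i _ => (hf (Fin.succ i)).comp (measurable_pi_apply i))).aemeasurable,
            ih _ (fun i => hf (Fin.succ i))]
        _ = _ := by rw [Fin.prod_univ_succ]

theorem pi_restrict_box {n : ℕ} :
    (volume : Measure (Fin n → ℝ)).restrict (Set.univ.pi fun _ => Set.Icc (0:ℝ) 1)
      = Measure.pi (fun _ : Fin n => (volume : Measure ℝ).restrict (Set.Icc (0:ℝ) 1)) := by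
  refine (Measure.pi_eq fun s hs => ?_).symm
  rw [Measure.restrict_apply (MeasurableSet.univ_pi hs), ← Set.pi_inter_distrib, volume_pi,
    Measure.pi_pi]
  exact Finset.prod_congr rfl fun i _ => (Measure.restrict_apply (hs i)).symm

lemma ae_ne_real' (c : ℝ) : ∀ᵐ x : ℝ, x ≠ c := by
  rw [ae_iff]
  refine measure_mono_null (fun x hx => ?_) (measure_singleton c)
  simp only [mem_setOf_eq, not_not] at hx
  simpa using hx

lemma prod_inv_eq' {ι : Type*} (s : Finset ι) (f : ι → ℝ≥0∞) (h : ∀ i, f i ≠ ⊤) :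
    (∏ i ∈ s, f i)⁻¹ = ∏ i ∈ s, (f i)⁻¹ :=
  ENNReal.prod_inv_distrib (fun i _ j _ _ => Or.inr (h j))

lemma key_bound {N : ℕ} (hN : 0 < N) (x : Fin N → ℝ) (hx : ∀ j, 0 ≤ x j) (F : ℝ)
    (hF : ∀ j, x j ≤ F) (e : Fin N → ℝ) (he : ∀ j, 0 < e j) {γ : ℝ}
    (hsum : ∑ j, e j = γ) :
    (ENNReal.ofReal (F ^ γ))⁻¹ ≤ ∏ j, (ENNReal.ofReal (x j ^ e j))⁻¹ := by
  have hF0 : 0 ≤ F := (hx ⟨0, hN⟩).trans (hF ⟨0, hN⟩)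
  rcases eq_or_lt_of_le hF0 with h0 | h0
  · have hx0 : ∀ j, x j = 0 := fun j => le_antisymm ((hF j).trans h0.ge) (hx j)
    have : ∏ j : Fin N, (ENNReal.ofReal (x j ^ e j))⁻¹ = ⊤ := by
      have h1 : ∀ j : Fin N, (ENNReal.ofReal (x j ^ e j))⁻¹ = ⊤ := fun j => by
        simp [hx0 j, Real.zero_rpow (he j).ne']
      rw [Finset.prod_congr rfl fun j _ => h1 j, Finset.prod_const]
      exact ENNReal.top_pow (by simpa using hN.ne')
    rw [this]; exact le_top
  · have h1 : ∏ j, ENNReal.ofReal (x j ^ e j) ≤ ENNReal.ofReal (F ^ γ) := by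
      rw [← ENNReal.ofReal_prod_of_nonneg (fun j _ => Real.rpow_nonneg (hx j) _)]
      refine ENNReal.ofReal_le_ofReal ?_
      rw [← hsum, Real.rpow_sum_of_pos h0]
      exact Finset.prod_le_prod (fun j _ => Real.rpow_nonneg (hx j) _)
        (fun j _ => Real.rpow_le_rpow (hx j) (hF j) (he j).le)
    calc (ENNReal.ofReal (F ^ γ))⁻¹ ≤ (∏ j, ENNReal.ofReal (x j ^ e j))⁻¹ :=
          ENNReal.inv_le_inv' h1
    _ = _ := prod_inv_eq' _ _ (fun j => ENNReal.ofReal_ne_top)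

lemma min_rpow' {x y h : ℝ} (hx : 0 ≤ x) (hy : 0 ≤ y) (hh : 0 ≤ h) :
    min (x ^ h) (y ^ h) = (min x y) ^ h := by
  rcases le_total x y with hle | hle
  · rw [min_eq_left hle, min_eq_left (Real.rpow_le_rpow hx hle hh)]
  · rw [min_eq_right hle, min_eq_right (Real.rpow_le_rpow hy hle hh)]

/- ### The basic one-variable functions -/

noncomputable def Pf (δ : ℝ) (x y : ℝ) : ℝ≥0∞ := (ENNReal.ofReal (|x - y| ^ δ))⁻¹
noncomputable def Qf (δ : ℝ) (x : ℝ) : ℝ≥0∞ := (ENNReal.ofReal (x ^ δ))⁻¹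
noncomputable def Wf (δ : ℝ) (x y : ℝ) : ℝ≥0∞ := Pf δ x y + Qf δ x
noncomputable def Cc (δ : ℝ) : ℝ≥0∞ := ∫⁻ u in Icc (0:ℝ) 1, ENNReal.ofReal ((u ^ δ)⁻¹)

lemma vol_Icc01 : (volume : Measure ℝ) (Icc (0:ℝ) 1) = 1 := by simp [Real.volume_Icc]

lemma Cc_lt_top {δ : ℝ} (hδ0 : 0 < δ) (hδ1 : δ < 1) : Cc δ < ⊤ := by
  rw [Cc, ← setLIntegral_congr Ioc_ae_eq_Icc]
  have h1 : IntervalIntegrable (fun x : ℝ => x ^ (-δ)) volume 0 1 :=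
    intervalIntegral.intervalIntegrable_rpow' (by linarith)
  rw [intervalIntegrable_iff, uIoc_of_le (zero_le_one' ℝ)] at h1
  have h2 : IntegrableOn (fun x : ℝ => (x ^ δ)⁻¹) (Ioc (0:ℝ) 1) volume :=
    h1.congr_fun (fun x hx => by beta_reduce; rw [Real.rpow_neg hx.1.le]) measurableSet_Ioc
  have h3 := h2.2
  rwa [hasFiniteIntegral_iff_ofReal ?_] at h3
  filter_upwards [ae_restrict_mem measurableSet_Ioc] with x hx using
    inv_nonneg.2 (Real.rpow_nonneg hx.1.le _)

lemma Qf_bound {δ : ℝ} (hδ0 : 0 < δ) :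
    ∫⁻ u in Icc (0:ℝ) 1, Qf δ u ≤ Cc δ := by
  rw [Cc]
  refine le_of_eq (lintegral_congr_ae ?_)
  filter_upwards [ae_restrict_mem measurableSet_Icc, ae_restrict_of_ae (ae_ne_real' 0)]
    with u hu hu0
  rw [Qf, ENNReal.ofReal_inv_of_pos (Real.rpow_pos_of_pos (lt_of_le_of_ne hu.1 (Ne.symm hu0)) δ)]

lemma Pf_bound {δ : ℝ} (hδ0 : 0 < δ) {a : ℝ} (ha : a ∈ Icc (0:ℝ) 1) :
    ∫⁻ b in Icc (0:ℝ) 1, Pf δ a b ≤ 2 * Cc δ := by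
  have hfm : Measurable fun u : ℝ => ENNReal.ofReal ((u ^ δ)⁻¹) := by fun_prop
  have step1 : ∫⁻ b in Icc (0:ℝ) 1, Pf δ a b
      = ∫⁻ b in Icc (0:ℝ) 1, ENNReal.ofReal ((|a - b| ^ δ)⁻¹) := by
    refine lintegral_congr_ae ?_
    filter_upwards [ae_restrict_of_ae (ae_ne_real' a)] with b hb
    have : (0:ℝ) < |a - b| := abs_pos.2 (sub_ne_zero.2 (Ne.symm hb))
    rw [Pf, ENNReal.ofReal_inv_of_pos (Real.rpow_pos_of_pos this δ)]
  rw [step1, (Icc_union_Icc_eq_Icc ha.1 ha.2).symm]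
  have hle : ∫⁻ b in Icc 0 a ∪ Icc a 1, ENNReal.ofReal ((|a - b| ^ δ)⁻¹)
      ≤ (∫⁻ b in Icc 0 a, ENNReal.ofReal ((|a - b| ^ δ)⁻¹))
        + ∫⁻ b in Icc a 1, ENNReal.ofReal ((|a - b| ^ δ)⁻¹) := by
    rw [← lintegral_add_measure]
    exact lintegral_mono' (Measure.restrict_union_le _ _) le_rfl
  refine hle.trans ?_
  have left : ∫⁻ b in Icc 0 a, ENNReal.ofReal ((|a - b| ^ δ)⁻¹) ≤ Cc δ := by
    have e1 : ∫⁻ b in Icc 0 a, ENNReal.ofReal ((|a - b| ^ δ)⁻¹)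
        = ∫⁻ b in Icc 0 a, ENNReal.ofReal (((a - b) ^ δ)⁻¹) := by
      refine setLIntegral_congr_fun measurableSet_Icc (fun b hb => ?_)
      rw [abs_of_nonneg (by linarith [hb.2])]
    have hpre : (fun b : ℝ => a - b) ⁻¹' Icc 0 a = Icc 0 a := by
      ext b; simp only [mem_preimage, mem_Icc]
      constructor <;> intro h <;> constructor <;> linarith [h.1, h.2]
    have e2 := (measurePreserving_sub_left volume a).setLIntegral_comp_preimage
      (s := Icc 0 a) measurableSet_Icc hfm
    rw [hpre] at e2
    rw [e1, e2, Cc]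
    exact lintegral_mono_set (Icc_subset_Icc_right ha.2)
  have right : ∫⁻ b in Icc a 1, ENNReal.ofReal ((|a - b| ^ δ)⁻¹) ≤ Cc δ := by
    have e1 : ∫⁻ b in Icc a 1, ENNReal.ofReal ((|a - b| ^ δ)⁻¹)
        = ∫⁻ b in Icc a 1, ENNReal.ofReal (((b - a) ^ δ)⁻¹) := by
      refine setLIntegral_congr_fun measurableSet_Icc (fun b hb => ?_)
      rw [abs_sub_comm, abs_of_nonneg (by linarith [hb.1])]
    have hpre : (fun b : ℝ => b - a) ⁻¹' Icc 0 (1 - a) = Icc a 1 := by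
      ext b; simp only [mem_preimage, mem_Icc]
      constructor <;> intro h <;> constructor <;> linarith [h.1, h.2]
    have e2 := (measurePreserving_sub_right volume a).setLIntegral_comp_preimage
      (s := Icc 0 (1 - a)) measurableSet_Icc hfm
    rw [hpre] at e2
    rw [e1, e2, Cc]
    exact lintegral_mono_set (Icc_subset_Icc_right (by linarith [ha.1]))
  calc _ ≤ Cc δ + Cc δ := add_le_add left right
  _ = 2 * Cc δ := (two_mul _).symm

/- ### Pointwise bounds for single coordinates -/

lemma ptS {Hj δ : ℝ} (hH : 0 < Hj) (hδ : 0 < δ) {a b c d : ℝ} (ha : 0 ≤ a) (hb : 0 ≤ b) :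
    (ENNReal.ofReal ((min (|b - d| ^ Hj) (b ^ Hj) + min (|a - c| ^ Hj) (a ^ Hj))
        ^ (2 / Hj * δ)))⁻¹
      ≤ Wf δ b d * Wf δ a c := by
  show _ ≤ ((ENNReal.ofReal (|b - d| ^ δ))⁻¹ + (ENNReal.ofReal (b ^ δ))⁻¹)
        * ((ENNReal.ofReal (|a - c| ^ δ))⁻¹ + (ENNReal.ofReal (a ^ δ))⁻¹)
  set m1 := min |b - d| b with hm1
  set m2 := min |a - c| a with hm2
  have hm1n : 0 ≤ m1 := le_min (abs_nonneg _) hb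
  have hm2n : 0 ≤ m2 := le_min (abs_nonneg _) ha
  have hA : min (|b - d| ^ Hj) (b ^ Hj) = m1 ^ Hj := min_rpow' (abs_nonneg _) hb hH.le
  have hB : min (|a - c| ^ Hj) (a ^ Hj) = m2 ^ Hj := min_rpow' (abs_nonneg _) ha hH.le
  rw [hA, hB]
  have hs : 0 ≤ m1 ^ Hj + m2 ^ Hj :=
    add_nonneg (Real.rpow_nonneg hm1n _) (Real.rpow_nonneg hm2n _)
  have hsplit : (m1 ^ Hj + m2 ^ Hj) ^ (2 / Hj * δ)
      = (m1 ^ Hj + m2 ^ Hj) ^ (δ / Hj) * (m1 ^ Hj + m2 ^ Hj) ^ (δ / Hj) := by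
    rw [← Real.rpow_add' hs (by positivity)]
    ring_nf
  have h1 : m1 ^ δ ≤ (m1 ^ Hj + m2 ^ Hj) ^ (δ / Hj) := by
    have h : m1 ^ δ = (m1 ^ Hj) ^ (δ / Hj) := by
      rw [← Real.rpow_mul hm1n]
      congr 1; field_simp
    rw [h]
    exact Real.rpow_le_rpow (Real.rpow_nonneg hm1n _)
      (le_add_of_nonneg_right (Real.rpow_nonneg hm2n _)) (by positivity)
  have h2 : m2 ^ δ ≤ (m1 ^ Hj + m2 ^ Hj) ^ (δ / Hj) := by
    have h : m2 ^ δ = (m2 ^ Hj) ^ (δ / Hj) := by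
      rw [← Real.rpow_mul hm2n]
      congr 1; field_simp
    rw [h]
    exact Real.rpow_le_rpow (Real.rpow_nonneg hm2n _)
      (le_add_of_nonneg_left (Real.rpow_nonneg hm1n _)) (by positivity)
  have hmain : m1 ^ δ * m2 ^ δ ≤ (m1 ^ Hj + m2 ^ Hj) ^ (2 / Hj * δ) := by
    rw [hsplit]
    exact mul_le_mul h1 h2 (Real.rpow_nonneg hm2n _) (Real.rpow_nonneg hs _)
  calc (ENNReal.ofReal ((m1 ^ Hj + m2 ^ Hj) ^ (2 / Hj * δ)))⁻¹
      ≤ (ENNReal.ofReal (m1 ^ δ * m2 ^ δ))⁻¹ :=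
        ENNReal.inv_le_inv' (ENNReal.ofReal_le_ofReal hmain)
    _ = (ENNReal.ofReal (m1 ^ δ) * ENNReal.ofReal (m2 ^ δ))⁻¹ := by
        rw [ENNReal.ofReal_mul (Real.rpow_nonneg hm1n _)]
    _ = (ENNReal.ofReal (m1 ^ δ))⁻¹ * (ENNReal.ofReal (m2 ^ δ))⁻¹ := by
        rw [ENNReal.mul_inv (Or.inr ENNReal.ofReal_ne_top) (Or.inl ENNReal.ofReal_ne_top)]
    _ ≤ _ := by
        refine mul_le_mul' ?_ ?_
        · rcases min_choice |b - d| b with h | h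
          · rw [hm1, h]; exact le_add_of_nonneg_right zero_le |>.trans_eq rfl
          · rw [hm1, h]; exact le_add_of_nonneg_left zero_le |>.trans_eq rfl
        · rcases min_choice |a - c| a with h | h
          · rw [hm2, h]; exact le_add_of_nonneg_right zero_le |>.trans_eq rfl
          · rw [hm2, h]; exact le_add_of_nonneg_left zero_le |>.trans_eq rfl

lemma ptC {Hj δ : ℝ} (hH : 0 < Hj) (hδ : 0 < δ) {a b c d : ℝ} (ha : 0 ≤ a) :
    (ENNReal.ofReal ((min (|a - b| ^ Hj)
        (min (|a - c| ^ Hj) (min (|a - d| ^ Hj) (a ^ Hj)))) ^ (1 / Hj * δ)))⁻¹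
      ≤ (Pf δ a b + Pf δ a c + Qf δ a) + Pf δ a d := by
  show _ ≤ ((ENNReal.ofReal (|a - b| ^ δ))⁻¹ + (ENNReal.ofReal (|a - c| ^ δ))⁻¹
          + (ENNReal.ofReal (a ^ δ))⁻¹) + (ENNReal.ofReal (|a - d| ^ δ))⁻¹
  have h3 : min (|a - d| ^ Hj) (a ^ Hj) = (min |a - d| a) ^ Hj :=
    min_rpow' (abs_nonneg _) ha hH.le
  have h2 : min (|a - c| ^ Hj) ((min |a - d| a) ^ Hj) = (min |a - c| (min |a - d| a)) ^ Hj :=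
    min_rpow' (abs_nonneg _) (le_min (abs_nonneg _) ha) hH.le
  have h1 : min (|a - b| ^ Hj) ((min |a - c| (min |a - d| a)) ^ Hj)
      = (min |a - b| (min |a - c| (min |a - d| a))) ^ Hj :=
    min_rpow' (abs_nonneg _) (le_min (abs_nonneg _) (le_min (abs_nonneg _) ha)) hH.le
  rw [h3, h2, h1]
  set m := min |a - b| (min |a - c| (min |a - d| a)) with hm
  have hmn : 0 ≤ m := le_min (abs_nonneg _) (le_min (abs_nonneg _) (le_min (abs_nonneg _) ha))
  have hpow : (m ^ Hj) ^ (1 / Hj * δ) = m ^ δ := by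
    rw [← Real.rpow_mul hmn]
    congr 1; field_simp
  rw [hpow]
  have key : (ENNReal.ofReal (m ^ δ))⁻¹ = (ENNReal.ofReal (|a - b| ^ δ))⁻¹
      ∨ (ENNReal.ofReal (m ^ δ))⁻¹ = (ENNReal.ofReal (|a - c| ^ δ))⁻¹
      ∨ (ENNReal.ofReal (m ^ δ))⁻¹ = (ENNReal.ofReal (|a - d| ^ δ))⁻¹
      ∨ (ENNReal.ofReal (m ^ δ))⁻¹ = (ENNReal.ofReal (a ^ δ))⁻¹ := by
    rcases min_choice |a - b| (min |a - c| (min |a - d| a)) with h | h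
    · exact Or.inl (by rw [hm, h])
    · rw [hm, h]
      rcases min_choice |a - c| (min |a - d| a) with h' | h'
      · exact Or.inr (Or.inl (by rw [h']))
      · rw [h']
        rcases min_choice |a - d| a with h'' | h''
        · exact Or.inr (Or.inr (Or.inl (by rw [h''])))
        · exact Or.inr (Or.inr (Or.inr (by rw [h''])))
  rcases key with h | h | h | h <;> rw [h]
  · exact le_add_right (le_add_right (le_add_right le_rfl))
  · exact le_add_right (le_add_right (le_add_left le_rfl))
  · exact le_add_left le_rfl
  · exact le_add_right (le_add_left le_rfl)

/- ### The per-coordinate integral bounds -/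

lemma Wf_m' {δ : ℝ} : Measurable (fun q : ℝ × ℝ => Wf δ q.1 q.2) := by
  unfold Wf Pf Qf; fun_prop

lemma Wf_m1' {δ x : ℝ} : Measurable (Wf δ x) := by unfold Wf Pf Qf; fun_prop

lemma Wf_bound {δ : ℝ} (hδ0 : 0 < δ) {x : ℝ} (hx : x ∈ Icc (0:ℝ) 1) :
    ∫⁻ y in Icc (0:ℝ) 1, Wf δ x y ≤ 2 * Cc δ + Qf δ x := by
  unfold Wf
  rw [lintegral_add_right _ measurable_const, setLIntegral_const, vol_Icc01, mul_one]
  exact add_le_add_left (Pf_bound hδ0 hx) _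

lemma WWf_bound {δ : ℝ} (hδ0 : 0 < δ) :
    ∫⁻ x in Icc (0:ℝ) 1, ∫⁻ y in Icc (0:ℝ) 1, Wf δ x y ≤ 3 * Cc δ := by
  calc ∫⁻ x in Icc (0:ℝ) 1, ∫⁻ y in Icc (0:ℝ) 1, Wf δ x y
      ≤ ∫⁻ x in Icc (0:ℝ) 1, (2 * Cc δ + Qf δ x) := by
        refine lintegral_mono_ae ?_
        filter_upwards [ae_restrict_mem measurableSet_Icc] with x hx using Wf_bound hδ0 hx
    _ = 2 * Cc δ * ((volume : Measure ℝ) (Icc (0:ℝ) 1))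
        + ∫⁻ x in Icc (0:ℝ) 1, Qf δ x := by
        rw [lintegral_add_left measurable_const, setLIntegral_const]
    _ ≤ 2 * Cc δ + Cc δ := by
        rw [vol_Icc01, mul_one]
        exact add_le_add_right (Qf_bound hδ0) _
    _ = 3 * Cc δ := by ring

lemma intS {δ : ℝ} (hδ0 : 0 < δ) (hδ1 : δ < 1) :
    ∫⁻ a in Icc (0:ℝ) 1, ∫⁻ b in Icc (0:ℝ) 1, ∫⁻ c in Icc (0:ℝ) 1, ∫⁻ d in Icc (0:ℝ) 1,
      (Wf δ b d * Wf δ a c) ≠ ⊤ := by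
  have hI : Measurable fun x : ℝ => ∫⁻ y in Icc (0:ℝ) 1, Wf δ x y :=
    Measurable.lintegral_prod_right' (f := fun q : ℝ × ℝ => Wf δ q.1 q.2) Wf_m'
  have e1 : ∫⁻ a in Icc (0:ℝ) 1, ∫⁻ b in Icc (0:ℝ) 1, ∫⁻ c in Icc (0:ℝ) 1,
        ∫⁻ d in Icc (0:ℝ) 1, (Wf δ b d * Wf δ a c)
      = (∫⁻ b in Icc (0:ℝ) 1, ∫⁻ d in Icc (0:ℝ) 1, Wf δ b d)
        * ∫⁻ a in Icc (0:ℝ) 1, ∫⁻ c in Icc (0:ℝ) 1, Wf δ a c := by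
    calc ∫⁻ a in Icc (0:ℝ) 1, ∫⁻ b in Icc (0:ℝ) 1, ∫⁻ c in Icc (0:ℝ) 1,
          ∫⁻ d in Icc (0:ℝ) 1, (Wf δ b d * Wf δ a c)
        = ∫⁻ a in Icc (0:ℝ) 1, ∫⁻ b in Icc (0:ℝ) 1, ∫⁻ c in Icc (0:ℝ) 1,
          ((∫⁻ d in Icc (0:ℝ) 1, Wf δ b d) * Wf δ a c) := by
          refine lintegral_congr fun a => lintegral_congr fun b => lintegral_congr fun c => ?_
          exact lintegral_mul_const _ Wf_m1'
      _ = ∫⁻ a in Icc (0:ℝ) 1, ∫⁻ b in Icc (0:ℝ) 1,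
          ((∫⁻ d in Icc (0:ℝ) 1, Wf δ b d) * ∫⁻ c in Icc (0:ℝ) 1, Wf δ a c) := by
          refine lintegral_congr fun a => lintegral_congr fun b => ?_
          exact lintegral_const_mul _ Wf_m1'
      _ = ∫⁻ a in Icc (0:ℝ) 1, ((∫⁻ b in Icc (0:ℝ) 1, ∫⁻ d in Icc (0:ℝ) 1, Wf δ b d)
          * ∫⁻ c in Icc (0:ℝ) 1, Wf δ a c) := by
          refine lintegral_congr fun a => ?_
          exact lintegral_mul_const _ hI
      _ = _ := lintegral_const_mul _ hI
  rw [e1]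
  have hfin : ∫⁻ x in Icc (0:ℝ) 1, ∫⁻ y in Icc (0:ℝ) 1, Wf δ x y < ⊤ :=
    (WWf_bound hδ0).trans_lt (ENNReal.mul_lt_top (by simp) (Cc_lt_top hδ0 hδ1))
  exact (ENNReal.mul_lt_top hfin hfin).ne

lemma intC {δ : ℝ} (hδ0 : 0 < δ) (hδ1 : δ < 1) :
    ∫⁻ a in Icc (0:ℝ) 1, ∫⁻ b in Icc (0:ℝ) 1, ∫⁻ c in Icc (0:ℝ) 1, ∫⁻ d in Icc (0:ℝ) 1,
      ((Pf δ a b + Pf δ a c + Qf δ a) + Pf δ a d) ≠ ⊤ := by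
  have stepd : ∀ a ∈ Icc (0:ℝ) 1, ∀ b c : ℝ,
      ∫⁻ d in Icc (0:ℝ) 1, ((Pf δ a b + Pf δ a c + Qf δ a) + Pf δ a d)
        ≤ (Pf δ a b + Pf δ a c + Qf δ a) + 2 * Cc δ := by
    intro a ha b c
    rw [lintegral_add_left measurable_const, setLIntegral_const, vol_Icc01, mul_one]
    exact add_le_add_right (Pf_bound hδ0 ha) _
  have stepc : ∀ a ∈ Icc (0:ℝ) 1, ∀ b : ℝ,
      ∫⁻ c in Icc (0:ℝ) 1, ∫⁻ d in Icc (0:ℝ) 1, ((Pf δ a b + Pf δ a c + Qf δ a) + Pf δ a d)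
        ≤ (Pf δ a b + Qf δ a + 2 * Cc δ) + 2 * Cc δ := by
    intro a ha b
    calc ∫⁻ c in Icc (0:ℝ) 1, ∫⁻ d in Icc (0:ℝ) 1, ((Pf δ a b + Pf δ a c + Qf δ a) + Pf δ a d)
        ≤ ∫⁻ c in Icc (0:ℝ) 1, ((Pf δ a b + Pf δ a c + Qf δ a) + 2 * Cc δ) :=
          lintegral_mono fun c => stepd a ha b c
      _ = ∫⁻ c in Icc (0:ℝ) 1, ((Pf δ a b + Qf δ a + 2 * Cc δ) + Pf δ a c) :=
          lintegral_congr fun c => by ring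
      _ = (Pf δ a b + Qf δ a + 2 * Cc δ) * ((volume : Measure ℝ) (Icc (0:ℝ) 1))
          + ∫⁻ c in Icc (0:ℝ) 1, Pf δ a c := by
          rw [lintegral_add_left measurable_const, setLIntegral_const]
      _ ≤ _ := by
          rw [vol_Icc01, mul_one]
          exact add_le_add_right (Pf_bound hδ0 ha) _
  have stepb : ∀ a ∈ Icc (0:ℝ) 1,
      ∫⁻ b in Icc (0:ℝ) 1, ∫⁻ c in Icc (0:ℝ) 1, ∫⁻ d in Icc (0:ℝ) 1,
        ((Pf δ a b + Pf δ a c + Qf δ a) + Pf δ a d)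
        ≤ Qf δ a + 6 * Cc δ := by
    intro a ha
    calc ∫⁻ b in Icc (0:ℝ) 1, ∫⁻ c in Icc (0:ℝ) 1, ∫⁻ d in Icc (0:ℝ) 1,
          ((Pf δ a b + Pf δ a c + Qf δ a) + Pf δ a d)
        ≤ ∫⁻ b in Icc (0:ℝ) 1, ((Pf δ a b + Qf δ a + 2 * Cc δ) + 2 * Cc δ) :=
          lintegral_mono fun b => stepc a ha b
      _ = ∫⁻ b in Icc (0:ℝ) 1, ((Qf δ a + 4 * Cc δ) + Pf δ a b) :=
          lintegral_congr fun b => by ring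
      _ = (Qf δ a + 4 * Cc δ) * ((volume : Measure ℝ) (Icc (0:ℝ) 1))
          + ∫⁻ b in Icc (0:ℝ) 1, Pf δ a b := by
          rw [lintegral_add_left measurable_const, setLIntegral_const]
      _ ≤ (Qf δ a + 4 * Cc δ) + 2 * Cc δ := by
          rw [vol_Icc01, mul_one]
          exact add_le_add_right (Pf_bound hδ0 ha) _
      _ = Qf δ a + 6 * Cc δ := by ring
  have final : ∫⁻ a in Icc (0:ℝ) 1, ∫⁻ b in Icc (0:ℝ) 1, ∫⁻ c in Icc (0:ℝ) 1,
      ∫⁻ d in Icc (0:ℝ) 1, ((Pf δ a b + Pf δ a c + Qf δ a) + Pf δ a d) ≤ 7 * Cc δ := by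
    calc _ ≤ ∫⁻ a in Icc (0:ℝ) 1, (Qf δ a + 6 * Cc δ) := by
          refine lintegral_mono_ae ?_
          filter_upwards [ae_restrict_mem measurableSet_Icc] with a ha using stepb a ha
      _ = (∫⁻ a in Icc (0:ℝ) 1, Qf δ a) + 6 * Cc δ * ((volume : Measure ℝ) (Icc (0:ℝ) 1)) := by
          rw [lintegral_add_right _ measurable_const, setLIntegral_const]
      _ ≤ Cc δ + 6 * Cc δ := by
          rw [vol_Icc01, mul_one]
          exact add_le_add_left (Qf_bound hδ0) _
      _ = 7 * Cc δ := by ring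
  exact (final.trans_lt (ENNReal.mul_lt_top (by simp) (Cc_lt_top hδ0 hδ1))).ne

/- ### The coordinate factor functions -/

noncomputable def Gj (δ : ℝ) (inS : Prop) [Decidable inS] (a b c d : ℝ) : ℝ≥0∞ :=
  if inS then Wf δ b d * Wf δ a c else (Pf δ a b + Pf δ a c + Qf δ a) + Pf δ a d

lemma Gj_m4 (δ : ℝ) (inS : Prop) [Decidable inS] :
    Measurable (fun q : ((ℝ × ℝ) × ℝ) × ℝ => Gj δ inS q.1.1.1 q.1.1.2 q.1.2 q.2) := by
  by_cases h : inS
  · simp only [Gj, if_pos h]; unfold Wf Pf Qf; fun_prop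
  · simp only [Gj, if_neg h]; unfold Pf Qf; fun_prop

lemma Gj_m3 (δ : ℝ) (inS : Prop) [Decidable inS] (μ1 : Measure ℝ) [SigmaFinite μ1] :
    Measurable fun q : (ℝ × ℝ) × ℝ => ∫⁻ d, Gj δ inS q.1.1 q.1.2 q.2 d ∂μ1 :=
  Measurable.lintegral_prod_right'
    (f := fun r : ((ℝ × ℝ) × ℝ) × ℝ => Gj δ inS r.1.1.1 r.1.1.2 r.1.2 r.2) (Gj_m4 δ inS)

lemma Gj_m2 (δ : ℝ) (inS : Prop) [Decidable inS] (μ1 : Measure ℝ) [SigmaFinite μ1] :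
    Measurable fun q : ℝ × ℝ => ∫⁻ c, ∫⁻ d, Gj δ inS q.1 q.2 c d ∂μ1 ∂μ1 :=
  Measurable.lintegral_prod_right'
    (f := fun r : (ℝ × ℝ) × ℝ => ∫⁻ d, Gj δ inS r.1.1 r.1.2 r.2 d ∂μ1) (Gj_m3 δ inS μ1)

lemma Gj_m1 (δ : ℝ) (inS : Prop) [Decidable inS] (μ1 : Measure ℝ) [SigmaFinite μ1] :
    Measurable fun a : ℝ => ∫⁻ b, ∫⁻ c, ∫⁻ d, Gj δ inS a b c d ∂μ1 ∂μ1 ∂μ1 :=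
  Measurable.lintegral_prod_right'
    (f := fun r : ℝ × ℝ => ∫⁻ c, ∫⁻ d, Gj δ inS r.1 r.2 c d ∂μ1 ∂μ1) (Gj_m2 δ inS μ1)

lemma Gj_pm4 (δ : ℝ) (inS : Prop) [Decidable inS] (a b : ℝ) :
    Measurable fun r : (ℝ × ℝ) × ℝ => Gj δ inS a r.1.1 r.1.2 r.2 := by
  by_cases h : inS
  · simp only [Gj, if_pos h]; unfold Wf Pf Qf; fun_prop
  · simp only [Gj, if_neg h]; unfold Pf Qf; fun_prop

lemma Gj_p4 (δ : ℝ) (inS : Prop) [Decidable inS] (a b c : ℝ) :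
    Measurable fun d => Gj δ inS a b c d := by
  by_cases h : inS
  · simp only [Gj, if_pos h]; unfold Wf Pf Qf; fun_prop
  · simp only [Gj, if_neg h]; unfold Pf Qf; fun_prop

lemma Gj_p3 (δ : ℝ) (inS : Prop) [Decidable inS] (μ1 : Measure ℝ) [SigmaFinite μ1] (a b : ℝ) :
    Measurable fun c => ∫⁻ d, Gj δ inS a b c d ∂μ1 := by
  have hf : Measurable fun r : ℝ × ℝ => Gj δ inS a b r.1 r.2 := by
    by_cases h : inS
    · simp only [Gj, if_pos h]; unfold Wf Pf Qf; fun_prop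
    · simp only [Gj, if_neg h]; unfold Pf Qf; fun_prop
  exact hf.lintegral_prod_right'

lemma Gj_p2 (δ : ℝ) (inS : Prop) [Decidable inS] (μ1 : Measure ℝ) [SigmaFinite μ1] (a : ℝ) :
    Measurable fun b => ∫⁻ c, ∫⁻ d, Gj δ inS a b c d ∂μ1 ∂μ1 := by
  have h3 : Measurable fun r : ℝ × ℝ => ∫⁻ d, Gj δ inS a r.1 r.2 d ∂μ1 :=
    Measurable.lintegral_prod_right'
      (f := fun r : (ℝ × ℝ) × ℝ => Gj δ inS a r.1.1 r.1.2 r.2) (Gj_pm4 δ inS a 0)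
  exact h3.lintegral_prod_right'

lemma Gj_prod_m1 {N : ℕ} (δ : ℝ) (S : Finset (Fin N)) :
    Measurable (fun p : (Fin N → ℝ) × ((Fin N → ℝ) × ((Fin N → ℝ) × (Fin N → ℝ))) =>
      ∏ j, Gj δ (j ∈ S) (p.1 j) (p.2.1 j) (p.2.2.1 j) (p.2.2.2 j)) := by
  refine Finset.measurable_prod _ fun j _ => ?_
  by_cases h : j ∈ S
  · simp only [Gj, if_pos h]; unfold Wf Pf Qf; fun_prop
  · simp only [Gj, if_neg h]; unfold Pf Qf; fun_prop

lemma Gj_prod_m2 {N : ℕ} (δ : ℝ) (S : Finset (Fin N)) (s : Fin N → ℝ) :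
    Measurable (fun q : (Fin N → ℝ) × ((Fin N → ℝ) × (Fin N → ℝ)) =>
      ∏ j, Gj δ (j ∈ S) (s j) (q.1 j) (q.2.1 j) (q.2.2 j)) := by
  refine Finset.measurable_prod _ fun j _ => ?_
  by_cases h : j ∈ S
  · simp only [Gj, if_pos h]; unfold Wf Pf Qf; fun_prop
  · simp only [Gj, if_neg h]; unfold Pf Qf; fun_prop

lemma Gj_prod_m3 {N : ℕ} (δ : ℝ) (S : Finset (Fin N)) (s t : Fin N → ℝ) :
    Measurable (fun r : (Fin N → ℝ) × (Fin N → ℝ) =>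
      ∏ j, Gj δ (j ∈ S) (s j) (t j) (r.1 j) (r.2 j)) := by
  refine Finset.measurable_prod _ fun j _ => ?_
  by_cases h : j ∈ S
  · simp only [Gj, if_pos h]; unfold Wf Pf Qf; fun_prop
  · simp only [Gj, if_neg h]; unfold Pf Qf; fun_prop

theorem stmt16 (N : ℕ) (hN : 1 ≤ N) (H : Fin N → ℝ)
    (hH : ∀ j, H j ∈ Set.Ioo (0:ℝ) 1)
    (S : Finset (Fin N)) (γ : ℝ) (hγ : 0 < γ)
    (hcond : γ < 2 * (∑ j ∈ S, 1 / H j) + ∑ j ∈ Sᶜ, 1 / H j) :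
    (∫⁻ p in ((Set.univ.pi fun _ : Fin N => Set.Icc (0:ℝ) 1) ×ˢ
        ((Set.univ.pi fun _ : Fin N => Set.Icc (0:ℝ) 1) ×ˢ
          ((Set.univ.pi fun _ : Fin N => Set.Icc (0:ℝ) 1) ×ˢ
            (Set.univ.pi fun _ : Fin N => Set.Icc (0:ℝ) 1))) :
        Set ((Fin N → ℝ) × ((Fin N → ℝ) × ((Fin N → ℝ) × (Fin N → ℝ))))),
        (ENNReal.ofReal
          (((∑ j ∈ S,
              (min (|p.2.1 j - p.2.2.2 j| ^ H j) (p.2.1 j ^ H j) +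
                min (|p.1 j - p.2.2.1 j| ^ H j) (p.1 j ^ H j))) +
            ∑ j ∈ Sᶜ,
              min (|p.1 j - p.2.1 j| ^ H j)
                (min (|p.1 j - p.2.2.1 j| ^ H j)
                  (min (|p.1 j - p.2.2.2 j| ^ H j) (p.1 j ^ H j)))) ^ γ))⁻¹) ≠
      ⊤ := by
  classical
  have hN0 : 0 < N := hN
  have hHpos : ∀ j, 0 < H j := fun j => (hH j).1
  -- the exponents
  set T : ℝ := ∑ j, (if j ∈ S then 2 / H j else 1 / H j) with hTdef
  have hTpos : 0 < T := by
    refine Finset.sum_pos (fun j _ => ?_) ⟨⟨0, hN0⟩, Finset.mem_univ _⟩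
    by_cases h : j ∈ S
    · rw [if_pos h]; exact div_pos two_pos (hHpos j)
    · rw [if_neg h]; exact div_pos one_pos (hHpos j)
  have hTeq : T = 2 * (∑ j ∈ S, 1 / H j) + ∑ j ∈ Sᶜ, 1 / H j := by
    rw [hTdef, ← Finset.sum_add_sum_compl S]
    congr 1
    · rw [Finset.mul_sum]
      exact Finset.sum_congr rfl fun j hj => by rw [if_pos hj, mul_one_div]
    · exact Finset.sum_congr rfl fun j hj => by rw [if_neg (Finset.mem_compl.1 hj)]
  have hγT : γ < T := by rw [hTeq]; exact hcond
  set δ : ℝ := γ / T with hδdef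
  have hδ0 : 0 < δ := div_pos hγ hTpos
  have hδ1 : δ < 1 := (div_lt_one hTpos).2 hγT
  have hepos : ∀ j, 0 < (if j ∈ S then 2 / H j else 1 / H j) * δ := fun j => by
    refine mul_pos ?_ hδ0
    by_cases h : j ∈ S
    · rw [if_pos h]; exact div_pos two_pos (hHpos j)
    · rw [if_neg h]; exact div_pos one_pos (hHpos j)
  have hesum : ∑ j, (if j ∈ S then 2 / H j else 1 / H j) * δ = γ := by
    rw [← Finset.sum_mul, ← hTdef, hδdef, mul_comm, div_mul_cancel₀ _ hTpos.ne']
  -- the measures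
  set μ1 : Measure ℝ := (volume : Measure ℝ).restrict (Icc (0:ℝ) 1) with hμ1def
  set M : Measure (Fin N → ℝ) := Measure.pi (fun _ : Fin N => μ1) with hMdef
  have hM : (volume : Measure (Fin N → ℝ)).restrict (Set.univ.pi fun _ => Set.Icc (0:ℝ) 1)
      = M := pi_restrict_box
  have h2 : (volume : Measure ((Fin N → ℝ) × (Fin N → ℝ))).restrict
      ((Set.univ.pi fun _ => Set.Icc (0:ℝ) 1) ×ˢ (Set.univ.pi fun _ => Set.Icc (0:ℝ) 1))
      = M.prod M := by
    rw [Measure.volume_eq_prod, ← Measure.prod_restrict, hM]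
  have h3 : (volume : Measure ((Fin N → ℝ) × ((Fin N → ℝ) × (Fin N → ℝ)))).restrict
      ((Set.univ.pi fun _ => Set.Icc (0:ℝ) 1) ×ˢ
        ((Set.univ.pi fun _ => Set.Icc (0:ℝ) 1) ×ˢ (Set.univ.pi fun _ => Set.Icc (0:ℝ) 1)))
      = M.prod (M.prod M) := by
    rw [Measure.volume_eq_prod, ← Measure.prod_restrict, hM, h2]
  have h4 : (volume : Measure ((Fin N → ℝ) × ((Fin N → ℝ) × ((Fin N → ℝ) × (Fin N → ℝ))))).restrict
      ((Set.univ.pi fun _ => Set.Icc (0:ℝ) 1) ×ˢ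
        ((Set.univ.pi fun _ => Set.Icc (0:ℝ) 1) ×ˢ
          ((Set.univ.pi fun _ => Set.Icc (0:ℝ) 1) ×ˢ (Set.univ.pi fun _ => Set.Icc (0:ℝ) 1))))
      = M.prod (M.prod (M.prod M)) := by
    rw [Measure.volume_eq_prod, ← Measure.prod_restrict, hM, h3]
  have hBoxm : MeasurableSet (Set.univ.pi fun _ : Fin N => Set.Icc (0:ℝ) 1) :=
    MeasurableSet.univ_pi fun _ => measurableSet_Icc
  rw [h4]
  -- the pointwise bound
  have hae : ∀ᵐ p ∂(M.prod (M.prod (M.prod M))),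
      p ∈ ((Set.univ.pi fun _ : Fin N => Set.Icc (0:ℝ) 1) ×ˢ
        ((Set.univ.pi fun _ : Fin N => Set.Icc (0:ℝ) 1) ×ˢ
          ((Set.univ.pi fun _ : Fin N => Set.Icc (0:ℝ) 1) ×ˢ
            (Set.univ.pi fun _ : Fin N => Set.Icc (0:ℝ) 1)))) := by
    rw [← h4]
    exact ae_restrict_mem (hBoxm.prod (hBoxm.prod (hBoxm.prod hBoxm)))
  have keystep : ∀ p : (Fin N → ℝ) × ((Fin N → ℝ) × ((Fin N → ℝ) × (Fin N → ℝ))),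
      p ∈ ((Set.univ.pi fun _ : Fin N => Set.Icc (0:ℝ) 1) ×ˢ
        ((Set.univ.pi fun _ : Fin N => Set.Icc (0:ℝ) 1) ×ˢ
          ((Set.univ.pi fun _ : Fin N => Set.Icc (0:ℝ) 1) ×ˢ
            (Set.univ.pi fun _ : Fin N => Set.Icc (0:ℝ) 1)))) →
      (ENNReal.ofReal
          (((∑ j ∈ S,
              (min (|p.2.1 j - p.2.2.2 j| ^ H j) (p.2.1 j ^ H j) +
                min (|p.1 j - p.2.2.1 j| ^ H j) (p.1 j ^ H j))) +
            ∑ j ∈ Sᶜ,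
              min (|p.1 j - p.2.1 j| ^ H j)
                (min (|p.1 j - p.2.2.1 j| ^ H j)
                  (min (|p.1 j - p.2.2.2 j| ^ H j) (p.1 j ^ H j)))) ^ γ))⁻¹
        ≤ ∏ j, Gj δ (j ∈ S) (p.1 j) (p.2.1 j) (p.2.2.1 j) (p.2.2.2 j) := by
    intro p hp
    have hm1 : ∀ j, p.1 j ∈ Icc (0:ℝ) 1 := fun j => hp.1 j (mem_univ j)
    have hm2 : ∀ j, p.2.1 j ∈ Icc (0:ℝ) 1 := fun j => hp.2.1 j (mem_univ j)
    have hSnn : ∀ j, 0 ≤ min (|p.2.1 j - p.2.2.2 j| ^ H j) (p.2.1 j ^ H j) +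
        min (|p.1 j - p.2.2.1 j| ^ H j) (p.1 j ^ H j) := fun j =>
      add_nonneg (le_min (Real.rpow_nonneg (abs_nonneg _) _)
          (Real.rpow_nonneg (hm2 j).1 _))
        (le_min (Real.rpow_nonneg (abs_nonneg _) _) (Real.rpow_nonneg (hm1 j).1 _))
    have hCnn : ∀ j, 0 ≤ min (|p.1 j - p.2.1 j| ^ H j)
        (min (|p.1 j - p.2.2.1 j| ^ H j)
          (min (|p.1 j - p.2.2.2 j| ^ H j) (p.1 j ^ H j))) := fun j =>
      le_min (Real.rpow_nonneg (abs_nonneg _) _)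
        (le_min (Real.rpow_nonneg (abs_nonneg _) _)
          (le_min (Real.rpow_nonneg (abs_nonneg _) _) (Real.rpow_nonneg (hm1 j).1 _)))
    refine le_trans
      (key_bound hN0
        (fun j => if j ∈ S then
            min (|p.2.1 j - p.2.2.2 j| ^ H j) (p.2.1 j ^ H j) +
              min (|p.1 j - p.2.2.1 j| ^ H j) (p.1 j ^ H j)
          else
            min (|p.1 j - p.2.1 j| ^ H j)
              (min (|p.1 j - p.2.2.1 j| ^ H j)
                (min (|p.1 j - p.2.2.2 j| ^ H j) (p.1 j ^ H j))))
        (fun j => by by_cases h : j ∈ S <;>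
          simp only [if_pos, if_neg, h, if_true, if_false] <;> [exact hSnn j; exact hCnn j])
        _
        (fun j => ?_)
        (fun j => (if j ∈ S then 2 / H j else 1 / H j) * δ)
        hepos hesum) ?_
    · by_cases h : j ∈ S
      · simp only [if_pos h]
        refine le_trans (Finset.single_le_sum (f := fun j =>
          min (|p.2.1 j - p.2.2.2 j| ^ H j) (p.2.1 j ^ H j) +
            min (|p.1 j - p.2.2.1 j| ^ H j) (p.1 j ^ H j)) (fun i _ => hSnn i) h) ?_
        exact le_add_of_nonneg_right (Finset.sum_nonneg fun i _ => hCnn i)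
      · simp only [if_neg h]
        refine le_trans (Finset.single_le_sum (f := fun j =>
          min (|p.1 j - p.2.1 j| ^ H j)
            (min (|p.1 j - p.2.2.1 j| ^ H j)
              (min (|p.1 j - p.2.2.2 j| ^ H j) (p.1 j ^ H j))))
          (fun i _ => hCnn i) (Finset.mem_compl.2 h)) ?_
        exact le_add_of_nonneg_left (Finset.sum_nonneg fun i _ => hSnn i)
    · refine Finset.prod_le_prod' fun j _ => ?_
      by_cases h : j ∈ S
      · simp only [if_pos h, Gj]
        exact ptS (hHpos j) hδ0 (hm1 j).1 (hm2 j).1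
      · simp only [if_neg h, Gj]
        exact ptC (hHpos j) hδ0 (hm1 j).1
  refine ne_top_of_le_ne_top ?_ (lintegral_mono_ae (hae.mono fun p hp => keystep p hp))
  -- Tonelli + factorization
  have calc1 : ∫⁻ p, (∏ j, Gj δ (j ∈ S) (p.1 j) (p.2.1 j) (p.2.2.1 j) (p.2.2.2 j))
      ∂(M.prod (M.prod (M.prod M)))
      = ∏ j, ∫⁻ a, (∫⁻ b, (∫⁻ c, (∫⁻ d, Gj δ (j ∈ S) a b c d ∂μ1) ∂μ1) ∂μ1) ∂μ1 := by
    calc ∫⁻ p, (∏ j, Gj δ (j ∈ S) (p.1 j) (p.2.1 j) (p.2.2.1 j) (p.2.2.2 j))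
        ∂(M.prod (M.prod (M.prod M)))
        = ∫⁻ s, (∫⁻ q, (∏ j, Gj δ (j ∈ S) (s j) (q.1 j) (q.2.1 j) (q.2.2 j))
            ∂(M.prod (M.prod M))) ∂M :=
          lintegral_prod _ (Gj_prod_m1 δ S).aemeasurable
      _ = ∫⁻ s, (∫⁻ t, (∫⁻ r, (∏ j, Gj δ (j ∈ S) (s j) (t j) (r.1 j) (r.2 j))
            ∂(M.prod M)) ∂M) ∂M :=
          lintegral_congr fun s => lintegral_prod _ (Gj_prod_m2 δ S s).aemeasurable
      _ = ∫⁻ s, (∫⁻ t, (∫⁻ s', (∫⁻ t', (∏ j, Gj δ (j ∈ S) (s j) (t j) (s' j) (t' j))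
            ∂M) ∂M) ∂M) ∂M :=
          lintegral_congr fun s => lintegral_congr fun t =>
            lintegral_prod _ (Gj_prod_m3 δ S s t).aemeasurable
      _ = ∫⁻ s, (∫⁻ t, (∫⁻ s', (∏ j, ∫⁻ d, Gj δ (j ∈ S) (s j) (t j) (s' j) d ∂μ1)
            ∂M) ∂M) ∂M :=
          lintegral_congr fun s => lintegral_congr fun t => lintegral_congr fun s' =>
            lintegral_pi_prod' μ1 _ (fun j => Gj_p4 δ _ _ _ _)
      _ = ∫⁻ s, (∫⁻ t, (∏ j, ∫⁻ c, (∫⁻ d, Gj δ (j ∈ S) (s j) (t j) c d ∂μ1) ∂μ1)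
            ∂M) ∂M :=
          lintegral_congr fun s => lintegral_congr fun t =>
            lintegral_pi_prod' μ1 _ (fun j => Gj_p3 δ _ μ1 _ _)
      _ = ∫⁻ s, (∏ j, ∫⁻ b, (∫⁻ c, (∫⁻ d, Gj δ (j ∈ S) (s j) b c d ∂μ1) ∂μ1) ∂μ1) ∂M :=
          lintegral_congr fun s => lintegral_pi_prod' μ1 _ (fun j => Gj_p2 δ _ μ1 _)
      _ = ∏ j, ∫⁻ a, (∫⁻ b, (∫⁻ c, (∫⁻ d, Gj δ (j ∈ S) a b c d ∂μ1) ∂μ1) ∂μ1) ∂μ1 :=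
          lintegral_pi_prod' μ1 _ (fun j => Gj_m1 δ _ μ1)
  rw [calc1]
  refine (ENNReal.prod_lt_top fun j _ => ?_).ne
  rw [lt_top_iff_ne_top]
  by_cases h : j ∈ S
  · simp only [Gj, if_pos h]
    exact intS hδ0 hδ1
  · simp only [Gj, if_neg h]
    exact intC hδ0 hδ1
end
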